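/- arXiv:1705.00984 — 3 statements merged into one kernel-verified Lean document; each statement's English description precedes it below -/
import Mathlib

section
/- Greibach normal form: for every context-free grammar G there exists a context-free grammar G' in Greibach normal form — i.e., the right-hand side of every production of G' belongs to Σ V_N* (a terminal character followed by a possibly empty string of nonterminals) — such that L(G') = L(G) \ {ε}. -/
namespace Greibach

open ContextFreeGrammar

variable {T : Type} {g : ContextFreeGrammar.{0} T}

/-- abbreviation for terminal words -/
abbrev tm (g : ContextFreeGrammar.{0} T) (w : List T) : List (Symbol T g.NT) :=
  w.map Symbol.terminal

lemma split_middle {α : Type*} {u v p q : List α} {x : α} (h : u ++ v = p ++ x :: q) :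
    (∃ q₁, u = p ++ x :: q₁ ∧ q = q₁ ++ v) ∨ (∃ p₂, p = u ++ p₂ ∧ v = p₂ ++ x :: q) := by
  induction u generalizing p with
  | nil => exact Or.inr ⟨p, rfl, h⟩
  | cons a u ih =>
      cases p with
      | nil =>
          simp only [List.nil_append, List.cons_append, List.cons.injEq] at h ⊢
          exact Or.inl ⟨u, ⟨h.1, rfl⟩, h.2.symm⟩
      | cons b p =>
          simp only [List.cons_append, List.cons.injEq] at h
          obtain ⟨rfl, h2⟩ := h
          rcases ih h2 with ⟨q₁, h3, h4⟩ | ⟨p₂, h3, h4⟩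
          · exact Or.inl ⟨q₁, by simp [h3], h4⟩
          · exact Or.inr ⟨p₂, by simp [h3], h4⟩

lemma derives_self_of_terminal {w : List T} {v : List (Symbol T g.NT)}
    (h : g.Derives (tm g w) v) : v = tm g w := by
  induction h with
  | refl => rfl
  | tail _ last ih =>
      exfalso
      obtain ⟨r, _, hr⟩ := last
      obtain ⟨p, q, hu, _⟩ := hr.exists_parts
      rw [ih] at hu
      have : Symbol.nonterminal r.input ∈ tm g w := by
        rw [hu]; simp
      simp only [tm, List.mem_map] at this
      obtain ⟨a, _, ha⟩ := this
      cases ha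

/-- Derivation in exactly `n` steps. -/
inductive DerivesIn (g : ContextFreeGrammar.{0} T) :
    ℕ → List (Symbol T g.NT) → List (Symbol T g.NT) → Prop
  | refl (u : List (Symbol T g.NT)) : DerivesIn g 0 u u
  | head {u v w : List (Symbol T g.NT)} {n : ℕ} :
      g.Produces u v → DerivesIn g n v w → DerivesIn g (n + 1) u w

lemma DerivesIn.derives {n : ℕ} {u v : List (Symbol T g.NT)} (h : DerivesIn g n u v) :
    g.Derives u v := by
  induction h with
  | refl => rfl
  | head p _ ih => exact p.trans_derives ih

lemma DerivesIn.zero_eq {u v : List (Symbol T g.NT)} (h : DerivesIn g 0 u v) : u = v := by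
  cases h; rfl

lemma DerivesIn.succ_ex {n : ℕ} {u v : List (Symbol T g.NT)} (h : DerivesIn g (n + 1) u v) :
    ∃ z, g.Produces u z ∧ DerivesIn g n z v := by
  cases h; exact ⟨_, ‹_›, ‹_›⟩

lemma DerivesIn.tail {n : ℕ} {u v w : List (Symbol T g.NT)}
    (h : DerivesIn g n u v) (p : g.Produces v w) : DerivesIn g (n + 1) u w := by
  induction h with
  | refl => exact .head p (.refl _)
  | head p0 _ ih => exact .head p0 (ih p)

lemma derives_iff_derivesIn {u v : List (Symbol T g.NT)} :
    g.Derives u v ↔ ∃ n, DerivesIn g n u v := by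
  constructor
  · intro h
    induction h with
    | refl => exact ⟨0, .refl u⟩
    | tail _ last ih => obtain ⟨n, hn⟩ := ih; exact ⟨n + 1, hn.tail last⟩
  · rintro ⟨n, hn⟩; exact hn.derives

lemma produces_nil_false {v : List (Symbol T g.NT)} (h : g.Produces [] v) : False := by
  obtain ⟨r, _, hr⟩ := h
  obtain ⟨p, q, hu, _⟩ := hr.exists_parts
  simp at hu

lemma DerivesIn.append_split {n : ℕ} {u v : List (Symbol T g.NT)} {w : List T}
    (h : DerivesIn g n (u ++ v) (tm g w)) :
    ∃ n₁ n₂ w₁ w₂, n₁ ≤ n ∧ n₂ ≤ n ∧ w = w₁ ++ w₂ ∧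
      DerivesIn g n₁ u (tm g w₁) ∧ DerivesIn g n₂ v (tm g w₂) := by
  induction n generalizing u v w with
  | zero =>
      have huv := h.zero_eq
      obtain ⟨w₁, w₂, hw, hw1, hw2⟩ := List.map_eq_append_iff.mp huv.symm
      exact ⟨0, 0, w₁, w₂, le_refl _, le_refl _, hw, by rw [← hw1]; exact .refl _,
        by rw [← hw2]; exact .refl _⟩
  | succ n ih =>
      obtain ⟨z, ⟨r, hrmem, hr⟩, hd⟩ := h.succ_ex
      obtain ⟨p', q', hin, hout⟩ := hr.exists_parts
      rw [List.append_assoc, List.singleton_append] at hin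
      rcases split_middle hin with ⟨q₁, hu, hq⟩ | ⟨p₂, hp, hv⟩
      · -- rewrite inside u
        have hz : r.Rewrites u (p' ++ r.output ++ q₁) := by
          have : u = p' ++ [Symbol.nonterminal r.input] ++ q₁ := by simp [hu]
          rw [this]; exact ContextFreeRule.rewrites_of_exists_parts r p' q₁
        have hzeq : z = (p' ++ r.output ++ q₁) ++ v := by
          rw [hout, hq]; simp
        rw [hzeq] at hd
        obtain ⟨n₁, n₂, w₁, w₂, h1, h2, hw, hd1, hd2⟩ := ih hd
        exact ⟨n₁ + 1, n₂, w₁, w₂, Nat.succ_le_succ h1, h2.trans (Nat.le_succ n), hw,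
          .head ⟨r, hrmem, hz⟩ hd1, hd2⟩
      · -- rewrite inside v
        have hz : r.Rewrites v (p₂ ++ r.output ++ q') := by
          have : v = p₂ ++ [Symbol.nonterminal r.input] ++ q' := by simp [hv]
          rw [this]; exact ContextFreeRule.rewrites_of_exists_parts r p₂ q'
        have hzeq : z = u ++ (p₂ ++ r.output ++ q') := by
          rw [hout, hp]; simp
        rw [hzeq] at hd
        obtain ⟨n₁, n₂, w₁, w₂, h1, h2, hw, hd1, hd2⟩ := ih hd
        exact ⟨n₁, n₂ + 1, w₁, w₂, h1.trans (Nat.le_succ n), Nat.succ_le_succ h2, hw,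
          hd1, .head ⟨r, hrmem, hz⟩ hd2⟩

lemma derives_append_split {u v : List (Symbol T g.NT)} {w : List T}
    (h : g.Derives (u ++ v) (tm g w)) :
    ∃ w₁ w₂, w = w₁ ++ w₂ ∧ g.Derives u (tm g w₁) ∧ g.Derives v (tm g w₂) := by
  obtain ⟨n, hn⟩ := derives_iff_derivesIn.mp h
  obtain ⟨n₁, n₂, w₁, w₂, _, _, hw, h1, h2⟩ := hn.append_split
  exact ⟨w₁, w₂, hw, h1.derives, h2.derives⟩

lemma terminal_injective : Function.Injective (Symbol.terminal : T → Symbol T g.NT) := by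
  intro a b h; injection h

lemma tm_inj {w₁ w₂ : List T} (h : tm g w₁ = tm g w₂) : w₁ = w₂ :=
  List.map_injective_iff.mpr terminal_injective h

/-- Parse structure: string `β` derives terminal word `w`. -/
inductive DerStr (g : ContextFreeGrammar.{0} T) : List (Symbol T g.NT) → List T → Prop
  | nil : DerStr g [] []
  | consT {γ : List (Symbol T g.NT)} {w : List T} (a : T) :
      DerStr g γ w → DerStr g (Symbol.terminal a :: γ) (a :: w)
  | consN {B : g.NT} {β : List (Symbol T g.NT)} {v : List T} {γ : List (Symbol T g.NT)}
      {w : List T} :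
      (⟨B, β⟩ : ContextFreeRule T g.NT) ∈ g.rules →
      DerStr g β v → DerStr g γ w → DerStr g (Symbol.nonterminal B :: γ) (v ++ w)

lemma DerStr.derives {β : List (Symbol T g.NT)} {w : List T} (h : DerStr g β w) :
    g.Derives β (tm g w) := by
  induction h with
  | nil => exact Derives.refl []
  | consT a _ ih =>
      have := ih.append_left [Symbol.terminal a]
      simpa using this
  | @consN B β v γ w hmem _ _ ihβ ihγ =>
      have h1 : g.Produces (Symbol.nonterminal B :: γ) (β ++ γ) :=
        ⟨_, hmem, ContextFreeRule.Rewrites.head γ⟩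
      have h2 : g.Derives (β ++ γ) (tm g v ++ γ) := ihβ.append_right γ
      have h3 : g.Derives (tm g v ++ γ) (tm g v ++ tm g w) := ihγ.append_left (tm g v)
      have : g.Derives (Symbol.nonterminal B :: γ) (tm g v ++ tm g w) :=
        h1.trans_derives (h2.trans h3)
      simpa [tm] using this

lemma produces_single_nt {A : g.NT} {z : List (Symbol T g.NT)}
    (h : g.Produces [Symbol.nonterminal A] z) :
    ∃ β, (⟨A, β⟩ : ContextFreeRule T g.NT) ∈ g.rules ∧ z = β := by
  obtain ⟨r, hmem, hr⟩ := h
  obtain ⟨p, q, hin, hout⟩ := hr.exists_parts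
  match p, hin with
  | [], hin =>
      simp only [List.nil_append, List.singleton_append, List.cons.injEq] at hin
      obtain ⟨h1, h2⟩ := hin
      have hA : r.input = A := by injection h1.symm
      refine ⟨r.output, ?_, by simp [hout, ← h2]⟩
      have : r = ⟨A, r.output⟩ := by cases r; simp_all
      rwa [this] at hmem
  | x :: p', hin =>
      exfalso
      simp only [List.cons_append, List.cons.injEq] at hin
      obtain ⟨-, h2⟩ := hin
      have : p' ++ [Symbol.nonterminal r.input] ++ q = [] := by simpa using h2.symm
      simpa using congrArg List.length this

lemma derivesIn_derStr : ∀ (n m : ℕ) (β : List (Symbol T g.NT)) (w : List T), m ≤ n →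
    DerivesIn g m β (tm g w) → DerStr g β w := by
  intro n
  induction n using Nat.strong_induction_on with
  | _ n IH =>
    intro m β w
    induction β generalizing m w with
    | nil =>
        intro hm h
        match m, h with
        | 0, h =>
            have h0 := h.zero_eq
            have : w = [] := by
              cases w with
              | nil => rfl
              | cons a w => exact absurd h0.symm (by simp [tm])
            subst this
            exact DerStr.nil
        | m + 1, h =>
            obtain ⟨z, hp, -⟩ := h.succ_ex
            exact absurd hp produces_nil_false
    | cons s γ ihγ =>
        intro hm h
        have h' : DerivesIn g m ([s] ++ γ) (tm g w) := by simpa using h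
        obtain ⟨n₁, n₂, w₁, w₂, hn₁, hn₂, hw, d1, d2⟩ := h'.append_split
        have hγ : DerStr g γ w₂ := ihγ n₂ w₂ (hn₂.trans hm) d2
        subst hw
        cases s with
        | terminal a =>
            have h1 : tm g w₁ = tm g [a] :=
              derives_self_of_terminal (g := g) (w := [a]) (by simpa using d1.derives)
            have : w₁ = [a] := tm_inj h1
            subst this
            exact DerStr.consT a hγ
        | nonterminal B =>
            match n₁, d1 with
            | 0, d1 =>
                exfalso
                have := d1.zero_eq
                cases w₁ with
                | nil => simp [tm] at this
                | cons b w' => injection this with h1 h2; cases h1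
            | k + 1, d1 =>
                obtain ⟨z, hp, hd⟩ := d1.succ_ex
                obtain ⟨β', hmem, hzeq⟩ := produces_single_nt hp
                rw [hzeq] at hd
                have hk : k < n := lt_of_lt_of_le (Nat.lt_succ_of_le (le_refl k))
                  (hn₁.trans hm)
                have hβ' : DerStr g β' w₁ := IH k hk k β' w₁ (le_refl k) hd
                have : (w₁ ++ w₂ : List T) = w₁ ++ w₂ := rfl
                exact DerStr.consN hmem hβ' hγ

lemma derives_derStr {β : List (Symbol T g.NT)} {w : List T}
    (h : g.Derives β (tm g w)) : DerStr g β w := by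
  obtain ⟨n, hn⟩ := derives_iff_derivesIn.mp h
  exact derivesIn_derStr n n β w (le_refl n) hn

/-- Left-spine relation: `SpRel g A X w` means from `A` one can reach, along a left spine with
nullable prefixes, the nonterminal `X` followed by terminal word `w`. -/
inductive SpRel (g : ContextFreeGrammar.{0} T) (A : g.NT) : g.NT → List T → Prop
  | refl : SpRel g A A []
  | step {X Z : g.NT} {w v : List T} {α γ : List (Symbol T g.NT)} :
      SpRel g A X w →
      (⟨X, α ++ Symbol.nonterminal Z :: γ⟩ : ContextFreeRule T g.NT) ∈ g.rules →
      g.Derives α [] → g.Derives γ (tm g v) → SpRel g A Z (v ++ w)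

lemma SpRel.derives {A X : g.NT} {w : List T} (h : SpRel g A X w) :
    g.Derives [Symbol.nonterminal A] (Symbol.nonterminal X :: tm g w) := by
  induction h with
  | refl => exact Derives.refl _
  | @step X Z w v α γ _ hmem hα hγ ih =>
      refine ih.trans ?_
      have h1 : g.Produces (Symbol.nonterminal X :: tm g w)
          ((α ++ Symbol.nonterminal Z :: γ) ++ tm g w) :=
        ⟨_, hmem, ContextFreeRule.Rewrites.head _⟩
      have h2 : g.Derives ((α ++ Symbol.nonterminal Z :: γ) ++ tm g w)
          (Symbol.nonterminal Z :: γ ++ tm g w) := by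
        have := hα.append_right (Symbol.nonterminal Z :: γ ++ tm g w)
        simpa using this
      have h3 : g.Derives (Symbol.nonterminal Z :: γ ++ tm g w)
          (Symbol.nonterminal Z :: tm g v ++ tm g w) := by
        have := (hγ.append_right (tm g w)).append_left [Symbol.nonterminal Z]
        simpa using this
      have : g.Derives (Symbol.nonterminal X :: tm g w)
          (Symbol.nonterminal Z :: tm g v ++ tm g w) :=
        h1.trans_derives (h2.trans h3)
      simpa [tm] using this

/-- Extend a spine at the top. -/
lemma SpRel.top {A B X : g.NT} {w u : List T} {α γ : List (Symbol T g.NT)}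
    (h : SpRel g B X w)
    (hr : (⟨A, α ++ Symbol.nonterminal B :: γ⟩ : ContextFreeRule T g.NT) ∈ g.rules)
    (hα : g.Derives α []) (hγ : g.Derives γ (tm g u)) : SpRel g A X (w ++ u) := by
  induction h with
  | refl =>
      have := SpRel.step (SpRel.refl) hr hα hγ
      simpa using this
  | @step X' Z w' v α' γ' _ hmem hα' hγ' ih =>
      have := SpRel.step ih hmem hα' hγ'
      simpa using this

/-- First-symbol decomposition of a parse of a nonempty word. -/
lemma derStr_first {β : List (Symbol T g.NT)} {w : List T} (h : DerStr g β w) (hw : w ≠ []) :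
    ∃ δ s γ₂, β = δ ++ s :: γ₂ ∧ g.Derives δ [] ∧
      ((∃ b u, s = Symbol.terminal b ∧ w = b :: u ∧ g.Derives γ₂ (tm g u)) ∨
       (∃ B vB u, s = Symbol.nonterminal B ∧ vB ≠ [] ∧
          g.Derives [Symbol.nonterminal B] (tm g vB) ∧
          g.Derives γ₂ (tm g u) ∧ w = vB ++ u)) := by
  induction h with
  | nil => exact absurd rfl hw
  | @consT γ w' a hγ ih =>
      exact ⟨[], Symbol.terminal a, γ, rfl, Derives.refl [],
        Or.inl ⟨a, w', rfl, rfl, hγ.derives⟩⟩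
  | @consN B β v γ w₂ hmem hβ hγ ihβ ihγ =>
      rcases eq_or_ne v [] with rfl | hv
      · have hw₂ : w₂ ≠ [] := by simpa using hw
        obtain ⟨δ, s, γ₂, heq, hδ, hc⟩ := ihγ hw₂
        refine ⟨Symbol.nonterminal B :: δ, s, γ₂, by simp [heq], ?_, by simpa using hc⟩
        have hB : g.Derives [Symbol.nonterminal B] [] := by
          have h1 : g.Produces [Symbol.nonterminal B] β :=
            ⟨_, hmem, by simpa using ContextFreeRule.Rewrites.head (r := ⟨B, β⟩) []⟩
          exact h1.trans_derives (by simpa [tm] using hβ.derives)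
        have := (hB.append_right δ).trans (by simpa using hδ)
        simpa using this
      · refine ⟨[], Symbol.nonterminal B, γ, rfl, Derives.refl [],
          Or.inr ⟨B, v, w₂, rfl, hv, ?_, hγ.derives, rfl⟩⟩
        have h1 : g.Produces [Symbol.nonterminal B] β :=
          ⟨_, hmem, by simpa using ContextFreeRule.Rewrites.head (r := ⟨B, β⟩) []⟩
        exact h1.trans_derives hβ.derives

/-- Left-corner chain decomposition for parses of strings. -/
lemma derStr_chain {β : List (Symbol T g.NT)} {w : List T} (h : DerStr g β w) (hw : w ≠ []) :
    ∃ δ s γ₂, β = δ ++ s :: γ₂ ∧ g.Derives δ [] ∧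
      ((∃ a u, s = Symbol.terminal a ∧ g.Derives γ₂ (tm g u) ∧ w = a :: u) ∨
       (∃ B X w' a α γ' u₃ u₂, s = Symbol.nonterminal B ∧ SpRel g B X w' ∧
          (⟨X, α ++ Symbol.terminal a :: γ'⟩ : ContextFreeRule T g.NT) ∈ g.rules ∧
          g.Derives α [] ∧ g.Derives γ' (tm g u₃) ∧ g.Derives γ₂ (tm g u₂) ∧
          w = a :: ((u₃ ++ w') ++ u₂))) := by
  induction h with
  | nil => exact absurd rfl hw
  | @consT γ w' a hγ ih =>
      exact ⟨[], Symbol.terminal a, γ, rfl, Derives.refl [],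
        Or.inl ⟨a, w', rfl, hγ.derives, rfl⟩⟩
  | @consN B β v γ w₂ hmem hβ hγ ihβ ihγ =>
      rcases eq_or_ne v [] with rfl | hv
      · have hw₂ : w₂ ≠ [] := by simpa using hw
        obtain ⟨δ, s, γ₂, heq, hδ, hc⟩ := ihγ hw₂
        refine ⟨Symbol.nonterminal B :: δ, s, γ₂, by simp [heq], ?_, by simpa using hc⟩
        have hB : g.Derives [Symbol.nonterminal B] [] := by
          have h1 : g.Produces [Symbol.nonterminal B] β :=
            ⟨_, hmem, by simpa using ContextFreeRule.Rewrites.head (r := ⟨B, β⟩) []⟩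
          exact h1.trans_derives (by simpa [tm] using hβ.derives)
        have := (hB.append_right δ).trans (by simpa using hδ)
        simpa using this
      · obtain ⟨δ', s', γ₂', heq', hδ', hc'⟩ := ihβ hv
        refine ⟨[], Symbol.nonterminal B, γ, rfl, Derives.refl [], Or.inr ?_⟩
        rcases hc' with ⟨a, u', rfl, hγ₂', rfl⟩ | ⟨B', X, w'', a, α, γ'', u₃, u₂', rfl,
            hsp, hbot, hα, hγ'', hγ₂', rfl⟩
        · -- β = δ' ++ terminal a :: γ₂' ; bottom is B itself
          refine ⟨B, B, [], a, δ', γ₂', u', w₂, rfl, SpRel.refl, ?_, hδ', hγ₂',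
            hγ.derives, by simp⟩
          rwa [← heq']
        · -- recurse and extend spine at the top
          have hsp2 : SpRel g B X (w'' ++ u₂') :=
            SpRel.top hsp (by rwa [← heq']) hδ' hγ₂'
          exact ⟨B, X, w'' ++ u₂', a, α, γ'', u₃, w₂, rfl, hsp2, hbot, hα, hγ'',
            hγ.derives, by simp⟩

/-- Main decomposition: a nonempty word derived from a nonterminal factors through a spine. -/
lemma nt_first_decomp {A : g.NT} {w : List T}
    (h : g.Derives [Symbol.nonterminal A] (tm g w)) (hw : w ≠ []) :
    ∃ X w' a α γ u, SpRel g A X w' ∧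
      (⟨X, α ++ Symbol.terminal a :: γ⟩ : ContextFreeRule T g.NT) ∈ g.rules ∧
      g.Derives α [] ∧ g.Derives γ (tm g u) ∧ w = a :: (u ++ w') := by
  rcases h.eq_or_head with heq | ⟨z, hp, hd⟩
  · exfalso
    cases w with
    | nil => exact hw rfl
    | cons b w' => injection heq with h1 h2; cases h1
  · obtain ⟨β, hmem, hzeq⟩ := produces_single_nt hp
    rw [hzeq] at hd
    have hds : DerStr g β w := derives_derStr hd
    obtain ⟨δ, s, γ₂, heq', hδ, hc⟩ := derStr_chain hds hw
    rcases hc with ⟨a, u, rfl, hγ₂, rfl⟩ | ⟨B, X, w'', a, α, γ', u₃, u₂, rfl, hsp, hbot,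
        hα, hγ', hγ₂, rfl⟩
    · exact ⟨A, [], a, δ, γ₂, u, SpRel.refl, by rwa [← heq'], hδ, hγ₂, by simp⟩
    · have hsp2 : SpRel g A X (w'' ++ u₂) := SpRel.top hsp (by rwa [← heq']) hδ hγ₂
      exact ⟨X, w'' ++ u₂, a, α, γ', u₃, hsp2, hbot, hα, hγ', by simp⟩
/-! ### The new grammar: nonterminals and semantics -/

/-- Generic "parts" predicate: a word splits into parts belonging to given sets. -/
inductive PartsF {N : Type} (sm : N → Set (List T)) : List N → List T → Prop
  | nil : PartsF sm [] []
  | cons {n : N} {ns : List N} {w u : List T} :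
      w ∈ sm n → PartsF sm ns u → PartsF sm (n :: ns) (w ++ u)

lemma PartsF.nil_eq {N : Type} {sm : N → Set (List T)} {u : List T}
    (h : PartsF sm [] u) : u = [] := by cases h; rfl

lemma PartsF.single {N : Type} {sm : N → Set (List T)} {n : N} {w : List T}
    (h : w ∈ sm n) : PartsF sm [n] w := by
  have := PartsF.cons h (PartsF.nil (sm := sm))
  simpa using this

lemma PartsF.single_eq {N : Type} {sm : N → Set (List T)} {n : N} {u : List T}
    (h : PartsF sm [n] u) : u ∈ sm n := by
  cases h with
  | cons hw hn => have := hn.nil_eq; subst this; simpa using hw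

lemma PartsF.append {N : Type} {sm : N → Set (List T)} {ns₁ ns₂ : List N} {u₁ u₂ : List T}
    (h₁ : PartsF sm ns₁ u₁) (h₂ : PartsF sm ns₂ u₂) : PartsF sm (ns₁ ++ ns₂) (u₁ ++ u₂) := by
  induction h₁ with
  | nil => simpa using h₂
  | cons hw _ ih => simpa [List.append_assoc] using PartsF.cons hw ih

lemma PartsF.append_split {N : Type} {sm : N → Set (List T)} {ns₁ ns₂ : List N} {u : List T}
    (h : PartsF sm (ns₁ ++ ns₂) u) :
    ∃ u₁ u₂, u = u₁ ++ u₂ ∧ PartsF sm ns₁ u₁ ∧ PartsF sm ns₂ u₂ := by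
  induction ns₁ generalizing u with
  | nil => exact ⟨[], u, rfl, PartsF.nil, by simpa using h⟩
  | cons n ns ih =>
      cases h with
      | cons hw hrest =>
          obtain ⟨u₁, u₂, rfl, p₁, p₂⟩ := ih hrest
          exact ⟨_ ++ u₁, u₂, by simp, PartsF.cons hw p₁, p₂⟩

/-- The nonterminal type of the Greibach grammar. -/
abbrev NTG (g : ContextFreeGrammar.{0} T) : Type := g.NT ⊕ (g.NT × g.NT) ⊕ T

/-- Terminals occurring in the rules of `g`. -/
def termOcc (g : ContextFreeGrammar.{0} T) : Set T :=
  {a | ∃ r ∈ g.rules, Symbol.terminal a ∈ r.output}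

/-- Nonterminals occurring in `g`. -/
def occ (g : ContextFreeGrammar.{0} T) : Set g.NT :=
  {A | A = g.initial ∨ ∃ r ∈ g.rules, r.input = A ∨ Symbol.nonterminal A ∈ r.output}

/-- Intended semantics of the new nonterminals. -/
def sem (g : ContextFreeGrammar.{0} T) : NTG g → Set (List T)
  | Sum.inl A => {w | w ≠ [] ∧ g.Derives [Symbol.nonterminal A] (tm g w)}
  | Sum.inr (Sum.inl (Z, A)) => {w | w ≠ [] ∧ SpRel g A Z w}
  | Sum.inr (Sum.inr a) => {w | w = [a] ∧ a ∈ termOcc g}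

lemma sem_ne_nil {n : NTG g} {w : List T} (h : w ∈ sem g n) : w ≠ [] := by
  match n with
  | Sum.inl A => exact h.1
  | Sum.inr (Sum.inl (Z, A)) => exact h.1
  | Sum.inr (Sum.inr a) => rw [h.1]; simp

abbrev Parts (g : ContextFreeGrammar.{0} T) := PartsF (sem g)

/-- Translation of a sentential-form tail into new nonterminals. -/
inductive TR (g : ContextFreeGrammar.{0} T) : List (Symbol T g.NT) → List (NTG g) → Prop
  | nil : TR g [] []
  | term {γ : List (Symbol T g.NT)} {ts : List (NTG g)} (a : T) :
      a ∈ termOcc g → TR g γ ts → TR g (Symbol.terminal a :: γ) (Sum.inr (Sum.inr a) :: ts)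
  | nt {γ : List (Symbol T g.NT)} {ts : List (NTG g)} (B : g.NT) :
      TR g γ ts → TR g (Symbol.nonterminal B :: γ) (Sum.inl B :: ts)
  | ntNull {γ : List (Symbol T g.NT)} {ts : List (NTG g)} (B : g.NT) :
      g.Derives [Symbol.nonterminal B] [] → TR g γ ts → TR g (Symbol.nonterminal B :: γ) ts

lemma mem_termOcc_of_rule {r : ContextFreeRule T g.NT} (hr : r ∈ g.rules) {a : T}
    (ha : Symbol.terminal a ∈ r.output) : a ∈ termOcc g := ⟨r, hr, ha⟩

lemma TR_sound {γ : List (Symbol T g.NT)} {ts : List (NTG g)} {u : List T}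
    (h : TR g γ ts) (hp : Parts g ts u) : g.Derives γ (tm g u) := by
  induction h generalizing u with
  | nil => rw [hp.nil_eq]; exact Derives.refl []
  | @term γ ts a hmem _ ih =>
      cases hp with
      | @cons _ _ w u' hw hrest =>
          obtain ⟨rfl, -⟩ := hw
          have := (ih hrest).append_left [Symbol.terminal a]
          simpa [tm] using this
  | @nt γ ts B _ ih =>
      cases hp with
      | @cons _ _ w u' hw hrest =>
          obtain ⟨-, hd⟩ := hw
          have h1 : g.Derives (Symbol.nonterminal B :: γ) (tm g w ++ γ) := by
            have := hd.append_right γ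
            simpa using this
          have h2 : g.Derives (tm g w ++ γ) (tm g w ++ tm g u') :=
            (ih hrest).append_left (tm g w)
          have := h1.trans h2
          simpa [tm] using this
  | @ntNull γ ts B hB _ ih =>
      have h1 : g.Derives (Symbol.nonterminal B :: γ) γ := by
        have := hB.append_right γ
        simpa using this
      exact h1.trans (ih hp)

lemma TR_complete {γ : List (Symbol T g.NT)} {u : List T}
    (h : g.Derives γ (tm g u)) (hocc : ∀ a, Symbol.terminal a ∈ γ → a ∈ termOcc g) :
    ∃ ts, TR g γ ts ∧ Parts g ts u := by
  induction γ generalizing u with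
  | nil =>
      have : tm g u = [] := derives_self_of_terminal (w := []) (by simpa using h)
      have : u = [] := by simpa [tm] using this
      subst this
      exact ⟨[], TR.nil, PartsF.nil⟩
  | cons s γ ih =>
      have h' : g.Derives ([s] ++ γ) (tm g u) := by simpa using h
      obtain ⟨u₁, u₂, rfl, d1, d2⟩ := derives_append_split h'
      obtain ⟨ts, htr, hparts⟩ := ih d2 (fun a ha => hocc a (by simp [ha]))
      cases s with
      | terminal a =>
          have h1 : tm g u₁ = tm g [a] :=
            derives_self_of_terminal (w := [a]) (by simpa using d1)
          have : u₁ = [a] := tm_inj h1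
          subst this
          have hA : a ∈ termOcc g := hocc a (by simp)
          exact ⟨Sum.inr (Sum.inr a) :: ts, TR.term a hA htr,
            PartsF.cons ⟨rfl, hA⟩ hparts⟩
      | nonterminal B =>
          rcases eq_or_ne u₁ [] with rfl | hne
          · exact ⟨ts, TR.ntNull B (by simpa [tm] using d1) htr, by simpa using hparts⟩
          · exact ⟨Sum.inl B :: ts, TR.nt B htr, PartsF.cons ⟨hne, d1⟩ hparts⟩

/-! ### Shapes of the rules of the new grammar -/

/-- The optional spine tail. -/
def TailOpt (g : ContextFreeGrammar.{0} T) (A X : g.NT) (tl : List (NTG g)) : Prop :=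
  tl = [Sum.inr (Sum.inl (X, A))] ∨ (tl = [] ∧ SpRel g A X [])

lemma TailOpt_sound {A X : g.NT} {tl : List (NTG g)} {u : List T}
    (h : TailOpt g A X tl) (hp : Parts g tl u) : SpRel g A X u := by
  rcases h with rfl | ⟨rfl, hsp⟩
  · exact (hp.single_eq).2
  · rw [hp.nil_eq]; exact hsp

lemma TailOpt_complete {A X : g.NT} {u : List T} (hsp : SpRel g A X u) :
    ∃ tl, TailOpt g A X tl ∧ Parts g tl u := by
  rcases eq_or_ne u [] with rfl | hne
  · exact ⟨[], Or.inr ⟨rfl, hsp⟩, PartsF.nil⟩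
  · exact ⟨[Sum.inr (Sum.inl (X, A))], Or.inl rfl, PartsF.single ⟨hne, hsp⟩⟩

/-- Shapes of the rules for `Sum.inl A` (the nonterminal `A` itself). -/
def BShape (g : ContextFreeGrammar.{0} T) (A : g.NT) (a : T) (ns : List (NTG g)) : Prop :=
  ∃ X α γ ts tl, (⟨X, α ++ Symbol.terminal a :: γ⟩ : ContextFreeRule T g.NT) ∈ g.rules ∧
    g.Derives α [] ∧ TR g γ ts ∧ TailOpt g A X tl ∧ ns = ts ++ tl

/-- Firing a rule whose output has a nullable prefix. -/
lemma rule_fire {X : g.NT} {α γ : List (Symbol T g.NT)} {s : Symbol T g.NT} {u : List T}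
    {rest : List (Symbol T g.NT)}
    (hmem : (⟨X, α ++ s :: γ⟩ : ContextFreeRule T g.NT) ∈ g.rules)
    (hα : g.Derives α []) (hγ : g.Derives γ (tm g u)) :
    g.Derives (Symbol.nonterminal X :: rest) (s :: (tm g u ++ rest)) := by
  have h1 : g.Produces (Symbol.nonterminal X :: rest) ((α ++ s :: γ) ++ rest) :=
    ⟨_, hmem, ContextFreeRule.Rewrites.head rest⟩
  have h2 : g.Derives ((α ++ s :: γ) ++ rest) (s :: (γ ++ rest)) := by
    have := hα.append_right (s :: (γ ++ rest))
    simpa using this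
  have h3 : g.Derives (s :: (γ ++ rest)) (s :: (tm g u ++ rest)) := by
    have := (hγ.append_right rest).append_left [s]
    simpa using this
  exact h1.trans_derives (h2.trans h3)

lemma BShape_sound {A : g.NT} {a : T} {ns : List (NTG g)} {u : List T}
    (h : BShape g A a ns) (hp : Parts g ns u) :
    g.Derives [Symbol.nonterminal A] (tm g (a :: u)) := by
  obtain ⟨X, α, γ, ts, tl, hmem, hα, htr, htl, rfl⟩ := h
  obtain ⟨u₁, u₂, rfl, p₁, p₂⟩ := hp.append_split
  have hsp : SpRel g A X u₂ := TailOpt_sound htl p₂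
  have h1 : g.Derives [Symbol.nonterminal A] (Symbol.nonterminal X :: tm g u₂) := hsp.derives
  have h2 : g.Derives (Symbol.nonterminal X :: tm g u₂)
      (Symbol.terminal a :: (tm g u₁ ++ tm g u₂)) :=
    rule_fire hmem hα (TR_sound htr p₁)
  have := h1.trans h2
  simpa [tm] using this

lemma BShape_complete {A : g.NT} {w : List T} (hw : w ≠ [])
    (h : g.Derives [Symbol.nonterminal A] (tm g w)) :
    ∃ a ns u, BShape g A a ns ∧ Parts g ns u ∧ w = a :: u := by
  obtain ⟨X, w', a, α, γ, u, hsp, hbot, hα, hγ, rfl⟩ := nt_first_decomp h hw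
  obtain ⟨ts, htr, hpts⟩ := TR_complete hγ (fun b hb =>
    mem_termOcc_of_rule hbot (by simp [hb]))
  obtain ⟨tl, htl, hptl⟩ := TailOpt_complete hsp
  exact ⟨a, ts ++ tl, u ++ w', ⟨X, α, γ, ts, tl, hbot, hα, htr, htl, rfl⟩,
    hpts.append hptl, rfl⟩

/-- Shapes realising the first letter produced by a string `γ`. -/
def FirstShape (g : ContextFreeGrammar.{0} T) (γ : List (Symbol T g.NT)) (b : T)
    (ns : List (NTG g)) : Prop :=
  ∃ δ γ₂ ts, g.Derives δ [] ∧ TR g γ₂ ts ∧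
    ((γ = δ ++ Symbol.terminal b :: γ₂ ∧ ns = ts) ∨
     (∃ B nsB, γ = δ ++ Symbol.nonterminal B :: γ₂ ∧ BShape g B b nsB ∧ ns = nsB ++ ts))

lemma FirstShape_sound {γ : List (Symbol T g.NT)} {b : T} {ns : List (NTG g)} {u : List T}
    (h : FirstShape g γ b ns) (hp : Parts g ns u) : g.Derives γ (tm g (b :: u)) := by
  obtain ⟨δ, γ₂, ts, hδ, htr, hc⟩ := h
  rcases hc with ⟨rfl, rfl⟩ | ⟨B, nsB, rfl, hB, rfl⟩
  · have h1 : g.Derives (δ ++ Symbol.terminal b :: γ₂) (Symbol.terminal b :: γ₂) := by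
      have := hδ.append_right (Symbol.terminal b :: γ₂)
      simpa using this
    have h2 : g.Derives (Symbol.terminal b :: γ₂) (Symbol.terminal b :: tm g u) := by
      have := (TR_sound htr hp).append_left [Symbol.terminal b]
      simpa using this
    have := h1.trans h2
    simpa [tm] using this
  · obtain ⟨u₁, u₂, rfl, p₁, p₂⟩ := hp.append_split
    have hB' : g.Derives [Symbol.nonterminal B] (tm g (b :: u₁)) := BShape_sound hB p₁
    have h1 : g.Derives (δ ++ Symbol.nonterminal B :: γ₂) (Symbol.nonterminal B :: γ₂) := by
      have := hδ.append_right (Symbol.nonterminal B :: γ₂)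
      simpa using this
    have h2 : g.Derives (Symbol.nonterminal B :: γ₂) (tm g (b :: u₁) ++ γ₂) := by
      have := hB'.append_right γ₂
      simpa using this
    have h3 : g.Derives (tm g (b :: u₁) ++ γ₂) (tm g (b :: u₁) ++ tm g u₂) :=
      (TR_sound htr p₂).append_left _
    have := (h1.trans h2).trans h3
    simpa [tm] using this

lemma FirstShape_complete {γ : List (Symbol T g.NT)} {v : List T} (hv : v ≠ [])
    (h : g.Derives γ (tm g v)) (hocc : ∀ a, Symbol.terminal a ∈ γ → a ∈ termOcc g) :
    ∃ b ns u, FirstShape g γ b ns ∧ Parts g ns u ∧ v = b :: u := by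
  obtain ⟨δ, s, γ₂, rfl, hδ, hc⟩ := derStr_first (derives_derStr h) hv
  rcases hc with ⟨b, u, rfl, rfl, hγ₂⟩ | ⟨B, vB, u, rfl, hvB, hB, hγ₂, rfl⟩
  · obtain ⟨ts, htr, hpts⟩ := TR_complete hγ₂ (fun a ha => hocc a (by simp [ha]))
    exact ⟨b, ts, u, ⟨δ, γ₂, ts, hδ, htr, Or.inl ⟨rfl, rfl⟩⟩, hpts, rfl⟩
  · obtain ⟨a, nsB, uB, hBs, hpB, rfl⟩ := BShape_complete hvB hB
    obtain ⟨ts, htr, hpts⟩ := TR_complete hγ₂ (fun c hc => hocc c (by simp [hc]))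
    exact ⟨a, nsB ++ ts, uB ++ u, ⟨δ, γ₂, ts, hδ, htr, Or.inr ⟨B, nsB, rfl, hBs, rfl⟩⟩,
      hpB.append hpts, by simp⟩

/-! ### Epsilon spine steps -/

def EpsStep (g : ContextFreeGrammar.{0} T) (X Z : g.NT) : Prop :=
  ∃ α γ, (⟨X, α ++ Symbol.nonterminal Z :: γ⟩ : ContextFreeRule T g.NT) ∈ g.rules ∧
    g.Derives α [] ∧ g.Derives γ []

def EpsDown (g : ContextFreeGrammar.{0} T) : g.NT → g.NT → Prop :=
  Relation.ReflTransGen (EpsStep g)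

lemma SpRel.epsDown {A X Z : g.NT} {w : List T} (h : SpRel g A X w)
    (hd : EpsDown g X Z) : SpRel g A Z w := by
  induction hd with
  | refl => exact h
  | tail _ hstep ih =>
      obtain ⟨α, γ, hmem, hα, hγ⟩ := hstep
      have := SpRel.step ih hmem hα (v := []) (by simpa [tm] using hγ)
      simpa using this

/-- Shapes of the rules for spine nonterminals `⟨Z, A⟩`. -/
def SpShape (g : ContextFreeGrammar.{0} T) (Z A : g.NT) (b : T) (ns : List (NTG g)) : Prop :=
  ∃ X X' α γ ns₁ tl, EpsDown g X Z ∧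
    (⟨X', α ++ Symbol.nonterminal X :: γ⟩ : ContextFreeRule T g.NT) ∈ g.rules ∧
    g.Derives α [] ∧ FirstShape g γ b ns₁ ∧ TailOpt g A X' tl ∧ ns = ns₁ ++ tl

lemma SpShape_sound {Z A : g.NT} {b : T} {ns : List (NTG g)} {u : List T}
    (h : SpShape g Z A b ns) (hp : Parts g ns u) : SpRel g A Z (b :: u) := by
  obtain ⟨X, X', α, γ, ns₁, tl, hdown, hmem, hα, hfs, htl, rfl⟩ := h
  obtain ⟨u₁, u₂, rfl, p₁, p₂⟩ := hp.append_split
  have hsp : SpRel g A X' u₂ := TailOpt_sound htl p₂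
  have hγ : g.Derives γ (tm g (b :: u₁)) := FirstShape_sound hfs p₁
  have hstep : SpRel g A X ((b :: u₁) ++ u₂) := SpRel.step hsp hmem hα hγ
  have := hstep.epsDown hdown
  simpa using this

lemma SpShape_complete {Z A : g.NT} {w : List T} (h : SpRel g A Z w) (hw : w ≠ []) :
    ∃ b ns u, SpShape g Z A b ns ∧ Parts g ns u ∧ w = b :: u := by
  induction h with
  | refl => exact absurd rfl hw
  | @step X Z' w' v α γ hsp hmem hα hγ ih =>
      rcases eq_or_ne v [] with rfl | hv
      · have hw' : w' ≠ [] := by simpa using hw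
        obtain ⟨b, ns, u, hshape, hparts, rfl⟩ := ih hw'
        obtain ⟨Xm, X'', α'', γ'', ns₁, tl, hdown, hmem'', hα'', hfs, htl, rfl⟩ := hshape
        refine ⟨b, ns₁ ++ tl, u, ⟨Xm, X'', α'', γ'', ns₁, tl, ?_, hmem'', hα'', hfs, htl, rfl⟩,
          hparts, by simp⟩
        exact hdown.tail ⟨α, γ, hmem, hα, by simpa [tm] using hγ⟩
      · obtain ⟨b, ns₁, u₁, hfs, hp₁, rfl⟩ := FirstShape_complete hv hγ
          (fun a ha => mem_termOcc_of_rule hmem (by simp [ha]))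
        obtain ⟨tl, htl, hptl⟩ := TailOpt_complete hsp
        refine ⟨b, ns₁ ++ tl, u₁ ++ w',
          ⟨Z', X, α, γ, ns₁, tl, Relation.ReflTransGen.refl, hmem, hα, hfs, htl, rfl⟩,
          hp₁.append hptl, by simp⟩

/-! ### occurrence lemmas -/

lemma occ_of_derives {A : g.NT} {w : List T} (hw : w ≠ [])
    (h : g.Derives [Symbol.nonterminal A] (tm g w)) : A ∈ occ g := by
  rcases h.eq_or_head with heq | ⟨z, hp, -⟩
  · exfalso
    cases w with
    | nil => exact hw rfl
    | cons b w' => injection heq with h1 h2; cases h1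
  · obtain ⟨β, hmem, -⟩ := produces_single_nt hp
    exact Or.inr ⟨⟨A, β⟩, hmem, Or.inl rfl⟩

lemma SpRel.occ_or {A Z : g.NT} {w : List T} (h : SpRel g A Z w) :
    (Z = A ∧ w = []) ∨ (A ∈ occ g ∧ Z ∈ occ g) := by
  induction h with
  | refl => exact Or.inl ⟨rfl, rfl⟩
  | @step X Z' w' v α γ hsp hmem hα hγ ih =>
      refine Or.inr ⟨?_, Or.inr ⟨_, hmem, Or.inr (by simp)⟩⟩
      rcases ih with ⟨rfl, rfl⟩ | ⟨hA, -⟩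
      · exact Or.inr ⟨_, hmem, Or.inl rfl⟩
      · exact hA

lemma SpRel.occ_left {A Z : g.NT} {w : List T} (h : SpRel g A Z w) (hw : w ≠ []) :
    A ∈ occ g ∧ Z ∈ occ g := by
  rcases h.occ_or with ⟨rfl, rfl⟩ | h2
  · exact absurd rfl hw
  · exact h2
/-! ### The rule set of the Greibach grammar -/

def RuleSet (g : ContextFreeGrammar.{0} T) : Set (ContextFreeRule T (NTG g)) :=
  {r | (∃ a ∈ termOcc g, r = ⟨Sum.inr (Sum.inr a), [Symbol.terminal a]⟩) ∨
       (∃ A ∈ occ g, ∃ a ns, BShape g A a ns ∧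
          r = ⟨Sum.inl A, Symbol.terminal a :: ns.map Symbol.nonterminal⟩) ∨
       (∃ Z ∈ occ g, ∃ A ∈ occ g, ∃ b ns, SpShape g Z A b ns ∧
          r = ⟨Sum.inr (Sum.inl (Z, A)), Symbol.terminal b :: ns.map Symbol.nonterminal⟩)}

lemma RuleSet_gnf {r : ContextFreeRule T (NTG g)} (h : r ∈ RuleSet g) :
    ∃ (a : T) (ns : List (NTG g)), r.output = Symbol.terminal a :: ns.map Symbol.nonterminal := by
  rcases h with ⟨a, -, rfl⟩ | ⟨A, -, a, ns, -, rfl⟩ | ⟨Z, -, A, -, b, ns, -, rfl⟩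
  · exact ⟨a, [], rfl⟩
  · exact ⟨a, ns, rfl⟩
  · exact ⟨b, ns, rfl⟩

lemma nt_map_inj {ns ns' : List (NTG g)}
    (h : ns.map (Symbol.nonterminal : NTG g → Symbol T (NTG g)) = ns'.map Symbol.nonterminal) :
    ns = ns' := by
  refine List.map_injective_iff.mpr ?_ h
  intro x y hxy; injection hxy

/-- The key equation: the semantics satisfies the fixed-point equations of the rule set. -/
lemma sem_eq (n : NTG g) (w : List T) :
    w ∈ sem g n ↔ ∃ r ∈ RuleSet g, r.input = n ∧ ∃ (a : T) (ns : List (NTG g)) (u : List T),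
      r.output = Symbol.terminal a :: ns.map Symbol.nonterminal ∧
      Parts g ns u ∧ w = a :: u := by
  constructor
  · intro hw
    match n with
    | Sum.inr (Sum.inr a) =>
        obtain ⟨rfl, hmem⟩ := hw
        exact ⟨⟨Sum.inr (Sum.inr a), [Symbol.terminal a]⟩, Or.inl ⟨a, hmem, rfl⟩, rfl,
          a, [], [], rfl, PartsF.nil, rfl⟩
    | Sum.inl A =>
        obtain ⟨hne, hd⟩ := hw
        obtain ⟨a, ns, u, hB, hp, rfl⟩ := BShape_complete hne hd
        exact ⟨⟨Sum.inl A, Symbol.terminal a :: ns.map Symbol.nonterminal⟩,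
          Or.inr (Or.inl ⟨A, occ_of_derives hne hd, a, ns, hB, rfl⟩), rfl,
          a, ns, u, rfl, hp, rfl⟩
    | Sum.inr (Sum.inl (Z, A)) =>
        obtain ⟨hne, hsp⟩ := hw
        obtain ⟨hA, hZ⟩ := hsp.occ_left hne
        obtain ⟨b, ns, u, hS, hp, rfl⟩ := SpShape_complete hsp hne
        exact ⟨⟨Sum.inr (Sum.inl (Z, A)), Symbol.terminal b :: ns.map Symbol.nonterminal⟩,
          Or.inr (Or.inr ⟨Z, hZ, A, hA, b, ns, hS, rfl⟩), rfl, b, ns, u, rfl, hp, rfl⟩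
  · rintro ⟨r, hr, rfl, a, ns, u, hout, hp, rfl⟩
    rcases hr with ⟨a', ha', rfl⟩ | ⟨A, hA, a', ns', hB, rfl⟩ | ⟨Z, hZ, A, hA, b', ns', hS, rfl⟩
    · simp only [List.cons.injEq] at hout
      obtain ⟨ha, hns⟩ := hout
      have ha : a' = a := by injection ha
      have hns : ns = [] := by
        cases ns with
        | nil => rfl
        | cons x xs => exact absurd hns.symm (by simp)
      subst ha hns
      have : u = [] := hp.nil_eq
      subst this
      exact ⟨rfl, ha'⟩
    · simp only [List.cons.injEq] at hout
      obtain ⟨ha, hns⟩ := hout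
      have ha : a' = a := by injection ha
      have hns : ns' = ns := nt_map_inj hns
      subst ha hns
      exact ⟨by simp, BShape_sound hB hp⟩
    · simp only [List.cons.injEq] at hout
      obtain ⟨ha, hns⟩ := hout
      have ha : b' = a := by injection ha
      have hns : ns' = ns := nt_map_inj hns
      subst ha hns
      exact ⟨by simp, SpShape_sound hS hp⟩

/-! ### Generic lemma: a GNF grammar with a solution of its equations generates it -/

section Generic

variable {g' : ContextFreeGrammar.{0} T} {sm : g'.NT → Set (List T)}

lemma parts_derives {L : ℕ} {ns : List g'.NT} {u : List T}
    (hp : PartsF sm ns u)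
    (hIH : ∀ n' w', w' ∈ sm n' → w'.length < L → g'.Derives [Symbol.nonterminal n'] (tm g' w'))
    (hu : u.length < L) :
    g'.Derives (ns.map Symbol.nonterminal) (tm g' u) := by
  induction hp with
  | nil => exact Derives.refl []
  | @cons n' ns' w u' hw _ ih =>
      have h1 : g'.Derives [Symbol.nonterminal n'] (tm g' w) :=
        hIH n' w hw (lt_of_le_of_lt (by simp) hu)
      have h2 : g'.Derives (ns'.map Symbol.nonterminal) (tm g' u') :=
        ih (lt_of_le_of_lt (by simp) hu)
      have := (h1.append_right (ns'.map Symbol.nonterminal)).trans (h2.append_left (tm g' w))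
      simpa [tm] using this

lemma derives_parts {ns : List g'.NT} {u : List T}
    (h : g'.Derives (ns.map Symbol.nonterminal) (tm g' u)) :
    PartsF (fun n' => {w' | g'.Derives [Symbol.nonterminal n'] (tm g' w')}) ns u := by
  induction ns generalizing u with
  | nil =>
      have : tm g' u = [] := derives_self_of_terminal (w := []) (by simpa using h)
      have : u = [] := by simpa [tm] using this
      subst this
      exact PartsF.nil
  | cons n' ns ih =>
      have h' : g'.Derives ([Symbol.nonterminal n'] ++ ns.map Symbol.nonterminal) (tm g' u) := by
        simpa using h
      obtain ⟨u₁, u₂, rfl, d1, d2⟩ := derives_append_split h'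
      exact PartsF.cons d1 (ih d2)

lemma partsF_mono {P Q : g'.NT → Set (List T)} {ns : List g'.NT} {u : List T}
    (hp : PartsF P ns u) (h : ∀ n' w', w' ∈ P n' → w'.length ≤ u.length → w' ∈ Q n') :
    PartsF Q ns u := by
  induction hp with
  | nil => exact PartsF.nil
  | @cons n' ns' w u' hw _ ih =>
      exact PartsF.cons (h n' w hw (by simp))
        (ih (fun n'' w'' hw'' hl => h n'' w'' hw'' (le_trans hl (by simp))))

theorem generic_gnf
    (hGNF : ∀ r ∈ g'.rules, ∃ (a : T) (ns : List g'.NT),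
      r.output = Symbol.terminal a :: ns.map Symbol.nonterminal)
    (heq : ∀ n w, w ∈ sm n ↔ ∃ r ∈ g'.rules, r.input = n ∧
      ∃ (a : T) (ns : List g'.NT) (u : List T),
      r.output = Symbol.terminal a :: ns.map Symbol.nonterminal ∧
      PartsF sm ns u ∧ w = a :: u) :
    ∀ (w : List T) (n : g'.NT),
      g'.Derives [Symbol.nonterminal n] (tm g' w) ↔ w ∈ sm n := by
  suffices H : ∀ (L : ℕ) (w : List T), w.length < L → ∀ n,
      (g'.Derives [Symbol.nonterminal n] (tm g' w) ↔ w ∈ sm n) by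
    intro w n
    exact H (w.length + 1) w (Nat.lt_succ_self _) n
  intro L
  induction L with
  | zero => intro w hw; exact absurd hw (by simp)
  | succ L ih =>
      intro w hw n
      constructor
      · intro hd
        rcases hd.eq_or_head with heq | ⟨z, hp, hd2⟩
        · exfalso
          cases w with
          | nil => simp [tm] at heq
          | cons b w' => injection heq with h1 h2; cases h1
        · obtain ⟨β, hmem, hzeq⟩ := produces_single_nt hp
          rw [hzeq] at hd2
          obtain ⟨a, ns, hout⟩ := hGNF ⟨n, β⟩ hmem
          simp only at hout
          rw [hout] at hd2
          have hd3 : g'.Derives ([Symbol.terminal a] ++ ns.map Symbol.nonterminal)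
              (tm g' w) := by simpa using hd2
          obtain ⟨w₁, w₂, rfl, d1, d2⟩ := derives_append_split hd3
          have hw₁ : w₁ = [a] := tm_inj
            (derives_self_of_terminal (w := [a]) (by simpa using d1))
          subst hw₁
          have hw₂ : w₂.length < L := by
            simp only [List.length_append, List.length_cons] at hw
            omega
          have hparts : PartsF sm ns w₂ :=
            partsF_mono (derives_parts d2) (fun n' w' hw' hl =>
              (ih w' (lt_of_le_of_lt hl hw₂) n').mp hw')
          exact (heq n _).mpr ⟨⟨n, β⟩, hmem, rfl, a, ns, w₂, hout, hparts, rfl⟩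
      · intro hw'
        obtain ⟨r, hmem, hin, a, ns, u, hout, hparts, hweq⟩ := (heq n w).mp hw'
        have hu : u.length < L := by
          rw [hweq] at hw
          simp only [List.length_cons] at hw
          omega
        have h1 : g'.Produces [Symbol.nonterminal n] r.output :=
          ⟨r, hmem, by rw [← hin]; exact ContextFreeRule.Rewrites.input_output⟩
        have h2 : g'.Derives (ns.map Symbol.nonterminal) (tm g' u) :=
          parts_derives hparts (fun n' w' hw'' hl => (ih w' hl n').mpr hw'') hu
        have h3 : g'.Derives r.output (Symbol.terminal a :: tm g' u) := by
          rw [hout]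
          have := h2.append_left [Symbol.terminal a]
          simpa using this
        rw [hweq]
        have := h1.trans_derives h3
        simpa [tm] using this

end Generic
/-! ### Finiteness of the rule set -/

lemma finite_termOcc (g : ContextFreeGrammar.{0} T) : (termOcc g).Finite := by
  have : termOcc g = ⋃ r ∈ (g.rules : Set (ContextFreeRule T g.NT)),
      (Symbol.terminal ⁻¹' {s | s ∈ r.output}) := by
    ext a
    simp [termOcc]
  rw [this]
  exact Set.Finite.biUnion g.rules.finite_toSet (fun r _ =>
    Set.Finite.preimage (Set.injOn_of_injective terminal_injective)
      (r.output.finite_toSet))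

lemma nonterminal_injective :
    Function.Injective (Symbol.nonterminal : g.NT → Symbol T g.NT) := by
  intro a b h; injection h

lemma finite_occ (g : ContextFreeGrammar.{0} T) : (occ g).Finite := by
  have : occ g = {g.initial} ∪ ⋃ r ∈ (g.rules : Set (ContextFreeRule T g.NT)),
      ({r.input} ∪ Symbol.nonterminal ⁻¹' {s | s ∈ r.output}) := by
    ext A
    simp only [occ, Set.mem_setOf_eq, Set.mem_union, Set.mem_singleton_iff, Set.mem_iUnion,
      Set.mem_preimage, Set.mem_setOf_eq, exists_prop]
    constructor
    · rintro (rfl | ⟨r, hr, rfl | hmem⟩)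
      · exact Or.inl rfl
      · exact Or.inr ⟨r, hr, Or.inl rfl⟩
      · exact Or.inr ⟨r, hr, Or.inr hmem⟩
    · rintro (rfl | ⟨r, hr, rfl | hmem⟩)
      · exact Or.inl rfl
      · exact Or.inr ⟨r, hr, Or.inl rfl⟩
      · exact Or.inr ⟨r, hr, Or.inr hmem⟩
  rw [this]
  refine (Set.finite_singleton _).union (Set.Finite.biUnion g.rules.finite_toSet
    (fun r _ => (Set.finite_singleton _).union ?_))
  exact Set.Finite.preimage (Set.injOn_of_injective nonterminal_injective)
    (r.output.finite_toSet)

lemma finite_TR (g : ContextFreeGrammar.{0} T) (γ : List (Symbol T g.NT)) :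
    {ts | TR g γ ts}.Finite := by
  induction γ with
  | nil =>
      refine Set.Finite.subset (Set.finite_singleton []) ?_
      intro ts hts
      cases hts
      rfl
  | cons s γ ih =>
      cases s with
      | terminal a =>
          refine Set.Finite.subset (ih.image (fun ts => Sum.inr (Sum.inr a) :: ts)) ?_
          intro ts hts
          cases hts with
          | term _ hmem htr => exact ⟨_, htr, rfl⟩
      | nonterminal B =>
          refine Set.Finite.subset ((ih.image (fun ts => Sum.inl B :: ts)).union ih) ?_
          intro ts hts
          cases hts with
          | nt _ htr => exact Or.inl ⟨_, htr, rfl⟩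
          | ntNull _ hB htr => exact Or.inr htr

lemma finite_splits {α : Type*} (β : List α) :
    {p : List α × α × List α | β = p.1 ++ p.2.1 :: p.2.2}.Finite := by
  induction β with
  | nil =>
      refine Set.Finite.subset (Set.finite_empty) ?_
      rintro ⟨p1, s, p2⟩ hp
      simp only [Set.mem_setOf_eq] at hp
      exact absurd hp (by simp)
  | cons x β ih =>
      refine Set.Finite.subset ((ih.image (fun p => (x :: p.1, p.2))).insert ([], x, β)) ?_
      rintro ⟨p1, s, p2⟩ hp
      simp only [Set.mem_setOf_eq] at hp
      cases p1 with
      | nil =>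
          simp only [List.nil_append, List.cons.injEq] at hp
          obtain ⟨rfl, rfl⟩ := hp
          exact Set.mem_insert _ _
      | cons y p1' =>
          simp only [List.cons_append, List.cons.injEq] at hp
          obtain ⟨rfl, hp⟩ := hp
          exact Set.mem_insert_of_mem _ ⟨(p1', s, p2), hp, rfl⟩

/-- Candidate set for `BShape` built from a rule, a split and a tail translation. -/
def bcand (g : ContextFreeGrammar.{0} T) (A : g.NT) (r : ContextFreeRule T g.NT)
    (q : List (Symbol T g.NT) × Symbol T g.NT × List (Symbol T g.NT))
    (ts : List (NTG g)) : Set (T × List (NTG g)) :=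
  match q.2.1 with
  | Symbol.terminal a => {(a, ts ++ [Sum.inr (Sum.inl (r.input, A))]), (a, ts)}
  | Symbol.nonterminal _ => ∅

lemma finite_bcand (g : ContextFreeGrammar.{0} T) (A : g.NT) (r : ContextFreeRule T g.NT)
    (q : List (Symbol T g.NT) × Symbol T g.NT × List (Symbol T g.NT))
    (ts : List (NTG g)) : (bcand g A r q ts).Finite := by
  unfold bcand
  match q.2.1 with
  | Symbol.terminal a => exact (Set.finite_singleton _).insert _
  | Symbol.nonterminal _ => exact Set.finite_empty

lemma finite_BShape (g : ContextFreeGrammar.{0} T) (A : g.NT) :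
    {p : T × List (NTG g) | BShape g A p.1 p.2}.Finite := by
  have hbig : (⋃ r ∈ (g.rules : Set (ContextFreeRule T g.NT)),
      ⋃ q ∈ {p : List (Symbol T g.NT) × Symbol T g.NT × List (Symbol T g.NT) |
        r.output = p.1 ++ p.2.1 :: p.2.2},
      ⋃ ts ∈ {ts | TR g q.2.2 ts}, bcand g A r q ts).Finite := by
    refine Set.Finite.biUnion g.rules.finite_toSet (fun r _ => ?_)
    refine Set.Finite.biUnion (finite_splits r.output) (fun q _ => ?_)
    exact Set.Finite.biUnion (finite_TR g q.2.2) (fun ts _ => finite_bcand g A r q ts)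
  refine Set.Finite.subset hbig ?_
  rintro ⟨a, ns⟩ hp
  obtain ⟨X, α, γ, ts, tl, hmem, hα, htr, htl, rfl⟩ := hp
  simp only [Set.mem_iUnion, exists_prop]
  refine ⟨⟨X, α ++ Symbol.terminal a :: γ⟩, hmem, (α, Symbol.terminal a, γ), rfl, ts, htr, ?_⟩
  show (a, ts ++ tl) ∈ bcand g A ⟨X, α ++ Symbol.terminal a :: γ⟩ (α, Symbol.terminal a, γ) ts
  unfold bcand
  rcases htl with rfl | ⟨rfl, -⟩
  · exact Set.mem_insert _ _
  · simp

/-- Candidate set for `FirstShape`. -/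
def fcand (g : ContextFreeGrammar.{0} T)
    (q : List (Symbol T g.NT) × Symbol T g.NT × List (Symbol T g.NT))
    (ts : List (NTG g)) : Set (T × List (NTG g)) :=
  match q.2.1 with
  | Symbol.terminal b => {(b, ts)}
  | Symbol.nonterminal B =>
      (fun p : T × List (NTG g) => (p.1, p.2 ++ ts)) '' {p | BShape g B p.1 p.2}

lemma finite_fcand (g : ContextFreeGrammar.{0} T)
    (q : List (Symbol T g.NT) × Symbol T g.NT × List (Symbol T g.NT))
    (ts : List (NTG g)) : (fcand g q ts).Finite := by
  unfold fcand
  match q.2.1 with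
  | Symbol.terminal b => exact Set.finite_singleton _
  | Symbol.nonterminal B => exact (finite_BShape g B).image _

lemma finite_FirstShape (g : ContextFreeGrammar.{0} T) (γ : List (Symbol T g.NT)) :
    {p : T × List (NTG g) | FirstShape g γ p.1 p.2}.Finite := by
  have hbig : (⋃ q ∈ {p : List (Symbol T g.NT) × Symbol T g.NT × List (Symbol T g.NT) |
      γ = p.1 ++ p.2.1 :: p.2.2}, ⋃ ts ∈ {ts | TR g q.2.2 ts}, fcand g q ts).Finite := by
    refine Set.Finite.biUnion (finite_splits γ) (fun q _ => ?_)
    exact Set.Finite.biUnion (finite_TR g q.2.2) (fun ts _ => finite_fcand g q ts)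
  refine Set.Finite.subset hbig ?_
  rintro ⟨b, ns⟩ hp
  obtain ⟨δ, γ₂, ts, hδ, htr, hc⟩ := hp
  simp only [Set.mem_iUnion, exists_prop]
  rcases hc with ⟨rfl, rfl⟩ | ⟨B, nsB, rfl, hB, rfl⟩
  · exact ⟨(δ, Symbol.terminal b, γ₂), rfl, ns, htr, by simp [fcand]⟩
  · refine ⟨(δ, Symbol.nonterminal B, γ₂), rfl, ts, htr, ?_⟩
    show (b, nsB ++ ts) ∈ fcand g (δ, Symbol.nonterminal B, γ₂) ts
    unfold fcand
    exact ⟨(b, nsB), hB, rfl⟩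

/-- Candidate set for `SpShape`. -/
def scand (g : ContextFreeGrammar.{0} T) (A : g.NT) (r : ContextFreeRule T g.NT)
    (q : List (Symbol T g.NT) × Symbol T g.NT × List (Symbol T g.NT)) :
    Set (T × List (NTG g)) :=
  match q.2.1 with
  | Symbol.terminal _ => ∅
  | Symbol.nonterminal _ =>
      ⋃ p₁ ∈ {p : T × List (NTG g) | FirstShape g q.2.2 p.1 p.2},
        {(p₁.1, p₁.2 ++ [Sum.inr (Sum.inl (r.input, A))]), (p₁.1, p₁.2)}

lemma finite_scand (g : ContextFreeGrammar.{0} T) (A : g.NT) (r : ContextFreeRule T g.NT)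
    (q : List (Symbol T g.NT) × Symbol T g.NT × List (Symbol T g.NT)) :
    (scand g A r q).Finite := by
  unfold scand
  match q.2.1 with
  | Symbol.terminal _ => exact Set.finite_empty
  | Symbol.nonterminal _ =>
      exact Set.Finite.biUnion (finite_FirstShape g q.2.2)
        (fun p₁ _ => (Set.finite_singleton _).insert _)

lemma finite_SpShape (g : ContextFreeGrammar.{0} T) (Z A : g.NT) :
    {p : T × List (NTG g) | SpShape g Z A p.1 p.2}.Finite := by
  have hbig : (⋃ r ∈ (g.rules : Set (ContextFreeRule T g.NT)),
      ⋃ q ∈ {p : List (Symbol T g.NT) × Symbol T g.NT × List (Symbol T g.NT) |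
        r.output = p.1 ++ p.2.1 :: p.2.2}, scand g A r q).Finite := by
    refine Set.Finite.biUnion g.rules.finite_toSet (fun r _ => ?_)
    exact Set.Finite.biUnion (finite_splits r.output) (fun q _ => finite_scand g A r q)
  refine Set.Finite.subset hbig ?_
  rintro ⟨b, ns⟩ hp
  obtain ⟨X, X', α, γ, ns₁, tl, hdown, hmem, hα, hfs, htl, rfl⟩ := hp
  simp only [Set.mem_iUnion, exists_prop]
  refine ⟨⟨X', α ++ Symbol.nonterminal X :: γ⟩, hmem, (α, Symbol.nonterminal X, γ), rfl, ?_⟩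
  show (b, ns₁ ++ tl) ∈ scand g A ⟨X', α ++ Symbol.nonterminal X :: γ⟩
    (α, Symbol.nonterminal X, γ)
  unfold scand
  simp only [Set.mem_iUnion, exists_prop]
  refine ⟨(b, ns₁), hfs, ?_⟩
  rcases htl with rfl | ⟨rfl, -⟩
  · exact Set.mem_insert _ _
  · simp

lemma finite_RuleSet (g : ContextFreeGrammar.{0} T) : (RuleSet g).Finite := by
  have h1 : ((fun a => (⟨Sum.inr (Sum.inr a), [Symbol.terminal a]⟩ :
      ContextFreeRule T (NTG g))) '' termOcc g).Finite := (finite_termOcc g).image _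
  have h2 : (⋃ A ∈ occ g, (fun p : T × List (NTG g) =>
      (⟨Sum.inl A, Symbol.terminal p.1 :: p.2.map Symbol.nonterminal⟩ :
        ContextFreeRule T (NTG g))) '' {p | BShape g A p.1 p.2}).Finite :=
    Set.Finite.biUnion (finite_occ g) (fun A _ => (finite_BShape g A).image _)
  have h3 : (⋃ Z ∈ occ g, ⋃ A ∈ occ g, (fun p : T × List (NTG g) =>
      (⟨Sum.inr (Sum.inl (Z, A)), Symbol.terminal p.1 :: p.2.map Symbol.nonterminal⟩ :
        ContextFreeRule T (NTG g))) '' {p | SpShape g Z A p.1 p.2}).Finite :=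
    Set.Finite.biUnion (finite_occ g) (fun Z _ =>
      Set.Finite.biUnion (finite_occ g) (fun A _ => (finite_SpShape g Z A).image _))
  refine Set.Finite.subset ((h1.union h2).union h3) ?_
  rintro r hr
  rcases hr with ⟨a, ha, rfl⟩ | ⟨A, hA, a, ns, hB, rfl⟩ | ⟨Z, hZ, A, hA, b, ns, hS, rfl⟩
  · exact Or.inl (Or.inl ⟨a, ha, rfl⟩)
  · refine Or.inl (Or.inr ?_)
    simp only [Set.mem_iUnion, exists_prop]
    exact ⟨A, hA, (a, ns), hB, rfl⟩
  · refine Or.inr ?_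
    simp only [Set.mem_iUnion, exists_prop]
    exact ⟨Z, hZ, A, hA, (b, ns), hS, rfl⟩
/-! ### The Greibach grammar and the main theorem -/

/-- The Greibach normal form grammar for `g`. -/
noncomputable def GG (g : ContextFreeGrammar.{0} T) : ContextFreeGrammar.{0} T :=
  ⟨NTG g, Sum.inl g.initial, (finite_RuleSet g).toFinset⟩

lemma mem_GG_rules {r : ContextFreeRule T (NTG g)} :
    r ∈ (GG g).rules ↔ r ∈ RuleSet g :=
  (finite_RuleSet g).mem_toFinset

lemma GG_derives_iff (g : ContextFreeGrammar.{0} T) (w : List T) (n : NTG g) :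
    (GG g).Derives [Symbol.nonterminal n] (tm (GG g) w) ↔ w ∈ sem g n := by
  refine generic_gnf (g' := GG g) (sm := sem g) ?_ ?_ w n
  · intro r hr
    exact RuleSet_gnf (mem_GG_rules.mp hr)
  · intro n' w'
    rw [sem_eq n' w']
    constructor
    · rintro ⟨r, hr, hrest⟩
      exact ⟨r, mem_GG_rules.mpr hr, hrest⟩
    · rintro ⟨r, hr, hrest⟩
      exact ⟨r, mem_GG_rules.mp hr, hrest⟩

theorem GG_language (g : ContextFreeGrammar.{0} T) :
    (GG g).language = g.language \ {([] : List T)} := by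
  ext w
  have h := GG_derives_iff g w (Sum.inl g.initial)
  constructor
  · intro hw
    have : w ∈ sem g (Sum.inl g.initial) := h.mp hw
    obtain ⟨hne, hd⟩ := this
    exact ⟨hd, hne⟩
  · rintro ⟨hd, hne⟩
    exact h.mpr ⟨hne, hd⟩

end Greibach

/-- **Greibach normal form.**
For every context-free grammar `G` there exists a context-free grammar `G'` in Greibach
normal form — the right-hand side of every production of `G'` is a terminal character
followed by a (possibly empty) string of nonterminals — such that `L(G') = L(G) \ {ε}`. -/
theorem greibach_normal_form {T : Type} (G : ContextFreeGrammar.{0} T) :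
    ∃ G' : ContextFreeGrammar.{0} T,
      (∀ r ∈ G'.rules, ∃ (a : T) (l : List G'.NT),
          r.output = Symbol.terminal a :: l.map Symbol.nonterminal) ∧
      G'.language = G.language \ {([] : List T)} := by
  refine ⟨Greibach.GG G, ?_, Greibach.GG_language G⟩
  intro r hr
  exact Greibach.RuleSet_gnf (Greibach.mem_GG_rules.mp hr)
end

section
/- Double Greibach normal form: for every context-free grammar G there exists a context-free grammar G' in which the first and the last character of the right-hand side of every production are terminal characters, such that L(G') = L(G) \ {ε}. -/
namespace DGNF

open ContextFreeGrammar Symbol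

variable {T : Type} {g : ContextFreeGrammar.{0} T}

/-- Big-step (parse-forest) semantics: `YS g α w` means the symbol string `α`
derives the terminal word `w`. -/
inductive YS (g : ContextFreeGrammar.{0} T) : List (Symbol T g.NT) → List T → Prop
  | nil : YS g [] []
  | ter {α w} (a : T) (h : YS g α w) : YS g (Symbol.terminal a :: α) (a :: w)
  | nt {α w₁ w₂} (r : ContextFreeRule T g.NT) (hr : r ∈ g.rules)
      (h₁ : YS g r.output w₁) (h₂ : YS g α w₂) :
      YS g (Symbol.nonterminal r.input :: α) (w₁ ++ w₂)

lemma YS.append {α β w₁ w₂} (h₁ : YS g α w₁) (h₂ : YS g β w₂) :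
    YS g (α ++ β) (w₁ ++ w₂) := by
  induction h₁ with
  | nil => simpa
  | ter a _ ih => exact YS.ter a ih
  | nt r hr hout _ ih₁ ih₂ => rw [List.append_assoc]; exact YS.nt r hr hout ih₂

lemma YS.split {α β w} (h : YS g (α ++ β) w) :
    ∃ w₁ w₂, w = w₁ ++ w₂ ∧ YS g α w₁ ∧ YS g β w₂ := by
  induction α generalizing w with
  | nil => exact ⟨[], w, rfl, YS.nil, by simpa using h⟩
  | cons s α ih =>
    rcases h with _ | ⟨a, h⟩ | ⟨r, hr, h₁, h₂⟩
    · rcases ih h with ⟨w₁, w₂, rfl, hα, hβ⟩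
      exact ⟨a :: w₁, w₂, rfl, YS.ter a hα, hβ⟩
    · rcases ih h₂ with ⟨w₁, w₂, rfl, hα, hβ⟩
      exact ⟨_ ++ w₁, w₂, by simp, YS.nt r hr h₁ hα, hβ⟩

lemma YS.of_terminals (w : List T) : YS g (w.map Symbol.terminal) w := by
  induction w with
  | nil => exact YS.nil
  | cons a w ih => exact YS.ter a ih

lemma YS.single {s w} (h : YS g [s] w) :
    (∃ a, s = Symbol.terminal a ∧ w = [a]) ∨
    (∃ r : ContextFreeRule T g.NT, r ∈ g.rules ∧ s = Symbol.nonterminal r.input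
      ∧ YS g r.output w) := by
  rcases h with _ | ⟨a, h⟩ | ⟨r, hr, h₁, h₂⟩
  · cases h; exact Or.inl ⟨_, rfl, rfl⟩
  · cases h₂; exact Or.inr ⟨r, hr, rfl, by simpa using h₁⟩

lemma YS.toDerives {α w} (h : YS g α w) : g.Derives α (w.map Symbol.terminal) := by
  induction h with
  | nil => rfl
  | ter a h ih =>
    simpa using ih.append_left [Symbol.terminal a]
  | @nt α w₁ w₂ r hr h₁ h₂ ih₁ ih₂ =>
    have step : g.Derives [Symbol.nonterminal r.input] r.output :=
      (Produces.single ⟨r, hr, ContextFreeRule.Rewrites.input_output⟩)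
    have d1 : g.Derives (Symbol.nonterminal r.input :: α) (r.output ++ α) := by
      simpa using step.append_right α
    have d2 : g.Derives (r.output ++ α) (w₁.map Symbol.terminal ++ α) :=
      ih₁.append_right α
    have d3 : g.Derives (w₁.map Symbol.terminal ++ α)
        (w₁.map Symbol.terminal ++ w₂.map Symbol.terminal) := ih₂.append_left _
    simpa using (d1.trans d2).trans d3

lemma YS.ofDerives {α w} (h : g.Derives α (w.map Symbol.terminal)) : YS g α w := by
  induction h using Relation.ReflTransGen.head_induction_on with
  | refl => exact YS.of_terminals w
  | head hp _ ih =>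
    rcases hp with ⟨r, hr, hrw⟩
    rcases hrw.exists_parts with ⟨p, q, rfl, rfl⟩
    rcases YS.split ih with ⟨w₁, w₂, rfl, h', hq⟩
    rcases YS.split h' with ⟨w₃, w₄, rfl, hp', hout⟩
    have : YS g ([Symbol.nonterminal r.input] ++ q) (w₄ ++ w₂) := by
      simpa using YS.nt r hr hout hq
    simpa [List.append_assoc] using hp'.append this

/-! ### Auxiliary generic lemmas -/

lemma YS.length_ge (hg : ∀ r ∈ g.rules, r.output ≠ []) {α w} (h : YS g α w) :
    α.length ≤ w.length := by
  induction h with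
  | nil => simp
  | ter a _ ih => simpa using Nat.succ_le_succ ih
  | nt r hr h₁ h₂ ih₁ ih₂ =>
    have : 1 ≤ _ := Nat.le_trans (Nat.one_le_iff_ne_zero.mpr (by
      simpa using hg r hr)) ih₁
    simp only [List.length_cons, List.length_append]
    omega

lemma YS.ne_nil (hg : ∀ r ∈ g.rules, r.output ≠ []) {α w} (h : YS g α w)
    (hα : α ≠ []) : w ≠ [] := by
  have := YS.length_ge hg h
  intro hw
  subst hw
  simp at this
  exact hα this

lemma mem_language_iff_ys {w : List T} : w ∈ g.language ↔ YS g [Symbol.nonterminal g.initial] w :=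
  ⟨fun h => YS.ofDerives h, fun h => YS.toDerives h⟩

/-- parallel composition of derivations -/
lemma derives_flat {α : List (Symbol T g.NT)} {γs : List (List (Symbol T g.NT))}
    (h : List.Forall₂ (fun s γ => g.Derives [s] γ) α γs) :
    g.Derives α γs.flatten := by
  induction h with
  | nil => rfl
  | @cons s γ α' γs' h₁ _ ih =>
    have d1 : g.Derives (s :: α') (γ ++ α') := by simpa using h₁.append_right α'
    have d2 : g.Derives (γ ++ α') (γ ++ γs'.flatten) := ih.append_left γ
    simpa using d1.trans d2


/-! ### Stage 1: transformation to Chomsky-like normal form.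
Nonterminals of `cnf G` are either symbols of `G` (`Sum.inl`) or
nonempty lists of symbols of `G` (`Sum.inr`, "chains"). -/

section Stage1

attribute [local instance] Classical.propDecidable

variable (G : ContextFreeGrammar.{0} T)

/-- symbols of `G` -/
abbrev Sym (G : ContextFreeGrammar.{0} T) := Symbol T G.NT

/-- nonterminals of the CNF grammar -/
abbrev NH (G : ContextFreeGrammar.{0} T) := Sym G ⊕ List (Sym G)

/-- terminals occurring in `G` -/
noncomputable def TsG : List T :=
  G.rules.toList.flatMap fun r => r.output.filterMap fun s =>
    match s with
    | Symbol.terminal a => some a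
    | Symbol.nonterminal _ => none

/-- symbols occurring in `G` -/
noncomputable def SymsG : List (Sym G) :=
  Symbol.nonterminal G.initial ::
    G.rules.toList.flatMap fun r => Symbol.nonterminal r.input :: r.output

/-- candidate chains: sublists of outputs of rules of `G` -/
noncomputable def SubCands : List (List (Sym G)) :=
  G.rules.toList.flatMap fun r => r.output.sublists

/-- a chain (presumed nonempty) as a symbol of the CNF grammar -/
def pack : List (Sym G) → Symbol T (NH G)
  | [s] => Symbol.nonterminal (Sum.inl s)
  | σ => Symbol.nonterminal (Sum.inr σ)

/-- the output of a chain rule -/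
def binOut : List (Sym G) → List (Symbol T (NH G))
  | (s :: rest) => [Symbol.nonterminal (Sum.inl s), pack G rest]
  | [] => []

/-- the CNF grammar -/
@[reducible] noncomputable def cnf : ContextFreeGrammar.{0} T where
  NT := NH G
  initial := Sum.inl (Symbol.nonterminal G.initial)
  rules :=
    ((SymsG G).flatMap fun s => (TsG G).filterMap fun a =>
      if G.Derives [s] [Symbol.terminal a]
        then some ⟨Sum.inl s, [Symbol.terminal a]⟩ else none).toFinset ∪
    ((SymsG G).flatMap fun s => (SubCands G).filterMap fun σ =>
      if 2 ≤ σ.length ∧ G.Derives [s] σ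
        then some ⟨Sum.inl s, binOut G σ⟩ else none).toFinset ∪
    ((SubCands G).filterMap fun σ =>
      if 2 ≤ σ.length then some ⟨Sum.inr σ, binOut G σ⟩ else none).toFinset

/-- specification of the rules of `cnf G` -/
def SpecH (r : ContextFreeRule T (NH G)) : Prop :=
  (∃ s a, s ∈ SymsG G ∧ a ∈ TsG G ∧ G.Derives [s] [Symbol.terminal a] ∧
    r = ⟨Sum.inl s, [Symbol.terminal a]⟩) ∨
  (∃ s σ, s ∈ SymsG G ∧ σ ∈ SubCands G ∧ 2 ≤ σ.length ∧ G.Derives [s] σ ∧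
    r = ⟨Sum.inl s, binOut G σ⟩) ∨
  (∃ σ, σ ∈ SubCands G ∧ 2 ≤ σ.length ∧ r = ⟨Sum.inr σ, binOut G σ⟩)

lemma mem_cnf_rules {r : ContextFreeRule T (NH G)} :
    r ∈ (cnf G).rules ↔ SpecH G r := by
  simp only [cnf, Finset.mem_union, List.mem_toFinset, List.mem_flatMap,
    List.mem_filterMap, SpecH]
  constructor
  · rintro ((⟨s, hs, a, ha, h⟩ | ⟨s, hs, σ, hσ, h⟩) | ⟨σ, hσ, h⟩)
    · split at h
      · exact Or.inl ⟨s, a, hs, ha, by simp_all, by simp_all⟩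
      · simp at h
    · split at h
      · exact Or.inr (Or.inl ⟨s, σ, hs, hσ, by tauto, by tauto, by simp_all⟩)
      · simp at h
    · split at h
      · exact Or.inr (Or.inr ⟨σ, hσ, by assumption, by simp_all⟩)
      · simp at h
  · rintro (⟨s, a, hs, ha, hd, rfl⟩ | ⟨s, σ, hs, hσ, hl, hd, rfl⟩ | ⟨σ, hσ, hl, rfl⟩)
    · exact Or.inl (Or.inl ⟨s, hs, a, ha, by simp [hd]⟩)
    · exact Or.inl (Or.inr ⟨s, hs, σ, hσ, by simp [hl, hd]⟩)
    · exact Or.inr ⟨σ, hσ, by simp [hl]⟩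

lemma cnf_shape {r : ContextFreeRule T (NH G)} (hr : r ∈ (cnf G).rules) :
    (∃ a, r.output = [Symbol.terminal a]) ∨
    (∃ B C, r.output = [Symbol.nonterminal B, Symbol.nonterminal C]) := by
  rcases (mem_cnf_rules G).mp hr with ⟨s, a, _, _, _, rfl⟩ | ⟨s, σ, _, _, hl, _, rfl⟩
    | ⟨σ, _, hl, rfl⟩
  · exact Or.inl ⟨a, rfl⟩
  all_goals {
    right
    match σ, hl with
    | (s₁ :: s₂ :: rest), _ =>
      cases rest with
      | nil => exact ⟨Sum.inl s₁, Sum.inl s₂, by simp [binOut, pack]⟩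
      | cons s₃ r' =>
          exact ⟨Sum.inl s₁, Sum.inr (s₂ :: s₃ :: r'), by simp [binOut, pack]⟩
  }


lemma mem_SubCands {σ : List (Sym G)} :
    σ ∈ SubCands G ↔ ∃ r ∈ G.rules, σ.Sublist r.output := by
  simp [SubCands, List.mem_flatMap, List.mem_sublists, Finset.mem_toList]

/-! #### Semantics of `cnf G` nonterminals -/

/-- semantics of symbol-type nonterminals -/
def SemS (s : Sym G) (z : List T) : Prop :=
  z ≠ [] ∧ G.Derives [s] (z.map Symbol.terminal)

/-- semantics of chain-type nonterminals -/
def PackSem (σ : List (Sym G)) (z : List T) : Prop :=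
  ∃ ws, z = ws.flatten ∧ List.Forall₂ (SemS G) σ ws

/-- semantics of nonterminals of `cnf G` -/
def SemH : NH G → List T → Prop
  | Sum.inl s => SemS G s
  | Sum.inr σ => PackSem G σ

/-- semantics of symbols of `cnf G` -/
def SemSym : Symbol T (NH G) → List T → Prop
  | Symbol.terminal a => fun z => z = [a]
  | Symbol.nonterminal n => SemH G n

lemma SemSym.pack {σ : List (Sym G)} {z : List T} (hne : σ ≠ [])
    (h : SemSym G (pack G σ) z) : PackSem G σ z := by
  match σ, hne with
  | [s], _ => exact ⟨[z], by simp, by simpa using (show SemS G s z from h)⟩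
  | (s₁ :: s₂ :: rest), _ => exact h

lemma PackSem.derives {σ : List (Sym G)} {z : List T} (h : PackSem G σ z) :
    G.Derives σ (z.map Symbol.terminal) := by
  obtain ⟨ws, rfl, hf⟩ := h
  rw [List.map_flatten]
  apply derives_flat
  rw [List.forall₂_map_right_iff]
  exact hf.imp fun _ _ h => h.2

lemma PackSem.ne_nil {σ : List (Sym G)} {z : List T} (h : PackSem G σ z) (hne : σ ≠ []) :
    z ≠ [] := by
  obtain ⟨ws, rfl, hf⟩ := h
  match σ, hne, hf with
  | (s :: σ'), _, List.Forall₂.cons h₁ _ => simp [h₁.1]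

set_option maxHeartbeats 800000 in
lemma cnf_sound {α : List (Symbol T (cnf G).NT)} {z : List T} (h : YS (cnf G) α z) :
    ∃ ws, z = ws.flatten ∧ List.Forall₂ (SemSym G) α ws := by
  induction h with
  | nil => exact ⟨[], by simp⟩
  | ter a _ ih =>
    obtain ⟨ws, rfl, hf⟩ := ih
    exact ⟨[a] :: ws, by simp, List.Forall₂.cons rfl hf⟩
  | @nt α w₁ w₂ r hr h₁ h₂ ih₁ ih₂ =>
    obtain ⟨ws₂, rfl, hf₂⟩ := ih₂
    obtain ⟨ws₁, hw₁, hf₁⟩ := ih₁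
    suffices hsem : SemH G r.input w₁ by
      exact ⟨w₁ :: ws₂, by simp, List.Forall₂.cons hsem hf₂⟩
    rcases (mem_cnf_rules G).mp hr with ⟨s, a, hs, ha, hd, rfl⟩
      | ⟨s, σ, hs, hσ, hl, hd, rfl⟩ | ⟨σ, hσ, hl, rfl⟩
    · -- terminal rule
      simp only at hf₁
      match ws₁, hf₁ with
      | [z], List.Forall₂.cons h₁' List.Forall₂.nil =>
        simp only [SemSym] at h₁'
        subst h₁'
        simp only [List.flatten] at hw₁
        subst hw₁
        exact ⟨by simp, by simpa using hd⟩
    · -- binary rule into chain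
      match σ, hl with
      | (s₀ :: rest), hl2 =>
        have hf₁ : List.Forall₂ (SemSym G)
            [Symbol.nonterminal (Sum.inl s₀), pack G rest] ws₁ := by
          simpa [binOut] using hf₁
        match ws₁, hf₁ with
        | [z₁, z₂], List.Forall₂.cons h₁' (List.Forall₂.cons h₂' List.Forall₂.nil) =>
          have hrest : rest ≠ [] := by
            rintro rfl; norm_num at hl2
          have hps : PackSem G (s₀ :: rest) w₁ := by
            obtain ⟨ws', rfl, hf'⟩ := SemSym.pack G hrest h₂'
            exact ⟨z₁ :: ws', by simpa using hw₁, List.Forall₂.cons h₁' hf'⟩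
          refine ⟨hps.ne_nil G (by simp), ?_⟩
          exact hd.trans hps.derives
    · -- chain rule
      match σ, hl with
      | (s₀ :: rest), hl2 =>
        have hf₁ : List.Forall₂ (SemSym G)
            [Symbol.nonterminal (Sum.inl s₀), pack G rest] ws₁ := by
          simpa [binOut] using hf₁
        match ws₁, hf₁ with
        | [z₁, z₂], List.Forall₂.cons h₁' (List.Forall₂.cons h₂' List.Forall₂.nil) =>
          have hrest : rest ≠ [] := by
            rintro rfl; norm_num at hl2
          obtain ⟨ws', rfl, hf'⟩ := SemSym.pack G hrest h₂'
          exact ⟨z₁ :: ws', by simpa using hw₁, List.Forall₂.cons h₁' hf'⟩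


/-! #### Completeness of `cnf G` -/

/-- symbols usable in the grammar -/
def SymUse (s : Sym G) : Prop :=
  s = Symbol.nonterminal G.initial ∨ ∃ r ∈ G.rules, s ∈ r.output

lemma SymUse.mem_SymsG {s : Sym G} (h : SymUse G s) : s ∈ SymsG G := by
  rcases h with rfl | ⟨r, hr, hs⟩
  · simp [SymsG]
  · simp only [SymsG, List.mem_cons, List.mem_flatMap, Finset.mem_toList]
    exact Or.inr ⟨r, hr, Or.inr hs⟩

lemma SymUse.ter_mem {a : T} (h : SymUse G (Symbol.terminal a)) : a ∈ TsG G := by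
  rcases h with h | ⟨r, hr, hs⟩
  · simp at h
  · simp only [TsG, List.mem_flatMap, Finset.mem_toList, List.mem_filterMap]
    exact ⟨r, hr, Symbol.terminal a, hs, rfl⟩

/-- the claim proved for each chunk of a derivation -/
def SymClaim (s : Sym G) (z : List T) : Prop :=
  (z = [] ∧ G.Derives [s] []) ∨
  (z ≠ [] ∧ (∀ a, s = Symbol.terminal a → z = [a]) ∧
    ∀ s', SymUse G s' → SymUse G s → G.Derives [s'] [s] →
      YS (cnf G) [Symbol.nonterminal (Sum.inl s')] z)

lemma claims_to_ys {σ : List (Sym G)} {zs : List (List T)}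
    (hu : ∀ s ∈ σ, SymUse G s)
    (h : List.Forall₂ (fun s z => z ≠ [] ∧ SymClaim G s z) σ zs) :
    List.Forall₂ (fun (s : Sym G) z =>
      z ≠ [] ∧ YS (cnf G) [Symbol.nonterminal (Sum.inl s)] z) σ zs := by
  induction h with
  | nil => exact List.Forall₂.nil
  | @cons s z σ' zs' h₁ _ ih =>
    have hus : SymUse G s := hu s (by simp)
    refine List.Forall₂.cons ⟨h₁.1, ?_⟩ (ih fun s hs => hu s (by simp [hs]))
    rcases h₁.2 with ⟨rfl, _⟩ | ⟨_, _, hys⟩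
    · exact absurd rfl h₁.1
    · exact hys s hus hus (by rfl)

lemma ys_chain {σ : List (Sym G)} {ws : List (List T)}
    (hsub : ∃ r ∈ G.rules, σ.Sublist r.output)
    (h : List.Forall₂ (fun (s : Sym G) z =>
      z ≠ [] ∧ YS (cnf G) [Symbol.nonterminal (Sum.inl s)] z) σ ws)
    (hne : σ ≠ []) :
    YS (cnf G) [pack G σ] ws.flatten := by
  induction h with
  | nil => exact absurd rfl hne
  | @cons s z σ' ws' h₁ h₂ ih =>
    rcases eq_or_ne σ' [] with rfl | hσ'
    · cases h₂
      simpa [pack] using h₁.2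
    · have hrule : (⟨Sum.inr (s :: σ'), binOut G (s :: σ')⟩ :
          ContextFreeRule T (NH G)) ∈ (cnf G).rules := by
        refine (mem_cnf_rules G).mpr (Or.inr (Or.inr ⟨s :: σ', ?_, ?_, rfl⟩))
        · exact (mem_SubCands G).mpr hsub
        · match σ', hσ' with
          | (s' :: σ''), _ => simp
      have hout : YS (cnf G) (binOut G (s :: σ')) (z ++ ws'.flatten) := by
        have h2 : YS (cnf G) [pack G σ'] ws'.flatten := by
          refine ih ?_ hσ'
          obtain ⟨r, hr, hsb⟩ := hsub
          exact ⟨r, hr, (List.sublist_cons_self s σ').trans hsb⟩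
        have : YS (cnf G) ([Symbol.nonterminal (Sum.inl s)] ++ [pack G σ'])
            (z ++ ws'.flatten) := h₁.2.append h2
        simpa [binOut] using this
      have := YS.nt (g := cnf G) ⟨Sum.inr (s :: σ'), binOut G (s :: σ')⟩ hrule hout YS.nil
      have hp : pack G (s :: σ') = Symbol.nonterminal (Sum.inr (s :: σ')) := by
        match σ', hσ' with
        | (s' :: σ''), _ => simp [pack]
      rw [hp]
      simpa using this

lemma chunks_cases {α : List (Sym G)} {ws : List (List T)}
    (h : List.Forall₂ (SymClaim G) α ws) :
    (ws.flatten = [] ∧ G.Derives α []) ∨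
    (∃ s₀, s₀ ∈ α ∧ ws.flatten ≠ [] ∧ SymClaim G s₀ ws.flatten ∧ G.Derives α [s₀]) ∨
    (∃ σ zs, σ.Sublist α ∧ 2 ≤ σ.length ∧ G.Derives α σ ∧ ws.flatten = zs.flatten ∧
      List.Forall₂ (fun s z => z ≠ [] ∧ SymClaim G s z) σ zs) := by
  induction h with
  | nil => exact Or.inl ⟨rfl, by rfl⟩
  | @cons s z α' ws' h₁ h₂ ih =>
    have hder : ∀ {γ : List (Sym G)} (d1 : G.Derives [s] γ) {δ}
        (d2 : G.Derives α' δ), G.Derives (s :: α') (γ ++ δ) := by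
      intro γ d1 δ d2
      have e1 : G.Derives ([s] ++ α') (γ ++ α') := d1.append_right α'
      exact (e1.trans (d2.append_left γ))
    rcases eq_or_ne z [] with rfl | hz
    · -- this chunk is empty
      have hd1 : G.Derives [s] [] := by
        rcases h₁ with ⟨_, hd⟩ | ⟨hne, _⟩
        · exact hd
        · exact absurd rfl hne
      rcases ih with ⟨he, hd⟩ | ⟨s₀, hmem, hne, hc, hd⟩ | ⟨σ, zs, hschain⟩
      · exact Or.inl ⟨by simpa using he, by simpa using hder hd1 hd⟩
      · exact Or.inr (Or.inl ⟨s₀, by simp [hmem], by simpa using hne,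
          by simpa using hc, by simpa using hder hd1 hd⟩)
      · exact Or.inr (Or.inr ⟨σ, zs, hschain.1.trans (List.sublist_cons_self s α'),
          hschain.2.1, by simpa using hder hd1 hschain.2.2.1,
          by simpa using hschain.2.2.2.1, hschain.2.2.2.2⟩)
    · -- this chunk is nonempty
      rcases ih with ⟨he, hd⟩ | ⟨s₀, hmem, hne, hc, hd⟩ | ⟨σ, zs, hsb, hl, hd, hfe, hf⟩
      · refine Or.inr (Or.inl ⟨s, by simp, by simpa [he] using hz, ?_,
          by simpa using hder (by rfl) hd⟩)
        simpa [he] using h₁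
      · refine Or.inr (Or.inr ⟨[s, s₀], [z, ws'.flatten], ?_, by simp,
          by exact hder (by rfl) hd, by simp, ?_⟩)
        · refine List.cons_sublist_cons.mpr ?_
          exact List.singleton_sublist.mpr hmem
        · exact List.Forall₂.cons ⟨hz, h₁⟩ (List.Forall₂.cons ⟨hne, hc⟩ List.Forall₂.nil)
      · refine Or.inr (Or.inr ⟨s :: σ, z :: zs, List.cons_sublist_cons.mpr hsb,
          by simp; omega, by exact hder (by rfl) hd, by simp [hfe], ?_⟩)
        exact List.Forall₂.cons ⟨hz, h₁⟩ hf


lemma produces_rule {r : ContextFreeRule T G.NT} (hr : r ∈ G.rules) :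
    G.Produces [Symbol.nonterminal r.input] r.output :=
  ⟨r, hr, ContextFreeRule.Rewrites.input_output⟩

set_option maxHeartbeats 1000000 in
lemma cnf_complete {α : List (Sym G)} {w : List T} (h : YS G α w) :
    ∃ ws, w = ws.flatten ∧ List.Forall₂ (SymClaim G) α ws := by
  induction h with
  | nil => exact ⟨[], by simp⟩
  | ter a _ ih =>
    obtain ⟨ws, rfl, hf⟩ := ih
    refine ⟨[a] :: ws, by simp, List.Forall₂.cons ?_ hf⟩
    refine Or.inr ⟨by simp, fun a' h => by cases h; rfl, fun s' hsu hsa hds' => ?_⟩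
    have hrule : (⟨Sum.inl s', [Symbol.terminal a]⟩ : ContextFreeRule T (NH G)) ∈
        (cnf G).rules :=
      (mem_cnf_rules G).mpr (Or.inl ⟨s', a, hsu.mem_SymsG G, hsa.ter_mem G, hds', rfl⟩)
    simpa using YS.nt (g := cnf G) _ hrule (YS.ter a YS.nil) YS.nil
  | @nt α w₁ w₂ r hr h₁ h₂ ih₁ ih₂ =>
    obtain ⟨ws₂, rfl, hf₂⟩ := ih₂
    obtain ⟨ws₁, hw₁, hf₁⟩ := ih₁
    subst hw₁
    refine ⟨ws₁.flatten :: ws₂, by simp, List.Forall₂.cons ?_ hf₂⟩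
    rcases chunks_cases G hf₁ with ⟨he, hd⟩ | ⟨s₀, hmem, hne, hc, hd⟩
      | ⟨σ, zs, hsb, hl, hd, hfe, hf⟩
    · exact Or.inl ⟨he, (produces_rule G hr).trans_derives hd⟩
    · refine Or.inr ⟨hne, fun a h => by simp at h, fun s' hsu hsm hds' => ?_⟩
      have D1 : G.Derives [s'] [s₀] :=
        hds'.trans ((produces_rule G hr).trans_derives hd)
      have hus₀ : SymUse G s₀ := Or.inr ⟨r, hr, hmem⟩
      rcases hc with ⟨hz0, _⟩ | ⟨_, hteq, hys⟩
      · exact absurd hz0 hne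
      · cases s₀ with
        | terminal a =>
          have hz : ws₁.flatten = [a] := hteq a rfl
          have hrule : (⟨Sum.inl s', [Symbol.terminal a]⟩ : ContextFreeRule T (NH G)) ∈
              (cnf G).rules :=
            (mem_cnf_rules G).mpr (Or.inl ⟨s', a, hsu.mem_SymsG G,
              (hus₀ : SymUse G (Symbol.terminal a)).ter_mem G, D1, rfl⟩)
          rw [hz]
          simpa using YS.nt (g := cnf G) _ hrule (YS.ter a YS.nil) YS.nil
        | nonterminal B => exact hys s' hsu hus₀ D1
    · have hne : ws₁.flatten ≠ [] := by
        rw [hfe]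
        match σ, zs, hf, hl with
        | (σ₀ :: rest), (z₀ :: zs'), List.Forall₂.cons hz₀ hrest, _ =>
          simp [hz₀.1]
      refine Or.inr ⟨hne, fun a h => by simp at h, fun s' hsu hsm hds' => ?_⟩
      have D2 : G.Derives [s'] σ :=
        hds'.trans ((produces_rule G hr).trans_derives hd)
      have hrule : (⟨Sum.inl s', binOut G σ⟩ : ContextFreeRule T (NH G)) ∈
          (cnf G).rules :=
        (mem_cnf_rules G).mpr (Or.inr (Or.inl ⟨s', σ, hsu.mem_SymsG G,
          (mem_SubCands G).mpr ⟨r, hr, hsb⟩, hl, D2, rfl⟩))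
      have husum : ∀ s ∈ σ, SymUse G s := fun s hs =>
        Or.inr ⟨r, hr, hsb.mem hs⟩
      have hys := claims_to_ys G husum hf
      match σ, zs, hys, hl, hrule with
      | (σ₀ :: rest), (z₀ :: zs'), List.Forall₂.cons hz₀ hrest, hl, hrule =>
        have hrne : rest ≠ [] := by rintro rfl; norm_num at hl
        have hc2 : YS (cnf G) [pack G rest] zs'.flatten := by
          refine ys_chain G ⟨r, hr, ?_⟩ hrest hrne
          exact ((List.sublist_cons_self σ₀ rest).trans hsb)
        have hout : YS (cnf G) (binOut G (σ₀ :: rest)) (z₀ ++ zs'.flatten) := by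
          have := hz₀.2.append hc2
          simpa [binOut] using this
        have := YS.nt (g := cnf G) _ hrule hout YS.nil
        rw [hfe]
        simpa using this

lemma cnf_language : (cnf G).language = G.language \ {([] : List T)} := by
  ext w
  constructor
  · intro h
    have hys := mem_language_iff_ys.mp h
    obtain ⟨ws, hw, hf⟩ := cnf_sound G hys
    subst hw
    match ws, hf with
    | [z], List.Forall₂.cons hsem List.Forall₂.nil =>
      have hsem' : SemS G (Symbol.nonterminal G.initial) (z) := hsem
      refine ⟨?_, by intro h; exact hsem'.1 (by simpa using (Set.mem_singleton_iff.mp h))⟩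
      exact (G.mem_language_iff [z].flatten).mpr (by simpa using hsem'.2)
  · rintro ⟨hmem, hne⟩
    have hys := mem_language_iff_ys.mp hmem
    obtain ⟨ws, hw, hf⟩ := cnf_complete G hys
    subst hw
    match ws, hf with
    | [z], List.Forall₂.cons hclaim List.Forall₂.nil =>
      rcases hclaim with ⟨hz, _⟩ | ⟨_, _, hys'⟩
      · exact absurd (Set.mem_singleton_iff.mpr (by simpa using hz)) hne
      · have := hys' (Symbol.nonterminal G.initial) (Or.inl rfl) (Or.inl rfl) (by rfl)
        exact mem_language_iff_ys.mpr (by simpa using this)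

end Stage1


/-! ### Stage 2: from CNF shape to double Greibach normal form -/

section Stage2

attribute [local instance] Classical.propDecidable

variable (H : ContextFreeGrammar.{0} T)

/-- CNF shape hypothesis -/
def CNFform : Prop :=
  ∀ r ∈ H.rules, (∃ a, r.output = [Symbol.terminal a]) ∨
    (∃ B C, r.output = [Symbol.nonterminal B, Symbol.nonterminal C])

variable {H}

/-- derivability of a full word from a nonterminal -/
def DH {H : ContextFreeGrammar.{0} T} (n : H.NT) (w : List T) : Prop :=
  YS H [Symbol.nonterminal n] w

lemma CNFform.out_ne_nil (hcnf : CNFform H) : ∀ r ∈ H.rules, r.output ≠ [] := by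
  intro r hr
  rcases hcnf r hr with ⟨a, h⟩ | ⟨B, C, h⟩ <;> simp [h]

lemma DH.ne_nil (hcnf : CNFform H) {n : H.NT} {w : List T} (h : DH n w) : w ≠ [] :=
  YS.ne_nil hcnf.out_ne_nil h (by simp)

lemma DH.split (hcnf : CNFform H) {A : H.NT} {z : List T} (h : DH A z)
    (hl : 2 ≤ z.length) :
    ∃ B C z₁ z₂, (⟨A, [Symbol.nonterminal B, Symbol.nonterminal C]⟩ :
        ContextFreeRule T H.NT) ∈ H.rules ∧
      DH B z₁ ∧ DH C z₂ ∧ z = z₁ ++ z₂ ∧ z₁ ≠ [] ∧ z₂ ≠ [] := by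
  rcases YS.single h with ⟨a, h', _⟩ | ⟨r, hr, hin, hout⟩
  · simp at h'
  rcases r with ⟨ri, ro⟩
  simp only at hin hout
  obtain rfl : A = ri := Symbol.nonterminal.inj hin
  rcases hcnf _ hr with ⟨a, he⟩ | ⟨B, C, he⟩ <;> simp only at he <;> subst he
  · rcases hout with _ | ⟨_, h'⟩
    cases h'
    norm_num at hl
  · have hout' : YS H ([Symbol.nonterminal B] ++ [Symbol.nonterminal C]) z := by
      simpa using hout
    obtain ⟨z₁, z₂, rfl, h₁, h₂⟩ := YS.split hout'
    exact ⟨B, C, z₁, z₂, hr, h₁, h₂, rfl, YS.ne_nil hcnf.out_ne_nil h₁ (by simp),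
      YS.ne_nil hcnf.out_ne_nil h₂ (by simp)⟩

lemma DH.single_rule (hcnf : CNFform H) {A : H.NT} {c : T} (h : DH A [c]) :
    (⟨A, [Symbol.terminal c]⟩ : ContextFreeRule T H.NT) ∈ H.rules := by
  rcases YS.single h with ⟨a, h', _⟩ | ⟨r, hr, hin, hout⟩
  · simp at h'
  rcases r with ⟨ri, ro⟩
  simp only at hin hout
  obtain rfl : A = ri := Symbol.nonterminal.inj hin
  rcases hcnf _ hr with ⟨a, he⟩ | ⟨B, C, he⟩ <;> simp only at he <;> subst he
  · rcases hout with _ | ⟨_, h'⟩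
    cases h'
    exact hr
  · have := YS.length_ge hcnf.out_ne_nil hout
    norm_num at this

/-- left spine segments: `LSp X U u` iff `U ⇒* X u` along a left spine. -/
inductive LSp (H : ContextFreeGrammar.{0} T) : H.NT → H.NT → List T → Prop
  | refl (U) : LSp H U U []
  | step {X P R U r u} :
      (⟨P, [Symbol.nonterminal X, Symbol.nonterminal R]⟩ : ContextFreeRule T H.NT) ∈ H.rules →
      DH R r → LSp H P U u → LSp H X U (r ++ u)

/-- right spine segments: `RSp Y V w` iff `V ⇒* w Y` along a right spine. -/
inductive RSp (H : ContextFreeGrammar.{0} T) : H.NT → H.NT → List T → Prop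
  | refl (V) : RSp H V V []
  | step {Y Q L V l w} :
      (⟨Q, [Symbol.nonterminal L, Symbol.nonterminal Y]⟩ : ContextFreeRule T H.NT) ∈ H.rules →
      DH L l → RSp H Q V w → RSp H Y V (w ++ l)

lemma lsp_top {X U u} (h : LSp H X U u) :
    ∀ {U' R r}, ((⟨U', [Symbol.nonterminal U, Symbol.nonterminal R]⟩ :
      ContextFreeRule T H.NT) ∈ H.rules) → DH R r → LSp H X U' (u ++ r) := by
  induction h with
  | refl U => exact fun hr hd => by simpa using LSp.step hr hd (LSp.refl _)
  | step hr' hd' _ ih =>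
      exact fun hr hd => by simpa [List.append_assoc] using LSp.step hr' hd' (ih hr hd)

lemma rsp_top {Y V w} (h : RSp H Y V w) :
    ∀ {V' L l}, ((⟨V', [Symbol.nonterminal L, Symbol.nonterminal V]⟩ :
      ContextFreeRule T H.NT) ∈ H.rules) → DH L l → RSp H Y V' (l ++ w) := by
  induction h with
  | refl V => exact fun hr hd => by simpa using RSp.step hr hd (RSp.refl _)
  | step hr' hd' _ ih =>
      exact fun hr hd => by
        have := RSp.step hr' hd' (ih hr hd)
        simpa [List.append_assoc] using this

lemma lsp_yield {X U u z} (h : LSp H X U u) (hd : DH X z) : DH U (z ++ u) := by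
  induction h generalizing z with
  | refl U => simpa using hd
  | @step X P R U r u hr hdr _ ih =>
    have hP : DH P (z ++ r) := by
      have : YS H ([Symbol.nonterminal X] ++ [Symbol.nonterminal R]) (z ++ r) :=
        hd.append hdr
    
      simpa [DH] using YS.nt (g := H) ⟨P, _⟩ hr (by simpa using this) YS.nil
    simpa [List.append_assoc] using ih hP

lemma rsp_yield {Y V w z} (h : RSp H Y V w) (hd : DH Y z) : DH V (w ++ z) := by
  induction h generalizing z with
  | refl V => simpa using hd
  | @step Y Q L V l w hr hdl _ ih =>
    have hQ : DH Q (l ++ z) := by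
      have : YS H ([Symbol.nonterminal L] ++ [Symbol.nonterminal Y]) (l ++ z) :=
        hdl.append hd
      simpa [DH] using YS.nt (g := H) ⟨Q, _⟩ hr (by simpa using this) YS.nil
    simpa [List.append_assoc] using ih hQ

lemma lsp_nil_inv (hcnf : CNFform H) {X U u} (h : LSp H X U u) (he : u = []) :
    X = U := by
  cases h with
  | refl => rfl
  | step hr hd _ =>
    exact absurd (List.append_eq_nil_iff.mp he).1 (hd.ne_nil hcnf)

lemma rsp_nil_inv (hcnf : CNFform H) {Y V w} (h : RSp H Y V w) (he : w = []) :
    Y = V := by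
  cases h with
  | refl => rfl
  | step hr hd _ =>
    exact absurd (List.append_eq_nil_iff.mp he).2 (hd.ne_nil hcnf)

lemma lsp_top_inv (hcnf : CNFform H) {X U u} (h : LSp H X U u) (hu : u ≠ []) :
    ∃ U₁ R₁ u₁ r₁, (⟨U, [Symbol.nonterminal U₁, Symbol.nonterminal R₁]⟩ :
        ContextFreeRule T H.NT) ∈ H.rules ∧
      LSp H X U₁ u₁ ∧ DH R₁ r₁ ∧ u = u₁ ++ r₁ := by
  induction h with
  | refl => exact absurd rfl hu
  | @step X P R U r u hr hd hls ih =>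
    rcases eq_or_ne u [] with rfl | hune
    · have := lsp_nil_inv hcnf hls rfl
      subst this
      exact ⟨X, R, [], r, hr, LSp.refl X, hd, by simp⟩
    · obtain ⟨U₁, R₁, u₁, r₁, hrule, hls', hd', rfl⟩ := ih hune
      exact ⟨U₁, R₁, r ++ u₁, r₁, hrule, LSp.step hr hd hls', hd',
        by simp [List.append_assoc]⟩

lemma rsp_top_inv (hcnf : CNFform H) {Y V w} (h : RSp H Y V w) (hw : w ≠ []) :
    ∃ L₁ V₁ l₁ w₁, (⟨V, [Symbol.nonterminal L₁, Symbol.nonterminal V₁]⟩ :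
        ContextFreeRule T H.NT) ∈ H.rules ∧
      DH L₁ l₁ ∧ RSp H Y V₁ w₁ ∧ w = l₁ ++ w₁ := by
  induction h with
  | refl => exact absurd rfl hw
  | @step Y Q L V l w hr hd hrs ih =>
    rcases eq_or_ne w [] with rfl | hwne
    · have := rsp_nil_inv hcnf hrs rfl
      subst this
      exact ⟨L, Y, l, [], hr, hd, RSp.refl Y, by simp⟩
    · obtain ⟨L₁, V₁, l₁, w₁, hrule, hd', hrs', rfl⟩ := ih hwne
      exact ⟨L₁, V₁, l₁, w₁ ++ l, hrule, hd', RSp.step hr hd hrs',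
        by simp [List.append_assoc]⟩

lemma extract_left (hcnf : CNFform H) {U : H.NT} {z : List T} (h : DH U z)
    (hz : z ≠ []) :
    ∃ c u X, z = c :: u ∧
      (⟨X, [Symbol.terminal c]⟩ : ContextFreeRule T H.NT) ∈ H.rules ∧ LSp H X U u := by
  suffices hgen : ∀ n (U : H.NT) (z : List T), z.length = n → DH U z → z ≠ [] →
      ∃ c u X, z = c :: u ∧
        (⟨X, [Symbol.terminal c]⟩ : ContextFreeRule T H.NT) ∈ H.rules ∧ LSp H X U u by
    exact hgen z.length U z rfl h hz
  clear h hz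
  intro n
  induction n using Nat.strong_induction_on with
  | _ n ih =>
  intro U z hn h hz
  subst hn
  rcases Nat.lt_or_ge z.length 2 with hl | hl
  · match z, hz with
    | [c], _ => exact ⟨c, [], U, rfl, h.single_rule hcnf, LSp.refl U⟩
  · obtain ⟨B, C, z₁, z₂, hrule, h₁, h₂, rfl, hz₁, hz₂⟩ := h.split hcnf hl
    obtain ⟨c, u₁, X, rfl, hXr, hls⟩ := ih z₁.length (by
      simp only [List.length_append]
      have : 0 < z₂.length := List.length_pos_iff.mpr hz₂
      omega) B z₁ rfl h₁ hz₁
    exact ⟨c, u₁ ++ z₂, X, by simp, hXr, lsp_top hls hrule h₂⟩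

lemma extract_right (hcnf : CNFform H) {V : H.NT} {z : List T} (h : DH V z)
    (hz : z ≠ []) :
    ∃ d w Y, z = w ++ [d] ∧
      (⟨Y, [Symbol.terminal d]⟩ : ContextFreeRule T H.NT) ∈ H.rules ∧ RSp H Y V w := by
  suffices hgen : ∀ n (V : H.NT) (z : List T), z.length = n → DH V z → z ≠ [] →
      ∃ d w Y, z = w ++ [d] ∧
        (⟨Y, [Symbol.terminal d]⟩ : ContextFreeRule T H.NT) ∈ H.rules ∧ RSp H Y V w by
    exact hgen z.length V z rfl h hz
  clear h hz
  intro n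
  induction n using Nat.strong_induction_on with
  | _ n ih =>
  intro V z hn h hz
  subst hn
  rcases Nat.lt_or_ge z.length 2 with hl | hl
  · match z, hz with
    | [d], _ => exact ⟨d, [], V, rfl, h.single_rule hcnf, RSp.refl V⟩
  · obtain ⟨B, C, z₁, z₂, hrule, h₁, h₂, rfl, hz₁, hz₂⟩ := h.split hcnf hl
    obtain ⟨d, w₂, Y, rfl, hYr, hrs⟩ := ih z₂.length (by
      simp only [List.length_append]
      have : 0 < z₁.length := List.length_pos_iff.mpr hz₁
      omega) C z₂ rfl h₂ hz₂
    exact ⟨d, z₁ ++ w₂, Y, by simp, hYr, rsp_top hrs hrule h₁⟩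


variable (H)

/-- terminals occurring in `H` -/
noncomputable def Ts2 : List T :=
  H.rules.toList.flatMap fun r => r.output.filterMap fun s =>
    match s with
    | Symbol.terminal a => some a
    | Symbol.nonterminal _ => none

/-- nonterminals occurring in `H` -/
noncomputable def Ns2 : List H.NT :=
  H.initial :: H.rules.toList.flatMap fun r => r.input :: r.output.filterMap fun s =>
    match s with
    | Symbol.terminal _ => none
    | Symbol.nonterminal B => some B

/-- optional spine-marker pairs -/
abbrev OP := Option (H.NT × H.NT)

/-- nonterminals of the double Greibach grammar: `none` is the initial symbol,
`some (p, q)` generates `(LSp-part p) ++ (RSp-part q)`. -/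
abbrev NT2 := Option (OP H × OP H)

variable {H}

lemma pin_ter {X : H.NT} {c : T}
    (h : (⟨X, [Symbol.terminal c]⟩ : ContextFreeRule T H.NT) ∈ H.rules) :
    c ∈ Ts2 H ∧ X ∈ Ns2 H := by
  constructor
  · simp only [Ts2, List.mem_flatMap, Finset.mem_toList, List.mem_filterMap]
    exact ⟨_, h, Symbol.terminal c, by simp⟩
  · simp only [Ns2, List.mem_cons, List.mem_flatMap, Finset.mem_toList]
    exact Or.inr ⟨_, h, by simp⟩

lemma pin_bin {A B C : H.NT}
    (h : (⟨A, [Symbol.nonterminal B, Symbol.nonterminal C]⟩ :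
      ContextFreeRule T H.NT) ∈ H.rules) :
    A ∈ Ns2 H ∧ B ∈ Ns2 H ∧ C ∈ Ns2 H := by
  refine ⟨?_, ?_, ?_⟩ <;>
    simp only [Ns2, List.mem_cons, List.mem_flatMap, Finset.mem_toList] <;>
    refine Or.inr ⟨_, h, ?_⟩ <;> simp [List.mem_filterMap]

lemma initial_mem_Ns2 : H.initial ∈ Ns2 H := by simp [Ns2]

variable (H)

/-- fragments: right-hand-side pieces generating exactly the words derivable
from a given nonterminal of `H` -/
def FragSpec (R : H.NT) (f : List (Symbol T (NT2 H))) : Prop :=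
  (∃ c, f = [Symbol.terminal c] ∧ DH R [c]) ∨
  (∃ c d B C, f = [Symbol.terminal c, Symbol.terminal d] ∧
    (⟨R, [Symbol.nonterminal B, Symbol.nonterminal C]⟩ :
      ContextFreeRule T H.NT) ∈ H.rules ∧ DH B [c] ∧ DH C [d]) ∨
  (∃ c d X B Y C, f = [Symbol.terminal c,
      Symbol.nonterminal (some (some (X, B), some (Y, C))), Symbol.terminal d] ∧
    (⟨R, [Symbol.nonterminal B, Symbol.nonterminal C]⟩ :
      ContextFreeRule T H.NT) ∈ H.rules ∧
    (⟨X, [Symbol.terminal c]⟩ : ContextFreeRule T H.NT) ∈ H.rules ∧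
    (⟨Y, [Symbol.terminal d]⟩ : ContextFreeRule T H.NT) ∈ H.rules)

/-- an optional marker pair that stands for the empty left/right part -/
def NullP : OP H → Prop
  | none => True
  | some (X, U) => X = U ∧ X ∈ Ns2 H

/-- specification of the rules of the double Greibach grammar -/
def RuleSpec2 (r : ContextFreeRule T (NT2 H)) : Prop :=
  -- init
  (∃ f, r = ⟨none, f⟩ ∧ FragSpec H H.initial f) ∨
  -- b1
  (∃ p Y V L f, r = ⟨some (p, some (Y, V)), f⟩ ∧ NullP H p ∧
    (⟨V, [Symbol.nonterminal L, Symbol.nonterminal Y]⟩ :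
      ContextFreeRule T H.NT) ∈ H.rules ∧ FragSpec H L f) ∨
  -- b2
  (∃ p Y V L₁ V₁ L f₁ f₂, r = ⟨some (p, some (Y, V)), f₁ ++ f₂⟩ ∧ NullP H p ∧
    (⟨V, [Symbol.nonterminal L₁, Symbol.nonterminal V₁]⟩ :
      ContextFreeRule T H.NT) ∈ H.rules ∧
    (⟨V₁, [Symbol.nonterminal L, Symbol.nonterminal Y]⟩ :
      ContextFreeRule T H.NT) ∈ H.rules ∧ FragSpec H L₁ f₁ ∧ FragSpec H L f₂) ∨
  -- b3
  (∃ p Y V L₁ V₁ Q L f₁ f₂,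
    r = ⟨some (p, some (Y, V)),
      f₁ ++ [Symbol.nonterminal (some (none, some (Q, V₁)))] ++ f₂⟩ ∧ NullP H p ∧
    (⟨V, [Symbol.nonterminal L₁, Symbol.nonterminal V₁]⟩ :
      ContextFreeRule T H.NT) ∈ H.rules ∧
    (⟨Q, [Symbol.nonterminal L, Symbol.nonterminal Y]⟩ :
      ContextFreeRule T H.NT) ∈ H.rules ∧ FragSpec H L₁ f₁ ∧ FragSpec H L f₂) ∨
  -- c1
  (∃ q X U R' f, r = ⟨some (some (X, U), q), f⟩ ∧ NullP H q ∧
    (⟨U, [Symbol.nonterminal X, Symbol.nonterminal R']⟩ :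
      ContextFreeRule T H.NT) ∈ H.rules ∧ FragSpec H R' f) ∨
  -- c2
  (∃ q X U U₁ R₁ R' f₁ f₂, r = ⟨some (some (X, U), q), f₁ ++ f₂⟩ ∧ NullP H q ∧
    (⟨U, [Symbol.nonterminal U₁, Symbol.nonterminal R₁]⟩ :
      ContextFreeRule T H.NT) ∈ H.rules ∧
    (⟨U₁, [Symbol.nonterminal X, Symbol.nonterminal R']⟩ :
      ContextFreeRule T H.NT) ∈ H.rules ∧ FragSpec H R' f₁ ∧ FragSpec H R₁ f₂) ∨
  -- c3
  (∃ q X U U₁ R₁ P R' f₁ f₂,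
    r = ⟨some (some (X, U), q),
      f₁ ++ [Symbol.nonterminal (some (some (P, U₁), none))] ++ f₂⟩ ∧ NullP H q ∧
    (⟨U, [Symbol.nonterminal U₁, Symbol.nonterminal R₁]⟩ :
      ContextFreeRule T H.NT) ∈ H.rules ∧
    (⟨P, [Symbol.nonterminal X, Symbol.nonterminal R']⟩ :
      ContextFreeRule T H.NT) ∈ H.rules ∧ FragSpec H R' f₁ ∧ FragSpec H R₁ f₂) ∨
  -- d1
  (∃ X U Y V R' L f₁ f₂, r = ⟨some (some (X, U), some (Y, V)), f₁ ++ f₂⟩ ∧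
    (⟨U, [Symbol.nonterminal X, Symbol.nonterminal R']⟩ :
      ContextFreeRule T H.NT) ∈ H.rules ∧
    (⟨V, [Symbol.nonterminal L, Symbol.nonterminal Y]⟩ :
      ContextFreeRule T H.NT) ∈ H.rules ∧ FragSpec H R' f₁ ∧ FragSpec H L f₂) ∨
  -- d2
  (∃ X U Y V P R' Q L f₁ f₂,
    r = ⟨some (some (X, U), some (Y, V)),
      f₁ ++ [Symbol.nonterminal (some (some (P, U), some (Q, V)))] ++ f₂⟩ ∧
    U ∈ Ns2 H ∧ V ∈ Ns2 H ∧
    (⟨P, [Symbol.nonterminal X, Symbol.nonterminal R']⟩ :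
      ContextFreeRule T H.NT) ∈ H.rules ∧
    (⟨Q, [Symbol.nonterminal L, Symbol.nonterminal Y]⟩ :
      ContextFreeRule T H.NT) ∈ H.rules ∧ FragSpec H R' f₁ ∧ FragSpec H L f₂)

/-- candidate fragments -/
noncomputable def fragCands : List (List (Symbol T (NT2 H))) :=
  ((Ts2 H).map fun c => [Symbol.terminal c]) ++
  ((Ts2 H).flatMap fun c => (Ts2 H).map fun d =>
    [Symbol.terminal c, Symbol.terminal d]) ++
  ((Ts2 H).flatMap fun c => (Ts2 H).flatMap fun d =>
    (Ns2 H).flatMap fun X => (Ns2 H).flatMap fun B =>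
    (Ns2 H).flatMap fun Y => (Ns2 H).map fun C =>
      [Symbol.terminal c,
        Symbol.nonterminal (some (some (X, B), some (Y, C))), Symbol.terminal d])

/-- candidate marker pairs -/
noncomputable def opCands : List (OP H) :=
  none :: ((Ns2 H).flatMap fun X => (Ns2 H).map fun U => some (X, U))

/-- candidate nonterminals -/
noncomputable def ntCands : List (NT2 H) :=
  none :: ((opCands H).flatMap fun p => (opCands H).map fun q => some (p, q))

/-- candidate outputs -/
noncomputable def outCands : List (List (Symbol T (NT2 H))) :=
  fragCands H ++
  ((fragCands H).flatMap fun f₁ => (fragCands H).map fun f₂ => f₁ ++ f₂) ++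
  ((fragCands H).flatMap fun f₁ => (ntCands H).flatMap fun m =>
    (fragCands H).map fun f₂ => f₁ ++ [Symbol.nonterminal m] ++ f₂)

/-- the double Greibach grammar -/
@[reducible] noncomputable def gnf : ContextFreeGrammar.{0} T where
  NT := NT2 H
  initial := none
  rules :=
    (((ntCands H).flatMap fun n => (outCands H).map fun o =>
      (⟨n, o⟩ : ContextFreeRule T (NT2 H))).filter
        fun r => RuleSpec2 H r).toFinset


variable {H}

lemma mem_opCands_some {X U : H.NT} (hX : X ∈ Ns2 H) (hU : U ∈ Ns2 H) :
    (some (X, U) : OP H) ∈ opCands H := by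
  simp only [opCands, List.mem_cons, List.mem_flatMap, List.mem_map]
  exact Or.inr ⟨X, hX, U, hU, rfl⟩

lemma mem_opCands_nullp {p : OP H} (hp : NullP H p) : p ∈ opCands H := by
  rcases p with _ | ⟨X, U⟩
  · simp [opCands]
  · obtain ⟨rfl, hX⟩ := hp
    exact mem_opCands_some hX hX

lemma mem_ntCands_some {p q : OP H} (hp : p ∈ opCands H) (hq : q ∈ opCands H) :
    (some (p, q) : NT2 H) ∈ ntCands H := by
  simp only [ntCands, List.mem_cons, List.mem_flatMap, List.mem_map]
  exact Or.inr ⟨p, hp, q, hq, rfl⟩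

lemma frag_mem (hcnf : CNFform H) {R : H.NT} {f : List (Symbol T (NT2 H))}
    (h : FragSpec H R f) : f ∈ fragCands H := by
  simp only [fragCands, List.mem_append, List.mem_map, List.mem_flatMap]
  rcases h with ⟨c, rfl, hd⟩ | ⟨c, d, B, C, rfl, hr, hdB, hdC⟩
    | ⟨c, d, X, B, Y, C, rfl, hr, hX, hY⟩
  · exact Or.inl (Or.inl ⟨c, (pin_ter (hd.single_rule hcnf)).1, rfl⟩)
  · exact Or.inl (Or.inr ⟨c, (pin_ter (hdB.single_rule hcnf)).1,
      d, (pin_ter (hdC.single_rule hcnf)).1, rfl⟩)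
  · refine Or.inr ⟨c, (pin_ter hX).1, d, (pin_ter hY).1, X, (pin_ter hX).2,
      B, (pin_bin hr).2.1, Y, (pin_ter hY).2, C, (pin_bin hr).2.2, rfl⟩

lemma mem_outCands_one {f : List (Symbol T (NT2 H))} (h : f ∈ fragCands H) :
    f ∈ outCands H := by
  simp only [outCands, List.mem_append]
  exact Or.inl (Or.inl h)

lemma mem_outCands_two {f₁ f₂ : List (Symbol T (NT2 H))} (h₁ : f₁ ∈ fragCands H)
    (h₂ : f₂ ∈ fragCands H) : f₁ ++ f₂ ∈ outCands H := by
  simp only [outCands, List.mem_append, List.mem_flatMap, List.mem_map]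
  exact Or.inl (Or.inr ⟨f₁, h₁, f₂, h₂, rfl⟩)

lemma mem_outCands_three {f₁ f₂ : List (Symbol T (NT2 H))} {m : NT2 H}
    (h₁ : f₁ ∈ fragCands H) (hm : m ∈ ntCands H) (h₂ : f₂ ∈ fragCands H) :
    f₁ ++ [Symbol.nonterminal m] ++ f₂ ∈ outCands H := by
  simp only [outCands, List.mem_append, List.mem_flatMap, List.mem_map]
  exact Or.inr ⟨f₁, h₁, m, hm, f₂, h₂, rfl⟩

lemma mem_gnf_rules (hcnf : CNFform H) {r : ContextFreeRule T (NT2 H)} :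
    r ∈ (gnf H).rules ↔ RuleSpec2 H r := by
  constructor
  · intro h
    simp only [gnf, List.mem_toFinset, List.mem_filter, decide_eq_true_eq] at h
    exact h.2
  · intro h
    simp only [gnf, List.mem_toFinset, List.mem_filter, decide_eq_true_eq]
    refine ⟨?_, h⟩
    simp only [List.mem_flatMap, List.mem_map]
    rcases h with ⟨f, rfl, hf⟩ | ⟨p, Y, V, L, f, rfl, hp, hrV, hf⟩
      | ⟨p, Y, V, L₁, V₁, L, f₁, f₂, rfl, hp, hr1, hr2, hf₁, hf₂⟩
      | ⟨p, Y, V, L₁, V₁, Q, L, f₁, f₂, rfl, hp, hr1, hr2, hf₁, hf₂⟩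
      | ⟨q, X, U, R', f, rfl, hq, hrU, hf⟩
      | ⟨q, X, U, U₁, R₁, R', f₁, f₂, rfl, hq, hr1, hr2, hf₁, hf₂⟩
      | ⟨q, X, U, U₁, R₁, P, R', f₁, f₂, rfl, hq, hr1, hr2, hf₁, hf₂⟩
      | ⟨X, U, Y, V, R', L, f₁, f₂, rfl, hr1, hr2, hf₁, hf₂⟩
      | ⟨X, U, Y, V, P, R', Q, L, f₁, f₂, rfl, hU, hV, hr1, hr2, hf₁, hf₂⟩
    · exact ⟨none, by simp [ntCands], _, mem_outCands_one (frag_mem hcnf hf), rfl⟩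
    · exact ⟨_, mem_ntCands_some (mem_opCands_nullp hp)
        (mem_opCands_some (pin_bin hrV).2.2 (pin_bin hrV).1),
        _, mem_outCands_one (frag_mem hcnf hf), rfl⟩
    · exact ⟨_, mem_ntCands_some (mem_opCands_nullp hp)
        (mem_opCands_some (pin_bin hr2).2.2 (pin_bin hr1).1),
        _, mem_outCands_two (frag_mem hcnf hf₁) (frag_mem hcnf hf₂), rfl⟩
    · exact ⟨_, mem_ntCands_some (mem_opCands_nullp hp)
        (mem_opCands_some (pin_bin hr2).2.2 (pin_bin hr1).1),
        _, mem_outCands_three (frag_mem hcnf hf₁)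
          (mem_ntCands_some (by simp [opCands])
            (mem_opCands_some (pin_bin hr2).1 (pin_bin hr1).2.2))
          (frag_mem hcnf hf₂), rfl⟩
    · exact ⟨_, mem_ntCands_some
        (mem_opCands_some (pin_bin hrU).2.1 (pin_bin hrU).1)
        (mem_opCands_nullp hq),
        _, mem_outCands_one (frag_mem hcnf hf), rfl⟩
    · exact ⟨_, mem_ntCands_some
        (mem_opCands_some (pin_bin hr2).2.1 (pin_bin hr1).1)
        (mem_opCands_nullp hq),
        _, mem_outCands_two (frag_mem hcnf hf₁) (frag_mem hcnf hf₂), rfl⟩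
    · exact ⟨_, mem_ntCands_some
        (mem_opCands_some (pin_bin hr2).2.1 (pin_bin hr1).1)
        (mem_opCands_nullp hq),
        _, mem_outCands_three (frag_mem hcnf hf₁)
          (mem_ntCands_some
            (mem_opCands_some (pin_bin hr2).1 (pin_bin hr1).2.1)
            (by simp [opCands]))
          (frag_mem hcnf hf₂), rfl⟩
    · exact ⟨_, mem_ntCands_some
        (mem_opCands_some (pin_bin hr1).2.1 (pin_bin hr1).1)
        (mem_opCands_some (pin_bin hr2).2.2 (pin_bin hr2).1),
        _, mem_outCands_two (frag_mem hcnf hf₁) (frag_mem hcnf hf₂), rfl⟩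
    · exact ⟨_, mem_ntCands_some
        (mem_opCands_some (pin_bin hr1).2.1 hU)
        (mem_opCands_some (pin_bin hr2).2.2 hV),
        _, mem_outCands_three (frag_mem hcnf hf₁)
          (mem_ntCands_some (mem_opCands_some (pin_bin hr1).1 hU)
            (mem_opCands_some (pin_bin hr2).1 hV))
          (frag_mem hcnf hf₂), rfl⟩

lemma frag_ends {R : H.NT} {f : List (Symbol T (NT2 H))} (h : FragSpec H R f) :
    (∃ a : T, f.head? = some (Symbol.terminal a)) ∧
    (∃ b : T, f.getLast? = some (Symbol.terminal b)) := by
  rcases h with ⟨c, rfl, _⟩ | ⟨c, d, B, C, rfl, _⟩ | ⟨c, d, X, B, Y, C, rfl, _⟩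
  · exact ⟨⟨c, rfl⟩, ⟨c, rfl⟩⟩
  · exact ⟨⟨c, rfl⟩, ⟨d, rfl⟩⟩
  · exact ⟨⟨c, rfl⟩, ⟨d, rfl⟩⟩

lemma frag_ne_nil {R : H.NT} {f : List (Symbol T (NT2 H))} (h : FragSpec H R f) :
    f ≠ [] := by
  rcases h with ⟨c, rfl, _⟩ | ⟨c, d, B, C, rfl, _⟩ | ⟨c, d, X, B, Y, C, rfl, _⟩ <;> simp

lemma ends_append_frags {R R' : H.NT} {f₁ f₂ mid : List (Symbol T (NT2 H))}
    (h₁ : FragSpec H R f₁) (h₂ : FragSpec H R' f₂) :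
    (∃ a : T, (f₁ ++ mid ++ f₂).head? = some (Symbol.terminal a)) ∧
    (∃ b : T, (f₁ ++ mid ++ f₂).getLast? = some (Symbol.terminal b)) := by
  obtain ⟨⟨a, ha⟩, _⟩ := frag_ends h₁
  obtain ⟨_, ⟨b, hb⟩⟩ := frag_ends h₂
  constructor
  · refine ⟨a, ?_⟩
    rw [List.append_assoc, List.head?_append_of_ne_nil _ (frag_ne_nil h₁)]
    exact ha
  · refine ⟨b, ?_⟩
    rw [List.getLast?_append_of_ne_nil _ (frag_ne_nil h₂)]
    exact hb

lemma gnf_shape (hcnf : CNFform H) {r : ContextFreeRule T (NT2 H)}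
    (h : r ∈ (gnf H).rules) :
    (∃ a : T, r.output.head? = some (Symbol.terminal a)) ∧
    (∃ b : T, r.output.getLast? = some (Symbol.terminal b)) := by
  have hs := (mem_gnf_rules hcnf).mp h
  rcases hs with ⟨f, rfl, hf⟩ | ⟨p, Y, V, L, f, rfl, hp, hrV, hf⟩
    | ⟨p, Y, V, L₁, V₁, L, f₁, f₂, rfl, hp, hr1, hr2, hf₁, hf₂⟩
    | ⟨p, Y, V, L₁, V₁, Q, L, f₁, f₂, rfl, hp, hr1, hr2, hf₁, hf₂⟩
    | ⟨q, X, U, R', f, rfl, hq, hrU, hf⟩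
    | ⟨q, X, U, U₁, R₁, R', f₁, f₂, rfl, hq, hr1, hr2, hf₁, hf₂⟩
    | ⟨q, X, U, U₁, R₁, P, R', f₁, f₂, rfl, hq, hr1, hr2, hf₁, hf₂⟩
    | ⟨X, U, Y, V, R', L, f₁, f₂, rfl, hr1, hr2, hf₁, hf₂⟩
    | ⟨X, U, Y, V, P, R', Q, L, f₁, f₂, rfl, hU, hV, hr1, hr2, hf₁, hf₂⟩
  · exact frag_ends hf
  · exact frag_ends hf
  · exact ends_append_frags (mid := []) hf₁ hf₂ |>.imp (by simp) (by simp)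
  · exact ends_append_frags hf₁ hf₂
  · exact frag_ends hf
  · exact ends_append_frags (mid := []) hf₁ hf₂ |>.imp (by simp) (by simp)
  · exact ends_append_frags hf₁ hf₂
  · exact ends_append_frags (mid := []) hf₁ hf₂ |>.imp (by simp) (by simp)
  · exact ends_append_frags hf₁ hf₂


variable (H)

/-- semantics of the left part -/
def LPSem : OP H → List T → Prop
  | none => fun u => u = []
  | some (X, U) => LSp H X U

/-- semantics of the right part -/
def RPSem : OP H → List T → Prop
  | none => fun w => w = []
  | some (Y, V) => RSp H Y V

/-- semantics of nonterminals of `gnf H` -/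
def Sem2 : NT2 H → List T → Prop
  | none => fun z => DH H.initial z
  | some (p, q) => fun z => z ≠ [] ∧ ∃ u w, z = u ++ w ∧ LPSem H p u ∧ RPSem H q w

/-- semantics of symbols of `gnf H` -/
def SemSym2 : Symbol T (NT2 H) → List T → Prop
  | Symbol.terminal a => fun z => z = [a]
  | Symbol.nonterminal n => Sem2 H n

variable {H}

lemma semsym2_nt {n : NT2 H} {z : List T} :
    SemSym2 H (Symbol.nonterminal n) z ↔ Sem2 H n z := Iff.rfl

lemma NullP.lpsem {p : OP H} (hp : NullP H p) : LPSem H p [] := by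
  rcases p with _ | ⟨X, U⟩
  · exact rfl
  · obtain ⟨rfl, _⟩ := hp
    exact LSp.refl X

lemma NullP.rpsem {q : OP H} (hq : NullP H q) : RPSem H q [] := by
  rcases q with _ | ⟨Y, V⟩
  · exact rfl
  · obtain ⟨rfl, _⟩ := hq
    exact RSp.refl Y

lemma dh_of_ter_rule {X : H.NT} {c : T}
    (h : (⟨X, [Symbol.terminal c]⟩ : ContextFreeRule T H.NT) ∈ H.rules) :
    DH X [c] := by
  simpa [DH] using YS.nt (g := H) ⟨X, [Symbol.terminal c]⟩ h (YS.ter c YS.nil) YS.nil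

lemma dh_of_bin_rule {A B C : H.NT} {z₁ z₂ : List T}
    (h : (⟨A, [Symbol.nonterminal B, Symbol.nonterminal C]⟩ :
      ContextFreeRule T H.NT) ∈ H.rules)
    (h₁ : DH B z₁) (h₂ : DH C z₂) : DH A (z₁ ++ z₂) := by
  have : YS H ([Symbol.nonterminal B] ++ [Symbol.nonterminal C]) (z₁ ++ z₂) :=
    YS.append h₁ h₂
  simpa [DH] using YS.nt (g := H) ⟨A, _⟩ h (by simpa using this) YS.nil

lemma forall2_append_split {β : Type} {R : Symbol T (NT2 H) → β → Prop}
    {l₁ l₂ : List (Symbol T (NT2 H))} {ws : List β}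
    (h : List.Forall₂ R (l₁ ++ l₂) ws) :
    ∃ ws₁ ws₂, ws = ws₁ ++ ws₂ ∧ List.Forall₂ R l₁ ws₁ ∧ List.Forall₂ R l₂ ws₂ := by
  induction l₁ generalizing ws with
  | nil => exact ⟨[], ws, rfl, List.Forall₂.nil, h⟩
  | cons s l₁ ih =>
    rcases h with _ | ⟨h₁, h₂⟩
    obtain ⟨ws₁, ws₂, rfl, hl, hr⟩ := ih h₂
    exact ⟨_ :: ws₁, ws₂, rfl, List.Forall₂.cons h₁ hl, hr⟩

lemma frag_sound (hcnf : CNFform H) {R : H.NT} {f : List (Symbol T (NT2 H))}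
    {ws : List (List T)} (hf : FragSpec H R f) (h : List.Forall₂ (SemSym2 H) f ws) :
    DH R ws.flatten := by
  rcases hf with ⟨c, rfl, hd⟩ | ⟨c, d, B, C, rfl, hr, hdB, hdC⟩
    | ⟨c, d, X, B, Y, C, rfl, hr, hX, hY⟩
  · match ws, h with
    | [z], List.Forall₂.cons h₁ List.Forall₂.nil =>
      have : z = [c] := h₁
      subst this
      simpa using hd
  · match ws, h with
    | [z₁, z₂], List.Forall₂.cons h₁ (List.Forall₂.cons h₂ List.Forall₂.nil) =>
      have e₁ : z₁ = [c] := h₁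
      have e₂ : z₂ = [d] := h₂
      subst e₁ e₂
      simpa using dh_of_bin_rule hr hdB hdC
  · match ws, h with
    | [z₁, zm, z₂], List.Forall₂.cons h₁ (List.Forall₂.cons hm
        (List.Forall₂.cons h₂ List.Forall₂.nil)) =>
      have e₁ : z₁ = [c] := h₁
      have e₂ : z₂ = [d] := h₂
      subst e₁ e₂
      obtain ⟨hne, u, w, rfl, hu, hw⟩ := (semsym2_nt).mp hm
      have hB : DH B ([c] ++ u) := lsp_yield hu (dh_of_ter_rule hX)
      have hC : DH C (w ++ [d]) := rsp_yield hw (dh_of_ter_rule hY)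
      have := dh_of_bin_rule hr hB hC
      simpa [List.append_assoc] using this

set_option maxHeartbeats 1600000 in
lemma gnf_sound (hcnf : CNFform H) {α : List (Symbol T (gnf H).NT)} {z : List T}
    (h : YS (gnf H) α z) :
    ∃ ws, z = ws.flatten ∧ List.Forall₂ (SemSym2 H) α ws := by
  induction h with
  | nil => exact ⟨[], by simp⟩
  | ter a _ ih =>
    obtain ⟨ws, rfl, hf⟩ := ih
    exact ⟨[a] :: ws, by simp, List.Forall₂.cons rfl hf⟩
  | @nt α w₁ w₂ r hr h₁ h₂ ih₁ ih₂ =>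
    obtain ⟨ws₂, rfl, hf₂⟩ := ih₂
    obtain ⟨ws₁, hw₁, hf₁⟩ := ih₁
    subst hw₁
    suffices hsem : Sem2 H r.input ws₁.flatten by
      exact ⟨ws₁.flatten :: ws₂, by simp, List.Forall₂.cons hsem hf₂⟩
    rcases (mem_gnf_rules hcnf).mp hr with ⟨f, rfl, hf⟩
      | ⟨p, Y, V, L, f, rfl, hp, hrV, hf⟩
      | ⟨p, Y, V, L₁, V₁, L, f₁, f₂, rfl, hp, hr1, hr2, hfa, hfb⟩
      | ⟨p, Y, V, L₁, V₁, Q, L, f₁, f₂, rfl, hp, hr1, hr2, hfa, hfb⟩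
      | ⟨q, X, U, R', f, rfl, hq, hrU, hf⟩
      | ⟨q, X, U, U₁, R₁, R', f₁, f₂, rfl, hq, hr1, hr2, hfa, hfb⟩
      | ⟨q, X, U, U₁, R₁, P, R', f₁, f₂, rfl, hq, hr1, hr2, hfa, hfb⟩
      | ⟨X, U, Y, V, R', L, f₁, f₂, rfl, hr1, hr2, hfa, hfb⟩
      | ⟨X, U, Y, V, P, R', Q, L, f₁, f₂, rfl, hU, hV, hr1, hr2, hfa, hfb⟩
    · -- init
      exact frag_sound hcnf hf hf₁
    · -- b1
      have hD := frag_sound hcnf hf hf₁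
      refine ⟨hD.ne_nil hcnf, [], ws₁.flatten, by simp, hp.lpsem, ?_⟩
      simpa [RPSem] using RSp.step hrV hD (RSp.refl V)
    · -- b2
      obtain ⟨wsa, wsb, rfl, ha, hb⟩ := forall2_append_split hf₁
      have hDa := frag_sound hcnf hfa ha
      have hDb := frag_sound hcnf hfb hb
      have hin : RSp H V₁ V wsa.flatten := by
        simpa using RSp.step hr1 hDa (RSp.refl V)
      refine ⟨by simp [hDa.ne_nil hcnf], [], wsa.flatten ++ wsb.flatten,
        by simp, hp.lpsem, ?_⟩
      exact RSp.step hr2 hDb hin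
    · -- b3
      obtain ⟨wsA, wsb, rfl, hA, hb⟩ := forall2_append_split hf₁
      obtain ⟨wsa, wsm, rfl, ha, hm'⟩ := forall2_append_split hA
      match wsm, hm' with
      | [zm], List.Forall₂.cons hm List.Forall₂.nil =>
        have hDa := frag_sound hcnf hfa ha
        have hDb := frag_sound hcnf hfb hb
        obtain ⟨hne, u', w', he, hu, hw⟩ := (semsym2_nt).mp hm
        have hw' : RSp H Q V₁ zm := by
          rcases he with rfl
          have : u' = [] := hu
          subst this
          simpa [RPSem] using hw
        have hmid : RSp H Q V (wsa.flatten ++ zm) := rsp_top hw' hr1 hDa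
        refine ⟨by simp [hDa.ne_nil hcnf], [],
          (wsa.flatten ++ zm) ++ wsb.flatten, by simp, hp.lpsem, ?_⟩
        exact RSp.step hr2 hDb hmid
    · -- c1
      have hD := frag_sound hcnf hf hf₁
      refine ⟨hD.ne_nil hcnf, ws₁.flatten, [], by simp, ?_, hq.rpsem⟩
      simpa [LPSem] using LSp.step hrU hD (LSp.refl U)
    · -- c2
      obtain ⟨wsa, wsb, rfl, ha, hb⟩ := forall2_append_split hf₁
      have hDa := frag_sound hcnf hfa ha
      have hDb := frag_sound hcnf hfb hb
      have hin : LSp H X U₁ wsa.flatten := by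
        simpa using LSp.step hr2 hDa (LSp.refl U₁)
      refine ⟨by simp [hDa.ne_nil hcnf], wsa.flatten ++ wsb.flatten, [],
        by simp, ?_, hq.rpsem⟩
      exact lsp_top hin hr1 hDb
    · -- c3
      obtain ⟨wsA, wsb, rfl, hA, hb⟩ := forall2_append_split hf₁
      obtain ⟨wsa, wsm, rfl, ha, hm'⟩ := forall2_append_split hA
      match wsm, hm' with
      | [zm], List.Forall₂.cons hm List.Forall₂.nil =>
        have hDa := frag_sound hcnf hfa ha
        have hDb := frag_sound hcnf hfb hb
        obtain ⟨hne, u', w', he, hu, hw⟩ := (semsym2_nt).mp hm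
        have hu' : LSp H P U₁ zm := by
          rcases he with rfl
          have : w' = [] := hw
          subst this
          simpa [LPSem] using hu
        have hmid : LSp H P U (zm ++ wsb.flatten) := lsp_top hu' hr1 hDb
        refine ⟨by simp [hDa.ne_nil hcnf], wsa.flatten ++ (zm ++ wsb.flatten), [],
          by simp, ?_, hq.rpsem⟩
        exact LSp.step hr2 hDa hmid
    · -- d1
      obtain ⟨wsa, wsb, rfl, ha, hb⟩ := forall2_append_split hf₁
      have hDa := frag_sound hcnf hfa ha
      have hDb := frag_sound hcnf hfb hb
      refine ⟨by simp [hDa.ne_nil hcnf], wsa.flatten, wsb.flatten, by simp, ?_, ?_⟩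
      · simpa [LPSem] using LSp.step hr1 hDa (LSp.refl U)
      · simpa [RPSem] using RSp.step hr2 hDb (RSp.refl V)
    · -- d2
      obtain ⟨wsA, wsb, rfl, hA, hb⟩ := forall2_append_split hf₁
      obtain ⟨wsa, wsm, rfl, ha, hm'⟩ := forall2_append_split hA
      match wsm, hm' with
      | [zm], List.Forall₂.cons hm List.Forall₂.nil =>
        have hDa := frag_sound hcnf hfa ha
        have hDb := frag_sound hcnf hfb hb
        obtain ⟨hne, u₂, w₂, rfl, hu, hw⟩ := (semsym2_nt).mp hm
        refine ⟨by simp [hDa.ne_nil hcnf], wsa.flatten ++ u₂, w₂ ++ wsb.flatten,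
          by simp, ?_, ?_⟩
        · exact LSp.step hr1 hDa hu
        · exact RSp.step hr2 hDb hw


variable (H)

/-- nonterminals whose components are listed in `Ns2` -/
def GoodP : OP H → Prop
  | none => True
  | some (X, U) => X ∈ Ns2 H ∧ U ∈ Ns2 H

/-- good nonterminals -/
def Good2 : NT2 H → Prop
  | none => True
  | some (p, q) => GoodP H p ∧ GoodP H q

variable {H}

set_option maxHeartbeats 3200000 in
lemma gnf_complete_main (hcnf : CNFform H) :
    ∀ k : ℕ,
      (∀ (R : H.NT) (z : List T), z.length ≤ k → DH R z →
        ∃ f, FragSpec H R f ∧ YS (gnf H) f z) ∧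
      (∀ (n : NT2 H) (z : List T), z.length ≤ k → Good2 H n → Sem2 H n z →
        YS (gnf H) [Symbol.nonterminal n] z) := by
  intro k
  induction k using Nat.strong_induction_on with
  | _ k ih =>
  have frag : ∀ (R : H.NT) (z : List T), z.length ≤ k → DH R z →
      ∃ f, FragSpec H R f ∧ YS (gnf H) f z := by
    intro R z hk hD
    have hz := hD.ne_nil hcnf
    rcases Nat.lt_or_ge z.length 2 with hl | hl
    · match z, hz with
      | [c], _ =>
        exact ⟨[Symbol.terminal c], Or.inl ⟨c, rfl, hD⟩, YS.ter c YS.nil⟩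
    · obtain ⟨B, C, z₁, z₂, hrule, h₁, h₂, rfl, hz₁, hz₂⟩ := hD.split hcnf hl
      obtain ⟨c, u, X, rfl, hXr, hls⟩ := extract_left hcnf h₁ hz₁
      obtain ⟨d, w, Y, rfl, hYr, hrs⟩ := extract_right hcnf h₂ hz₂
      rcases eq_or_ne (u ++ w) [] with huw | huw
      · have hu : u = [] := (List.append_eq_nil_iff.mp huw).1
        have hw : w = [] := (List.append_eq_nil_iff.mp huw).2
        subst hu hw
        refine ⟨[Symbol.terminal c, Symbol.terminal d],
          Or.inr (Or.inl ⟨c, d, B, C, rfl, hrule, by simpa using h₁, by simpa using h₂⟩), ?_⟩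
        simpa using YS.ter (g := gnf H) c (YS.ter d YS.nil)
      · have hmidlen : (u ++ w).length < k := by
          have := hk
          simp only [List.length_append, List.length_cons] at this ⊢
          omega
        have hmid : Sem2 H (some (some (X, B), some (Y, C))) (u ++ w) :=
          ⟨huw, u, w, rfl, hls, hrs⟩
        have hGood : Good2 H (some (some (X, B), some (Y, C))) :=
          ⟨⟨(pin_ter hXr).2, (pin_bin hrule).2.1⟩,
            ⟨(pin_ter hYr).2, (pin_bin hrule).2.2⟩⟩
        have hYSm := (ih _ hmidlen).2 _ _ le_rfl hGood hmid
        refine ⟨_, Or.inr (Or.inr ⟨c, d, X, B, Y, C, rfl, hrule, hXr, hYr⟩), ?_⟩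
        have hass : YS (gnf H)
            ([Symbol.nonterminal (some (some (X, B), some (Y, C)))] ++
              [Symbol.terminal d]) ((u ++ w) ++ [d]) :=
          hYSm.append (YS.ter d YS.nil)
        have := YS.ter (g := gnf H) c hass
        simpa [List.append_assoc] using this
  have quad : ∀ (n : NT2 H) (z : List T), z.length ≤ k → Good2 H n → Sem2 H n z →
      YS (gnf H) [Symbol.nonterminal n] z := by
    intro n z hk hg hs
    rcases n with _ | ⟨p, q⟩
    · obtain ⟨f, hfspec, hys⟩ := frag H.initial z hk hs
      have hmem : (⟨none, f⟩ : ContextFreeRule T (NT2 H)) ∈ (gnf H).rules :=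
        (mem_gnf_rules hcnf).mpr (Or.inl ⟨f, rfl, hfspec⟩)
      simpa using YS.nt (g := gnf H) _ hmem hys YS.nil
    obtain ⟨hne, u, w, rfl, hu, hw⟩ := hs
    rcases eq_or_ne u [] with rfl | hune
    · -- left part empty
      have hp : NullP H p := by
        rcases p with _ | ⟨X, U⟩
        · trivial
        · exact ⟨lsp_nil_inv hcnf hu rfl, by
            rcases hg with ⟨⟨hX, _⟩, _⟩; exact hX⟩
      have hwne : w ≠ [] := by simpa using hne
      rcases q with _ | ⟨Y, V⟩
      · exact absurd hw hwne
      obtain ⟨L₁, V₁, l₁, w₁, hrtop, hD₁, hrs₁, rfl⟩ := rsp_top_inv hcnf hw hwne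
      rcases eq_or_ne w₁ [] with rfl | hw₁ne
      · -- spine of length one : b1
        obtain rfl : Y = V₁ := rsp_nil_inv hcnf hrs₁ rfl
        obtain ⟨f, hfspec, hys⟩ := frag L₁ l₁ (by
          simp only [List.length_append] at hk ⊢; omega) hD₁
        have hmem : (⟨some (p, some (Y, V)), f⟩ : ContextFreeRule T (NT2 H)) ∈
            (gnf H).rules :=
          (mem_gnf_rules hcnf).mpr (Or.inr (Or.inl ⟨p, Y, V, L₁, f, rfl, hp, hrtop, hfspec⟩))
        simpa using YS.nt (g := gnf H) _ hmem hys YS.nil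
      · cases hrs₁ with
        | refl => exact absurd rfl hw₁ne
        | @step Y Q L V₁ l w₂ hrbot hDl hrs₂ =>
          have hlne : l ≠ [] := hDl.ne_nil hcnf
          have hl₁ne : l₁ ≠ [] := hD₁.ne_nil hcnf
          obtain ⟨f₁, hf₁spec, hys₁⟩ := frag L₁ l₁ (by
            simp only [List.length_append] at hk ⊢; omega) hD₁
          obtain ⟨f₂, hf₂spec, hys₂⟩ := frag L l (by
            simp only [List.length_append] at hk ⊢; omega) hDl
          rcases eq_or_ne w₂ [] with rfl | hw₂ne
          · -- b2
            obtain rfl : Q = V₁ := rsp_nil_inv hcnf hrs₂ rfl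
            have hmem : (⟨some (p, some (Y, V)), f₁ ++ f₂⟩ :
                ContextFreeRule T (NT2 H)) ∈ (gnf H).rules :=
              (mem_gnf_rules hcnf).mpr (Or.inr (Or.inr (Or.inl
                ⟨p, Y, V, L₁, Q, L, f₁, f₂, rfl, hp, hrtop, hrbot, hf₁spec, hf₂spec⟩)))
            have hout : YS (gnf H) (f₁ ++ f₂) (l₁ ++ l) := hys₁.append hys₂
            have := YS.nt (g := gnf H) _ hmem hout YS.nil
            simpa using this
          · -- b3
            have hmid : Sem2 H (some (none, some (Q, V₁))) w₂ :=
              ⟨hw₂ne, [], w₂, rfl, rfl, hrs₂⟩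
            have hGood : Good2 H (some (none, some (Q, V₁))) :=
              ⟨trivial, ⟨(pin_bin hrbot).1, (pin_bin hrtop).2.2⟩⟩
            have hmidlen : w₂.length < k := by
              have h1 : 0 < l₁.length := List.length_pos_iff.mpr hl₁ne
              have h2 : 0 < l.length := List.length_pos_iff.mpr hlne
              simp only [List.length_append] at hk
              omega
            have hYSm := (ih _ hmidlen).2 _ _ le_rfl hGood hmid
            have hmem : (⟨some (p, some (Y, V)),
                f₁ ++ [Symbol.nonterminal (some (none, some (Q, V₁)))] ++ f₂⟩ :
                ContextFreeRule T (NT2 H)) ∈ (gnf H).rules :=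
              (mem_gnf_rules hcnf).mpr (Or.inr (Or.inr (Or.inr (Or.inl
                ⟨p, Y, V, L₁, V₁, Q, L, f₁, f₂, rfl, hp, hrtop, hrbot,
                  hf₁spec, hf₂spec⟩))))
            have hout : YS (gnf H)
                (f₁ ++ [Symbol.nonterminal (some (none, some (Q, V₁)))] ++ f₂)
                (l₁ ++ w₂ ++ l) := (hys₁.append hYSm).append hys₂
            have := YS.nt (g := gnf H) _ hmem hout YS.nil
            simpa [List.append_assoc] using this
    rcases p with _ | ⟨X, U⟩
    · exact absurd hu hune
    rcases eq_or_ne w [] with rfl | hwne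
    · -- right part empty
      have hq : NullP H q := by
        rcases q with _ | ⟨Y, V⟩
        · trivial
        · exact ⟨rsp_nil_inv hcnf hw rfl, by
            rcases hg with ⟨_, ⟨hY, _⟩⟩; exact hY⟩
      cases hu with
      | refl => exact absurd rfl hune
      | @step X P R' U r u₂ hrbot hDr hls₂ =>
        have hrne : r ≠ [] := hDr.ne_nil hcnf
        obtain ⟨f₁, hf₁spec, hys₁⟩ := frag R' r (by
          simp only [List.length_append] at hk ⊢; omega) hDr
        rcases eq_or_ne u₂ [] with rfl | hu₂ne
        · -- c1
          obtain rfl : P = U := lsp_nil_inv hcnf hls₂ rfl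
          have hmem : (⟨some (some (X, P), q), f₁⟩ :
              ContextFreeRule T (NT2 H)) ∈ (gnf H).rules :=
            (mem_gnf_rules hcnf).mpr (Or.inr (Or.inr (Or.inr (Or.inr (Or.inl
              ⟨q, X, P, R', f₁, rfl, hq, hrbot, hf₁spec⟩)))))
          have := YS.nt (g := gnf H) _ hmem hys₁ YS.nil
          simpa using this
        · obtain ⟨U₁, R₁, u₁, r₁, hrtop, hls₁, hD₁, rfl⟩ := lsp_top_inv hcnf hls₂ hu₂ne
          have hr₁ne : r₁ ≠ [] := hD₁.ne_nil hcnf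
          obtain ⟨f₂, hf₂spec, hys₂⟩ := frag R₁ r₁ (by
            simp only [List.length_append] at hk ⊢; omega) hD₁
          rcases eq_or_ne u₁ [] with rfl | hu₁ne
          · -- c2
            obtain rfl : P = U₁ := lsp_nil_inv hcnf hls₁ rfl
            have hmem : (⟨some (some (X, U), q), f₁ ++ f₂⟩ :
                ContextFreeRule T (NT2 H)) ∈ (gnf H).rules :=
              (mem_gnf_rules hcnf).mpr (Or.inr (Or.inr (Or.inr (Or.inr (Or.inr (Or.inl
                ⟨q, X, U, P, R₁, R', f₁, f₂, rfl, hq, hrtop, hrbot,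
                  hf₁spec, hf₂spec⟩))))))
            have hout : YS (gnf H) (f₁ ++ f₂) (r ++ r₁) := hys₁.append hys₂
            have := YS.nt (g := gnf H) _ hmem hout YS.nil
            simpa using this
          · -- c3
            have hmid : Sem2 H (some (some (P, U₁), none)) u₁ :=
              ⟨hu₁ne, u₁, [], by simp, hls₁, rfl⟩
            have hGood : Good2 H (some (some (P, U₁), none)) :=
              ⟨⟨(pin_bin hrbot).1, (pin_bin hrtop).2.1⟩, trivial⟩
            have hmidlen : u₁.length < k := by
              have h1 : 0 < r.length := List.length_pos_iff.mpr hrne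
              have h2 : 0 < r₁.length := List.length_pos_iff.mpr hr₁ne
              simp only [List.length_append] at hk
              omega
            have hYSm := (ih _ hmidlen).2 _ _ le_rfl hGood hmid
            have hmem : (⟨some (some (X, U), q),
                f₁ ++ [Symbol.nonterminal (some (some (P, U₁), none))] ++ f₂⟩ :
                ContextFreeRule T (NT2 H)) ∈ (gnf H).rules :=
              (mem_gnf_rules hcnf).mpr (Or.inr (Or.inr (Or.inr (Or.inr (Or.inr (Or.inr
                (Or.inl ⟨q, X, U, U₁, R₁, P, R', f₁, f₂, rfl, hq, hrtop, hrbot,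
                  hf₁spec, hf₂spec⟩)))))))
            have hout : YS (gnf H)
                (f₁ ++ [Symbol.nonterminal (some (some (P, U₁), none))] ++ f₂)
                (r ++ u₁ ++ r₁) := (hys₁.append hYSm).append hys₂
            have := YS.nt (g := gnf H) _ hmem hout YS.nil
            simpa [List.append_assoc] using this
    · -- both parts nonempty
      rcases q with _ | ⟨Y, V⟩
      · exact absurd hw hwne
      cases hu with
      | refl => exact absurd rfl hune
      | @step X P R' U r u₂ hrbotL hDr hls₂ =>
        cases hw with
        | refl => exact absurd rfl hwne
        | @step Y Q L V l w₂ hrbotR hDl hrs₂ =>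
          have hrne : r ≠ [] := hDr.ne_nil hcnf
          have hlne : l ≠ [] := hDl.ne_nil hcnf
          obtain ⟨f₁, hf₁spec, hys₁⟩ := frag R' r (by
            simp only [List.length_append] at hk ⊢; omega) hDr
          obtain ⟨f₂, hf₂spec, hys₂⟩ := frag L l (by
            simp only [List.length_append] at hk ⊢; omega) hDl
          rcases eq_or_ne (u₂ ++ w₂) [] with huw | huw
          · -- d1
            have hu₂ : u₂ = [] := (List.append_eq_nil_iff.mp huw).1
            have hw₂ : w₂ = [] := (List.append_eq_nil_iff.mp huw).2
            subst hu₂ hw₂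
            obtain rfl : P = U := lsp_nil_inv hcnf hls₂ rfl
            obtain rfl : Q = V := rsp_nil_inv hcnf hrs₂ rfl
            have hmem : (⟨some (some (X, P), some (Y, Q)), f₁ ++ f₂⟩ :
                ContextFreeRule T (NT2 H)) ∈ (gnf H).rules :=
              (mem_gnf_rules hcnf).mpr (Or.inr (Or.inr (Or.inr (Or.inr (Or.inr (Or.inr
                (Or.inr (Or.inl ⟨X, P, Y, Q, R', L, f₁, f₂, rfl, hrbotL, hrbotR,
                  hf₁spec, hf₂spec⟩))))))))
            have hout : YS (gnf H) (f₁ ++ f₂) (r ++ l) := hys₁.append hys₂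
            have := YS.nt (g := gnf H) _ hmem hout YS.nil
            simpa using this
          · -- d2
            have hmid : Sem2 H (some (some (P, U), some (Q, V))) (u₂ ++ w₂) :=
              ⟨huw, u₂, w₂, rfl, hls₂, hrs₂⟩
            have hGood : Good2 H (some (some (P, U), some (Q, V))) := by
              rcases hg with ⟨⟨hX, hU⟩, ⟨hY, hV⟩⟩
              exact ⟨⟨(pin_bin hrbotL).1, hU⟩, ⟨(pin_bin hrbotR).1, hV⟩⟩
            have hmidlen : (u₂ ++ w₂).length < k := by
              have h1 : 0 < r.length := List.length_pos_iff.mpr hrne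
              have h2 : 0 < l.length := List.length_pos_iff.mpr hlne
              simp only [List.length_append] at hk ⊢
              omega
            have hYSm := (ih _ hmidlen).2 _ _ le_rfl hGood hmid
            have hUV : U ∈ Ns2 H ∧ V ∈ Ns2 H := by
              rcases hg with ⟨⟨hX, hU⟩, ⟨hY, hV⟩⟩
              exact ⟨hU, hV⟩
            have hmem : (⟨some (some (X, U), some (Y, V)),
                f₁ ++ [Symbol.nonterminal (some (some (P, U), some (Q, V)))] ++ f₂⟩ :
                ContextFreeRule T (NT2 H)) ∈ (gnf H).rules :=
              (mem_gnf_rules hcnf).mpr (Or.inr (Or.inr (Or.inr (Or.inr (Or.inr (Or.inr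
                (Or.inr (Or.inr ⟨X, U, Y, V, P, R', Q, L, f₁, f₂, rfl, hUV.1, hUV.2,
                  hrbotL, hrbotR, hf₁spec, hf₂spec⟩))))))))
            have hout : YS (gnf H)
                (f₁ ++ [Symbol.nonterminal (some (some (P, U), some (Q, V)))] ++ f₂)
                (r ++ (u₂ ++ w₂) ++ l) := (hys₁.append hYSm).append hys₂
            have := YS.nt (g := gnf H) _ hmem hout YS.nil
            simpa [List.append_assoc] using this
  exact ⟨frag, quad⟩


lemma gnf_language (hcnf : CNFform H) : (gnf H).language = H.language := by
  ext z
  rw [mem_language_iff_ys, mem_language_iff_ys]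
  constructor
  · intro h
    obtain ⟨ws, hw, hf⟩ := gnf_sound hcnf h
    subst hw
    match ws, hf with
    | [z'], List.Forall₂.cons hsem List.Forall₂.nil =>
      have hsem' : Sem2 H none z' := hsem
      simpa [DH, Sem2] using (hsem' : DH H.initial z')
  · intro h
    exact (gnf_complete_main hcnf z.length).2 none z le_rfl trivial
      (h : DH H.initial z)

end Stage2

end DGNF

/-- **Double Greibach normal form.**
For every context-free grammar `G` there exists a context-free grammar `G'` in which the
first and the last character of the right-hand side of every production are terminal
characters, such that `L(G') = L(G) \ {ε}`. -/
theorem double_greibach_normal_form {T : Type} (G : ContextFreeGrammar.{0} T) :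
    ∃ G' : ContextFreeGrammar.{0} T,
      (∀ r ∈ G'.rules,
          (∃ a : T, r.output.head? = some (Symbol.terminal a)) ∧
          (∃ b : T, r.output.getLast? = some (Symbol.terminal b))) ∧
      G'.language = G.language \ {([] : List T)} := by
  have hcnf : DGNF.CNFform (DGNF.cnf G) := fun r hr => DGNF.cnf_shape G hr
  refine ⟨DGNF.gnf (DGNF.cnf G), ?_, ?_⟩
  · intro r hr
    exact DGNF.gnf_shape hcnf hr
  · rw [DGNF.gnf_language hcnf, DGNF.cnf_language G]
end

section
/- Operator normal form: every context-free grammar can be transformed into an equivalent operator grammar, i.e., for every context-free grammar G there is a context-free grammar G' with L(G') = L(G) in which no production's right-hand side contains two adjacent nonterminal symbols. -/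
/-!
Operator normal form for context-free grammars.

Strategy: first eliminate ε-rules (`epsElim`), then build the "pair grammar"
whose nonterminals `(A, t)` generate exactly the words `w` such that `A` generates
`w ++ [t]`; all its rules are in operator form.
-/

open ContextFreeGrammar

namespace OpNF

variable {T : Type} {N : Type}

/-- Rewriting an append happens on one side. -/
lemma rewrites_append_cases {r : ContextFreeRule T N} {u v z : List (Symbol T N)}
    (h : r.Rewrites (u ++ v) z) :
    (∃ u', r.Rewrites u u' ∧ z = u' ++ v) ∨ (∃ v', r.Rewrites v v' ∧ z = u ++ v') := by
  rw [ContextFreeRule.rewrites_iff] at h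
  obtain ⟨p, q, huv, hz⟩ := h
  rw [List.append_assoc] at huv
  rcases List.append_eq_append_iff.mp huv with ⟨a, hp, hv⟩ | ⟨c, hu, hq⟩
  · -- p = u ++ a, v = a ++ [nt] ++ q
    right
    refine ⟨a ++ r.output ++ q, ?_, ?_⟩
    · rw [hv, ← List.append_assoc]
      exact ContextFreeRule.rewrites_of_exists_parts r a q
    · rw [hz, hp]; simp
  · -- u = p ++ c, [nt] ++ q = c ++ v
    rcases c with _ | ⟨x, c'⟩
    · -- c = [], u = p, v = [nt] ++ q
      right
      simp only [List.append_nil] at hu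
      refine ⟨r.output ++ q, ?_, ?_⟩
      · have : v = [Symbol.nonterminal r.input] ++ q := by simpa using hq.symm
        rw [this]
        exact ContextFreeRule.rewrites_of_exists_parts r [] q
      · rw [hz, hu]; simp
    · -- c = x :: c'
      left
      have hx : Symbol.nonterminal r.input = x ∧ q = c' ++ v := by
        simpa using hq
      refine ⟨p ++ r.output ++ c', ?_, ?_⟩
      · rw [hu, ← hx.1]
        simpa using ContextFreeRule.rewrites_of_exists_parts r p c'
      · rw [hz, hx.2]; simp

variable {g : ContextFreeGrammar.{0} T}

lemma derives_append_append {u₁ v₁ u₂ v₂ : List (Symbol T g.NT)}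
    (h₁ : g.Derives u₁ v₁) (h₂ : g.Derives u₂ v₂) :
    g.Derives (u₁ ++ u₂) (v₁ ++ v₂) :=
  (h₁.append_right u₂).trans (h₂.append_left v₁)

lemma no_nt_no_rewrite {r : ContextFreeRule T g.NT} {u z : List (Symbol T g.NT)}
    (hu : ∀ B : g.NT, Symbol.nonterminal B ∉ u) (h : r.Rewrites u z) : False := by
  obtain ⟨p, q, hpq, -⟩ := h.exists_parts
  exact hu r.input (by rw [hpq]; simp)

lemma derives_of_all_terminal {w : List T} {z : List (Symbol T g.NT)}
    (h : g.Derives (w.map Symbol.terminal) z) : z = w.map Symbol.terminal := by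
  rcases h.eq_or_head with h' | ⟨v, ⟨r, _, hr⟩, _⟩
  · exact h'.symm
  · exact absurd hr (fun hr => no_nt_no_rewrite (by simp) hr)

/-- Length-indexed derivations. -/
inductive DerivesIn (g : ContextFreeGrammar.{0} T) :
    ℕ → List (Symbol T g.NT) → List (Symbol T g.NT) → Prop
  | refl (u : List (Symbol T g.NT)) : DerivesIn g 0 u u
  | head {n u v w} (huv : g.Produces u v) (hvw : DerivesIn g n v w) : DerivesIn g (n + 1) u w

lemma DerivesIn.toDerives {n : ℕ} {u v : List (Symbol T g.NT)}
    (h : DerivesIn g n u v) : g.Derives u v := by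
  induction h with
  | refl => rfl
  | head huv _ ih => exact huv.trans_derives ih

lemma DerivesIn.zero_eq {u v : List (Symbol T g.NT)} (h : DerivesIn g 0 u v) : u = v := by
  cases h; rfl

lemma derives_iff_derivesIn {u v : List (Symbol T g.NT)} :
    g.Derives u v ↔ ∃ n, DerivesIn g n u v := by
  constructor
  · intro h
    induction h with
    | refl => exact ⟨0, .refl u⟩
    | tail _ last ih =>
      obtain ⟨n, hn⟩ := ih
      refine ⟨n + 1, ?_⟩
      clear * - hn last
      induction hn with
      | refl => exact .head last (.refl _)
      | head huv _ ih => exact .head huv (ih last)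
  · exact fun ⟨n, hn⟩ => hn.toDerives

lemma DerivesIn.split {n : ℕ} {u v w : List (Symbol T g.NT)}
    (h : DerivesIn g n (u ++ v) w) :
    ∃ n₁ n₂ w₁ w₂, n₁ + n₂ = n ∧ w = w₁ ++ w₂ ∧
      DerivesIn g n₁ u w₁ ∧ DerivesIn g n₂ v w₂ := by
  induction n generalizing u v with
  | zero =>
    cases h
    exact ⟨0, 0, u, v, rfl, rfl, .refl u, .refl v⟩
  | succ n ih =>
    rcases h with _ | ⟨⟨r, hrg, hr⟩, hvw⟩
    rcases rewrites_append_cases hr with ⟨u', hu', rfl⟩ | ⟨v', hv', rfl⟩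
    · obtain ⟨n₁, n₂, w₁, w₂, hn, hw, h₁, h₂⟩ := ih hvw
      exact ⟨n₁ + 1, n₂, w₁, w₂, by omega, hw, .head ⟨r, hrg, hu'⟩ h₁, h₂⟩
    · obtain ⟨n₁, n₂, w₁, w₂, hn, hw, h₁, h₂⟩ := ih hvw
      exact ⟨n₁, n₂ + 1, w₁, w₂, by omega, hw, h₁, .head ⟨r, hrg, hv'⟩ h₂⟩

lemma DerivesIn.all_terminal {n : ℕ} {w : List T} {z : List (Symbol T g.NT)}
    (h : DerivesIn g n (w.map Symbol.terminal) z) : z = w.map Symbol.terminal :=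
  derives_of_all_terminal h.toDerives

/-- If every rule is a derivable consequence in `g`, derivations lift to `g`. -/
lemma lift_derives {rs : Finset (ContextFreeRule T g.NT)} {i : g.NT}
    (hrs : ∀ r ∈ rs, g.Derives [Symbol.nonterminal r.input] r.output)
    {u v : List (Symbol T g.NT)}
    (h : (ContextFreeGrammar.mk g.NT i rs).Derives u v) : g.Derives u v := by
  induction h with
  | refl => rfl
  | tail _ last ih =>
    obtain ⟨r, hrg, hr⟩ := last
    obtain ⟨p, q, rfl, rfl⟩ := hr.exists_parts
    refine ih.trans ?_
    have := ((hrs r hrg).append_left p).append_right q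
    simpa using this

lemma produces_length_le {u v : List (Symbol T g.NT)}
    (hout : ∀ r ∈ g.rules, r.output ≠ []) (h : g.Produces u v) : u.length ≤ v.length := by
  obtain ⟨r, hrg, hr⟩ := h
  obtain ⟨p, q, rfl, rfl⟩ := hr.exists_parts
  have : 1 ≤ r.output.length := List.length_pos_iff.mpr (hout r hrg)
  simp; omega

lemma derives_length_le {u v : List (Symbol T g.NT)}
    (hout : ∀ r ∈ g.rules, r.output ≠ []) (h : g.Derives u v) : u.length ≤ v.length := by
  induction h with
  | refl => exact le_refl _
  | tail _ last ih => exact ih.trans (produces_length_le hout last)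

lemma derives_terminal_mem {u v : List (Symbol T g.NT)} (h : g.Derives u v)
    {a : T} (ha : Symbol.terminal a ∈ v) :
    Symbol.terminal a ∈ u ∨ ∃ r ∈ g.rules, Symbol.terminal a ∈ r.output := by
  induction h with
  | refl => exact .inl ha
  | tail _ last ih =>
    obtain ⟨r, hrg, hr⟩ := last
    obtain ⟨p, q, rfl, rfl⟩ := hr.exists_parts
    simp only [List.mem_append] at ha
    rcases ha with (ha | ha) | ha
    · exact ih (by simp [ha])
    · exact .inr ⟨r, hrg, ha⟩
    · exact ih (by simp [ha])

lemma map_terminal_inj {N : Type} {y z : List T}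
    (h : y.map (Symbol.terminal : T → Symbol T N) = z.map Symbol.terminal) : y = z := by
  have hinj : Function.Injective (Symbol.terminal : T → Symbol T N) :=
    fun a b hab => by injection hab
  exact List.map_injective_iff.mpr hinj h

/-- Decompose a terminal word along an append. -/
lemma map_terminal_eq_append {w : List T} {u v : List (Symbol T g.NT)}
    (h : w.map Symbol.terminal = u ++ v) :
    ∃ w₁ w₂, w = w₁ ++ w₂ ∧ u = w₁.map Symbol.terminal ∧ v = w₂.map Symbol.terminal := by
  refine ⟨w.take u.length, w.drop u.length, (List.take_append_drop _ w).symm, ?_, ?_⟩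
  · have := congrArg (List.take u.length) h
    simpa [List.map_take] using this.symm
  · have := congrArg (List.drop u.length) h
    simpa [List.map_drop] using this.symm

section EpsElim

attribute [local instance] Classical.propDecidable

variable (g : ContextFreeGrammar.{0} T)

/-- A nonterminal is nullable if it derives the empty word. -/
def Nullable (B : g.NT) : Prop := g.Derives [Symbol.nonterminal B] []

/-- `NullDel g u v`: `v` is obtained from `u` by deleting some nullable nonterminal
occurrences. -/
inductive NullDel : List (Symbol T g.NT) → List (Symbol T g.NT) → Prop
  | nil : NullDel [] []
  | keep {u v} (x) : NullDel u v → NullDel (x :: u) (x :: v)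
  | del {u v B} (hB : Nullable g B) : NullDel u v → NullDel (Symbol.nonterminal B :: u) v

lemma nullDel_refl (u : List (Symbol T g.NT)) : NullDel g u u := by
  induction u with
  | nil => exact .nil
  | cons x u ih => exact .keep x ih

lemma NullDel.append {u u' v v' : List (Symbol T g.NT)}
    (h₁ : NullDel g u u') (h₂ : NullDel g v v') : NullDel g (u ++ v) (u' ++ v') := by
  induction h₁ with
  | nil => exact h₂
  | keep x _ ih => exact .keep x ih
  | del hB _ ih => exact .del hB ih

lemma NullDel.split {u v z : List (Symbol T g.NT)} (h : NullDel g (u ++ v) z) :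
    ∃ z₁ z₂, z = z₁ ++ z₂ ∧ NullDel g u z₁ ∧ NullDel g v z₂ := by
  induction u generalizing z with
  | nil => exact ⟨[], z, rfl, .nil, h⟩
  | cons x u ih =>
    rcases h with _ | ⟨_, h'⟩ | ⟨hB, h'⟩
    · obtain ⟨z₁, z₂, rfl, h₁, h₂⟩ := ih h'
      exact ⟨x :: z₁, z₂, rfl, .keep x h₁, h₂⟩
    · obtain ⟨z₁, z₂, rfl, h₁, h₂⟩ := ih h'
      exact ⟨z₁, z₂, rfl, .del hB h₁, h₂⟩

lemma NullDel.derives {u v : List (Symbol T g.NT)} (h : NullDel g u v) : g.Derives u v := by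
  induction h with
  | nil => rfl
  | keep x _ ih => exact ih.append_left [x]
  | del hB h ih =>
    refine Relation.ReflTransGen.trans ?_ ih
    exact (hB.append_right _)

/-- All ways of deleting nullable occurrences. -/
noncomputable def nullableSubs : List (Symbol T g.NT) → List (List (Symbol T g.NT))
  | [] => [[]]
  | x :: u => (nullableSubs u).map (x :: ·) ++
      (if ∃ B, x = Symbol.nonterminal B ∧ Nullable g B then nullableSubs u else [])

lemma mem_nullableSubs {u v : List (Symbol T g.NT)} (h : NullDel g u v) :
    v ∈ nullableSubs g u := by
  induction h with
  | nil => simp [nullableSubs]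
  | keep x _ ih =>
    simp only [nullableSubs, List.mem_append, List.mem_map]
    exact .inl ⟨_, ih, rfl⟩
  | del hB _ ih =>
    simp only [nullableSubs, List.mem_append]
    right
    rw [if_pos ⟨_, rfl, hB⟩]
    exact ih

lemma nullDel_of_mem_nullableSubs {u v : List (Symbol T g.NT)} (h : v ∈ nullableSubs g u) :
    NullDel g u v := by
  induction u generalizing v with
  | nil => simp [nullableSubs] at h; subst h; exact .nil
  | cons x u ih =>
    simp only [nullableSubs, List.mem_append, List.mem_map] at h
    rcases h with ⟨v', hv', rfl⟩ | h
    · exact .keep x (ih hv')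
    · by_cases hx : ∃ B, x = Symbol.nonterminal B ∧ Nullable g B
      · obtain ⟨B, rfl, hB⟩ := hx
        rw [if_pos ⟨B, rfl, hB⟩] at h
        exact .del hB (ih h)
      · rw [if_neg hx] at h
        simp at h

/-- The ε-elimination grammar. -/
noncomputable def epsElim : ContextFreeGrammar.{0} T :=
  ⟨g.NT, g.initial,
    (g.rules.toList.flatMap fun r =>
      ((nullableSubs g r.output).filter (· ≠ [])).map
        fun o => ⟨r.input, o⟩).toFinset⟩

lemma mem_epsElim_rules {r' : ContextFreeRule T g.NT} :
    r' ∈ (epsElim g).rules ↔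
      ∃ r ∈ g.rules, r'.input = r.input ∧ r'.output ∈ nullableSubs g r.output ∧
        r'.output ≠ [] := by
  show r' ∈ List.toFinset _ ↔ _
  rw [List.mem_toFinset, List.mem_flatMap]
  constructor
  · rintro ⟨r, hr, hmem⟩
    simp only [List.mem_map, List.mem_filter] at hmem
    obtain ⟨o, ⟨ho, ho'⟩, rfl⟩ := hmem
    exact ⟨r, (Finset.mem_toList).mp hr, rfl, ho, by simpa using ho'⟩
  · rintro ⟨r, hr, hin, hout, hne⟩
    refine ⟨r, (Finset.mem_toList).mpr hr, ?_⟩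
    simp only [List.mem_map, List.mem_filter]
    exact ⟨r'.output, ⟨hout, by simpa using hne⟩, by cases r'; simp_all⟩

lemma epsElim_output_nonempty : ∀ r ∈ (epsElim g).rules, r.output ≠ [] := by
  intro r hr
  exact ((mem_epsElim_rules g).mp hr).choose_spec.2.2.2

lemma epsElim_derives_sub {u v : List (Symbol T g.NT)}
    (h : (epsElim g).Derives u v) : g.Derives u v := by
  refine lift_derives ?_ h
  intro r hr
  obtain ⟨r₀, hr₀, hin, hout, -⟩ := (mem_epsElim_rules g).mp hr
  have h1 : g.Derives [Symbol.nonterminal r.input] r₀.output := by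
    rw [hin]
    exact (Produces.single ⟨r₀, hr₀, ContextFreeRule.Rewrites.input_output⟩)
  exact h1.trans (NullDel.derives g (nullDel_of_mem_nullableSubs g hout))

lemma epsElim_derives_of {u : List (Symbol T g.NT)} {w : List T} (hw : w ≠ [])
    (h : g.Derives u (w.map Symbol.terminal)) :
    ∃ u', NullDel g u u' ∧ u' ≠ [] ∧ (epsElim g).Derives u' (w.map Symbol.terminal) := by
  induction h using Relation.ReflTransGen.head_induction_on with
  | refl =>
    exact ⟨w.map Symbol.terminal, nullDel_refl g _, by simpa using hw, Derives.refl _⟩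
  | head hp _ ih =>
    obtain ⟨v', hdel, hne, hder⟩ := ih
    obtain ⟨r, hrg, hr⟩ := hp
    obtain ⟨p, q, rfl, rfl⟩ := hr.exists_parts
    obtain ⟨p', rest, hv', hdp, hrest⟩ := NullDel.split g (by
      rw [List.append_assoc] at hdel; exact hdel)
    obtain ⟨α', q', hrest', hda, hdq⟩ := NullDel.split g hrest
    subst hrest'
    by_cases hα : α' = []
    · subst hα
      have hA : Nullable g r.input :=
        Relation.ReflTransGen.trans
          (Produces.single ⟨r, hrg, ContextFreeRule.Rewrites.input_output⟩)
          (NullDel.derives g hda)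
      refine ⟨p' ++ q', ?_, ?_, ?_⟩
      · have : NullDel g ([Symbol.nonterminal r.input] ++ q) q' := .del hA hdq
        have := NullDel.append g hdp this
        rwa [List.append_assoc]
      · rw [hv'] at hne; simpa using hne
      · rw [hv'] at hder; simpa using hder
    · refine ⟨p' ++ [Symbol.nonterminal r.input] ++ q', ?_, by simp, ?_⟩
      · have : NullDel g ([Symbol.nonterminal r.input] ++ q)
            ([Symbol.nonterminal r.input] ++ q') := .keep _ hdq
        have := NullDel.append g hdp this
        rwa [List.append_assoc, List.append_assoc]
      · have hrule : (⟨r.input, α'⟩ : ContextFreeRule T g.NT) ∈ (epsElim g).rules :=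
          (mem_epsElim_rules g).mpr ⟨r, hrg, rfl, mem_nullableSubs g hda, hα⟩
        have hprod : (epsElim g).Produces (p' ++ [Symbol.nonterminal r.input] ++ q')
            (p' ++ α' ++ q') :=
          ⟨_, hrule, ContextFreeRule.rewrites_of_exists_parts _ p' q'⟩
        rw [hv'] at hder
        exact hprod.trans_derives (by rw [List.append_assoc]; exact hder)

lemma mem_epsElim_language_iff {w : List T} :
    w ∈ (epsElim g).language ↔ w ∈ g.language ∧ w ≠ [] := by
  constructor
  · intro hwg
    rw [mem_language_iff] at hwg
    constructor
    · exact (mem_language_iff g w).mpr (epsElim_derives_sub g hwg)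
    · intro hw
      subst hw
      have := derives_length_le (epsElim_output_nonempty g) hwg
      simp at this
  · rintro ⟨hw, hne⟩
    rw [mem_language_iff] at hw
    obtain ⟨u', hdel, hne', hder⟩ := epsElim_derives_of g hne hw
    have : u' = [Symbol.nonterminal g.initial] := by
      rcases hdel with _ | ⟨_, h'⟩ | ⟨_, h'⟩
      · cases h'; rfl
      · cases h'; simp at hne'
    rw [this] at hder
    exact (mem_language_iff _ w).mpr hder

end EpsElim

section Pair

attribute [local instance] Classical.propDecidable

variable (g : ContextFreeGrammar.{0} T)

/-- Terminals occurring in the rules of `g`. -/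
noncomputable def Tf : List T :=
  (g.rules.toList.map (·.output)).flatten.filterMap
    fun s => match s with | .terminal t => some t | .nonterminal _ => none

lemma mem_Tf {a : T} : a ∈ Tf g ↔ ∃ r ∈ g.rules, Symbol.terminal a ∈ r.output := by
  simp only [Tf, List.mem_filterMap, List.mem_flatten, List.mem_map]
  constructor
  · rintro ⟨s, ⟨l, ⟨r, hr, rfl⟩, hs⟩, hmatch⟩
    cases s with
    | terminal t => simp at hmatch; exact ⟨r, Finset.mem_toList.mp hr, hmatch ▸ hs⟩
    | nonterminal => simp at hmatch
  · rintro ⟨r, hr, ha⟩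
    exact ⟨Symbol.terminal a, ⟨r.output, ⟨r, Finset.mem_toList.mpr hr, rfl⟩, ha⟩, rfl⟩

/-- Translations of a right-hand-side prefix into the pair grammar. -/
noncomputable def tauList : List (Symbol T g.NT) → List (List (Symbol T (Option (g.NT × T))))
  | [] => [[]]
  | .terminal a :: β => (tauList β).map (.terminal a :: ·)
  | .nonterminal B :: β =>
      (Tf g).flatMap fun b =>
        (tauList β).map fun γ =>
          .nonterminal (some (B, b)) :: .terminal b :: γ

/-- Rules of the pair grammar coming from a rule `A → β ++ [x]`. -/
noncomputable def pairRules (A : g.NT) (β : List (Symbol T g.NT)) :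
    Symbol T g.NT → List (ContextFreeRule T (Option (g.NT × T)))
  | .terminal t => (tauList g β).map fun γ => ⟨some (A, t), γ⟩
  | .nonterminal B =>
      (Tf g).flatMap fun t =>
        (tauList g β).map fun γ => ⟨some (A, t), γ ++ [.nonterminal (some (B, t))]⟩

/-- The pair grammar: an operator grammar equivalent to `g` (for ε-free `g`),
with the empty word added when `eps = true`. -/
noncomputable def pairGrammar (eps : Bool) : ContextFreeGrammar.{0} T :=
  ⟨Option (g.NT × T), none,
    ((if eps then [({ input := none, output := [] } : ContextFreeRule T (Option (g.NT × T)))] else []) ++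
      ((Tf g).map fun t =>
        ({ input := none,
           output := [.nonterminal (some (g.initial, t)), .terminal t] } :
          ContextFreeRule T (Option (g.NT × T)))) ++
      (g.rules.toList.flatMap fun r =>
        if h : r.output = [] then []
        else pairRules g r.input r.output.dropLast (r.output.getLast h))).toFinset⟩

lemma mem_pairGrammar_rules {eps : Bool} {r' : ContextFreeRule T (Option (g.NT × T))} :
    r' ∈ (pairGrammar g eps).rules ↔
      (eps = true ∧ r' = ⟨none, []⟩) ∨
      (∃ t ∈ Tf g, r' = ⟨none, [.nonterminal (some (g.initial, t)), .terminal t]⟩) ∨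
      (∃ r ∈ g.rules, ∃ h : r.output ≠ [],
        r' ∈ pairRules g r.input r.output.dropLast (r.output.getLast h)) := by
  show r' ∈ List.toFinset _ ↔ _
  rw [List.mem_toFinset]
  simp only [List.mem_append, List.mem_map, List.mem_flatMap]
  constructor
  · rintro ((h | h) | ⟨r, hr, h⟩)
    · left
      rcases eps with _ | _ <;> simp_all
    · right; left
      obtain ⟨t, ht, rfl⟩ := h
      exact ⟨t, ht, rfl⟩
    · right; right
      refine ⟨r, Finset.mem_toList.mp hr, ?_⟩
      by_cases hro : r.output = []
      · rw [dif_pos hro] at h; simp at h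
      · rw [dif_neg hro] at h; exact ⟨hro, h⟩
  · rintro ((⟨heps, rfl⟩) | ⟨t, ht, rfl⟩ | ⟨r, hr, hro, h⟩)
    · left; left; simp [heps]
    · left; right; exact ⟨t, ht, rfl⟩
    · right
      refine ⟨r, Finset.mem_toList.mpr hr, ?_⟩
      rw [dif_neg hro]; exact h

/-- `Good u v` : the pair-grammar sentential form `u` (with its pending terminals)
corresponds to the `g`-sentential form `v`. -/
inductive Good : List (Symbol T (Option (g.NT × T))) → List (Symbol T g.NT) → Prop
  | nil : Good [] []
  | term {u v} (a : T) : Good u v → Good (.terminal a :: u) (.terminal a :: v)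
  | pair {u v} (B : g.NT) (s : T) : Good u v →
      Good (.nonterminal (some (B, s)) :: .terminal s :: u) (.nonterminal B :: v)

lemma Good.append {u v u' v'} (h : Good g u v) (h' : Good g u' v') :
    Good g (u ++ u') (v ++ v') := by
  induction h with
  | nil => exact h'
  | term a _ ih => exact .term a ih
  | pair B s _ ih => exact .pair B s ih

lemma good_tau {β γ} (h : γ ∈ tauList g β) : Good g γ β := by
  induction β generalizing γ with
  | nil => simp [tauList] at h; subst h; exact .nil
  | cons x β ih =>
    cases x with
    | terminal a =>
      simp only [tauList, List.mem_map] at h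
      obtain ⟨γ', hγ', rfl⟩ := h
      exact .term a (ih hγ')
    | nonterminal B =>
      simp only [tauList, List.mem_flatMap, List.mem_map] at h
      obtain ⟨b, -, γ', hγ', rfl⟩ := h
      exact .pair B b (ih hγ')

lemma good_map_terminal (w : List T) : Good g (w.map .terminal) (w.map .terminal) := by
  induction w with
  | nil => exact .nil
  | cons a w ih => exact .term a ih

lemma good_all_terminal {w : List T} {v} (h : Good g (w.map .terminal) v) :
    v = w.map .terminal := by
  induction w generalizing v with
  | nil => cases h; rfl
  | cons a w ih =>
    cases h with
    | term _ h' => simp [ih h']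

lemma good_split_at_nt {u v : List _} {p q : List _} {X}
    (h : Good g u v) (hu : u = p ++ .nonterminal X :: q) :
    ∃ B s q' vp vq, X = some (B, s) ∧ q = .terminal s :: q' ∧
      v = vp ++ .nonterminal B :: vq ∧ Good g p vp ∧ Good g q' vq := by
  induction h generalizing p with
  | nil => simp at hu
  | term a h' ih =>
    rcases p with _ | ⟨y, p⟩
    · simp at hu
    · simp only [List.cons_append, List.cons.injEq] at hu
      obtain ⟨rfl, hu'⟩ := hu
      obtain ⟨B, s, q', vp, vq, h1, h2, h3, h4, h5⟩ := ih hu'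
      exact ⟨B, s, q', .terminal a :: vp, vq, h1, h2, by rw [h3]; rfl, .term a h4, h5⟩
  | @pair u' v' B s h' ih =>
    rcases p with _ | ⟨y, p⟩
    · simp only [List.nil_append, List.cons.injEq] at hu
      obtain ⟨hX, hq⟩ := hu
      exact ⟨B, s, u', [], v', by simpa using hX.symm, hq.symm, rfl, .nil, h'⟩
    · simp only [List.cons_append, List.cons.injEq] at hu
      obtain ⟨rfl, hu'⟩ := hu
      rcases p with _ | ⟨z, p⟩
      · simp at hu'
      · simp only [List.cons_append, List.cons.injEq] at hu'
        obtain ⟨rfl, hu''⟩ := hu'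
        obtain ⟨B', s', q', vp, vq, h1, h2, h3, h4, h5⟩ := ih hu''
        exact ⟨B', s', q', .nonterminal B :: vp, vq, h1, h2, by rw [h3]; rfl,
          .pair B s h4, h5⟩

lemma pair_step {eps : Bool} {u u' : List (Symbol T (Option (g.NT × T)))}
    {v : List (Symbol T g.NT)}
    (hg : Good g u v) (h : (pairGrammar g eps).Produces u u') :
    ∃ v', Good g u' v' ∧ g.Produces v v' := by
  obtain ⟨r', hr', hrw⟩ := h
  change ContextFreeRule T (Option (g.NT × T)) at r'
  change @ContextFreeRule.Rewrites T (Option (g.NT × T)) r' u u' at hrw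
  obtain ⟨p, q, hu, hu'⟩ := hrw.exists_parts
  obtain ⟨B, s, q', vp, vq, hX, hq, hv, hgp, hgq⟩ :=
    good_split_at_nt g hg (by simpa using hu)
  rcases (mem_pairGrammar_rules g).mp hr' with ⟨-, rfl⟩ | ⟨t, -, rfl⟩ | ⟨r, hrg, hro, hmem⟩
  · simp at hX
  · simp at hX
  · have hrout : r.output.dropLast ++ [r.output.getLast hro] = r.output :=
      List.dropLast_append_getLast hro
    set β := r.output.dropLast with hβ
    cases hx : r.output.getLast hro with
    | terminal t =>
      rw [hx] at hmem
      simp only [pairRules, List.mem_map] at hmem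
      obtain ⟨γ, hγ, hr'eq⟩ := hmem
      have hin : r'.input = some (r.input, t) := by rw [← hr'eq]
      have hout : r'.output = γ := by rw [← hr'eq]
      rw [hX] at hin
      obtain ⟨rfl, rfl⟩ : B = r.input ∧ s = t := by
        have h2 := Option.some.inj hin
        exact ⟨congrArg Prod.fst h2, congrArg Prod.snd h2⟩
      refine ⟨vp ++ r.output ++ vq, ?_, ?_⟩
      · rw [hu', hout, hq, ← hrout, hx]
        have : Good g (γ ++ (Symbol.terminal s :: q')) (β ++ (Symbol.terminal s :: vq)) :=
          Good.append g (good_tau g hγ) (Good.term s hgq)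
        have := Good.append g hgp this
        simpa using this
      · refine ⟨r, hrg, ?_⟩
        rw [hv]
        have := ContextFreeRule.rewrites_of_exists_parts r vp vq
        simpa using this
    | nonterminal C =>
      rw [hx] at hmem
      simp only [pairRules, List.mem_flatMap, List.mem_map] at hmem
      obtain ⟨t, -, γ, hγ, hr'eq⟩ := hmem
      have hin : r'.input = some (r.input, t) := by rw [← hr'eq]
      have hout : r'.output = γ ++ [Symbol.nonterminal (some (C, t))] := by rw [← hr'eq]
      rw [hX] at hin
      obtain ⟨rfl, rfl⟩ : B = r.input ∧ s = t := by
        have h2 := Option.some.inj hin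
        exact ⟨congrArg Prod.fst h2, congrArg Prod.snd h2⟩
      refine ⟨vp ++ r.output ++ vq, ?_, ?_⟩
      · rw [hu', hout, hq, ← hrout, hx]
        have : Good g ((γ ++ [Symbol.nonterminal (some (C, s))]) ++ (Symbol.terminal s :: q'))
            (β ++ (Symbol.nonterminal C :: vq)) := by
          have := Good.append g (good_tau g hγ) (Good.pair C s hgq)
          simpa using this
        have := Good.append g hgp this
        simpa using this
      · refine ⟨r, hrg, ?_⟩
        rw [hv]
        have := ContextFreeRule.rewrites_of_exists_parts r vp vq
        simpa using this

lemma pair_derives_sound {eps : Bool} {u : List (Symbol T (Option (g.NT × T)))}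
    {v : List (Symbol T g.NT)} {w : List T}
    (hg : Good g u v) (h : (pairGrammar g eps).Derives u (w.map .terminal)) :
    g.Derives v (w.map .terminal) := by
  induction h using Relation.ReflTransGen.head_induction_on generalizing v with
  | refl => rw [good_all_terminal g hg]
  | head hp _ ih =>
    obtain ⟨v', hg', hpv⟩ := pair_step g hg hp
    exact hpv.trans_derives (ih hg')

lemma append_singleton_eq {α : Type _} {p q : List α} {x a : α}
    (h : p ++ [x] ++ q = [a]) : p = [] ∧ x = a ∧ q = [] := by
  cases p <;> simp_all

lemma tau_derives {eps : Bool} (n : ℕ) (β : List (Symbol T g.NT)) (y : List T)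
    (hne : ∀ r ∈ g.rules, r.output ≠ [])
    (hder : DerivesIn g n β (y.map .terminal))
    (ih : ∀ k ≤ n, ∀ (A : g.NT) (w : List T) (t : T),
      DerivesIn g k [.nonterminal A] ((w ++ [t]).map .terminal) →
      (pairGrammar g eps).Derives [.nonterminal (some (A, t))] (w.map .terminal)) :
    ∃ γ ∈ tauList g β, (pairGrammar g eps).Derives γ (y.map .terminal) := by
  induction β generalizing n y with
  | nil =>
    have h0 : y.map Symbol.terminal = ([] : List T).map Symbol.terminal :=
      derives_of_all_terminal (by simpa using hder.toDerives)
    have hy : y = [] := by simpa using h0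
    subst hy
    exact ⟨[], by simp [tauList], Derives.refl _⟩
  | cons x β ihβ =>
    obtain ⟨n₁, n₂, w₁, w₂, hn, hw, d₁, d₂⟩ := DerivesIn.split (u := [x]) (by simpa using hder)
    obtain ⟨y₁, y₂, rfl, hw₁, hw₂⟩ := map_terminal_eq_append hw
    subst hw₁; subst hw₂
    cases x with
    | terminal a =>
      have hy₁ : y₁.map Symbol.terminal = ([a] : List T).map Symbol.terminal :=
        derives_of_all_terminal (by simpa using d₁.toDerives)
      have : y₁ = [a] := map_terminal_inj hy₁
      subst this
      obtain ⟨γ, hγ, hγd⟩ := ihβ n₂ y₂ d₂ (fun k hk => ih k (by omega))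
      refine ⟨Symbol.terminal a :: γ, ?_, ?_⟩
      · simp only [tauList, List.mem_map]
        exact ⟨γ, hγ, rfl⟩
      · have := hγd.append_left [Symbol.terminal a]
        exact this
    | nonterminal B =>
      have hy₁ne : y₁ ≠ [] := by
        intro hy
        subst hy
        have := derives_length_le hne d₁.toDerives
        simp at this
      obtain ⟨y₁', b, rfl⟩ : ∃ y₁' b, y₁ = y₁' ++ [b] :=
        ⟨y₁.dropLast, y₁.getLast hy₁ne, (List.dropLast_append_getLast hy₁ne).symm⟩
      have hbTf : b ∈ Tf g := by
        rcases derives_terminal_mem d₁.toDerives (a := b) (by simp) with hb | ⟨r, hr, hb⟩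
        · simp at hb
        · exact (mem_Tf g).mpr ⟨r, hr, hb⟩
      have hB : (pairGrammar g eps).Derives [.nonterminal (some (B, b))]
          (y₁'.map .terminal) := ih n₁ (by omega) B y₁' b d₁
      obtain ⟨γ, hγ, hγd⟩ := ihβ n₂ y₂ d₂ (fun k hk => ih k (by omega))
      refine ⟨Symbol.nonterminal (some (B, b)) :: Symbol.terminal b :: γ, ?_, ?_⟩
      · simp only [tauList, List.mem_flatMap, List.mem_map]
        exact ⟨b, hbTf, γ, hγ, rfl⟩
      · have h1 : (pairGrammar g eps).Derives
            ([Symbol.nonterminal (some (B, b))] ++ (Symbol.terminal b :: γ))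
            (y₁'.map .terminal ++ (Symbol.terminal b :: y₂.map .terminal)) := by
          refine derives_append_append hB ?_
          have := hγd.append_left [Symbol.terminal b]
          exact this
        rw [List.map_append, List.map_append, List.append_assoc]; exact h1

lemma pair_complete {eps : Bool} (hne : ∀ r ∈ g.rules, r.output ≠ []) (n : ℕ) :
    ∀ (A : g.NT) (w : List T) (t : T),
      DerivesIn g n [.nonterminal A] ((w ++ [t]).map .terminal) →
      (pairGrammar g eps).Derives [.nonterminal (some (A, t))] (w.map .terminal) := by
  induction n using Nat.strong_induction_on with
  | _ n ih =>
    intro A w t hder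
    rcases n with _ | n
    · exfalso
      have h0 := hder.zero_eq
      rcases w with _ | ⟨c, w⟩ <;> simp at h0
    · rcases hder with _ | ⟨⟨r, hrg, hrw⟩, hder'⟩
      obtain ⟨p, q, hpq, hα⟩ := hrw.exists_parts
      obtain ⟨rfl, hinp, rfl⟩ := append_singleton_eq hpq.symm
      have hA : r.input = A := by injection hinp
      simp only [List.nil_append, List.append_nil] at hα
      subst hα
      have hro : r.output ≠ [] := hne r hrg
      have hrout : r.output.dropLast ++ [r.output.getLast hro] = r.output :=
        List.dropLast_append_getLast hro
      set β := r.output.dropLast with hβ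
      rw [← hrout] at hder'
      obtain ⟨n₁, n₂, w₁, w₂, hn, hw, d₁, d₂⟩ := DerivesIn.split hder'
      obtain ⟨y₁, y₂, hy, hw₁, hw₂⟩ := map_terminal_eq_append hw
      subst hw₁; subst hw₂
      cases hx : r.output.getLast hro with
      | terminal t' =>
        rw [hx] at d₂
        have hy₂' : y₂ = [t'] :=
          map_terminal_inj (derives_of_all_terminal (by simpa using d₂.toDerives))
        subst hy₂'
        obtain ⟨hwy, ht⟩ := List.append_inj hy (by
          have := congrArg List.length hy
          simp at this
          omega)
        have htt : t = t' := by simpa using ht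
        subst htt
        obtain ⟨γ, hγ, hγd⟩ := tau_derives g n₁ β y₁ hne d₁ (fun k hk => ih k (by omega))
        have hrule : (⟨some (A, t), γ⟩ : ContextFreeRule T (Option (g.NT × T))) ∈
            (pairGrammar g eps).rules := by
          refine (mem_pairGrammar_rules g).mpr (.inr (.inr ⟨r, hrg, hro, ?_⟩))
          rw [hx]
          simp only [pairRules, List.mem_map]
          exact ⟨γ, hγ, by rw [hA]⟩
        rw [hwy]
        exact (Produces.single ⟨_, hrule, ContextFreeRule.Rewrites.input_output⟩).trans hγd
      | nonterminal B =>
        rw [hx] at d₂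
        have hy₂ne : y₂ ≠ [] := by
          intro hy₂
          subst hy₂
          have := derives_length_le hne d₂.toDerives
          simp at this
        obtain ⟨y₂', t₂, hy₂eq⟩ : ∃ y₂' t₂, y₂ = y₂' ++ [t₂] :=
          ⟨y₂.dropLast, y₂.getLast hy₂ne, (List.dropLast_append_getLast hy₂ne).symm⟩
        rw [hy₂eq] at d₂ hy
        have hy' : w ++ [t] = (y₁ ++ y₂') ++ [t₂] := by rw [hy, List.append_assoc]
        obtain ⟨hwy, ht⟩ := List.append_inj hy' (by
          have := congrArg List.length hy'
          simp at this ⊢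
          omega)
        have htt : t = t₂ := by simpa using ht
        subst htt
        have htTf : t ∈ Tf g := by
          rcases derives_terminal_mem d₂.toDerives (a := t) (by simp) with hb | ⟨r₀, hr₀, hb⟩
          · simp at hb
          · exact (mem_Tf g).mpr ⟨r₀, hr₀, hb⟩
        have hBd : (pairGrammar g eps).Derives [.nonterminal (some (B, t))]
            (y₂'.map .terminal) := ih n₂ (by omega) B y₂' t d₂
        obtain ⟨γ, hγ, hγd⟩ := tau_derives g n₁ β y₁ hne d₁ (fun k hk => ih k (by omega))
        have hrule : (⟨some (A, t), γ ++ [Symbol.nonterminal (some (B, t))]⟩ :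
            ContextFreeRule T (Option (g.NT × T))) ∈ (pairGrammar g eps).rules := by
          refine (mem_pairGrammar_rules g).mpr (.inr (.inr ⟨r, hrg, hro, ?_⟩))
          rw [hx]
          simp only [pairRules, List.mem_flatMap, List.mem_map]
          exact ⟨t, htTf, γ, hγ, by rw [hA]⟩
        rw [hwy]
        refine (Produces.single ⟨_, hrule, ContextFreeRule.Rewrites.input_output⟩).trans ?_
        have := derives_append_append hγd hBd
        rw [List.map_append]; exact this

lemma pairGrammar_language {eps : Bool} (hne : ∀ r ∈ g.rules, r.output ≠ []) (w : List T) :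
    w ∈ (pairGrammar g eps).language ↔ w ∈ g.language ∨ (eps = true ∧ w = []) := by
  constructor
  · intro hw
    rw [mem_language_iff] at hw
    rcases hw.eq_or_head with heq | ⟨z, ⟨r', hr', hrw⟩, hz⟩
    · exfalso
      rcases w with _ | ⟨c, w⟩ <;> simp at heq
    · change ContextFreeRule T (Option (g.NT × T)) at r'
      obtain ⟨p, q, hpq, hz'⟩ := hrw.exists_parts
      obtain ⟨rfl, hinp, rfl⟩ := append_singleton_eq hpq.symm
      have hnone : r'.input = none := by injection hinp
      simp only [List.nil_append, List.append_nil] at hz'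
      subst hz'
      rcases (mem_pairGrammar_rules g).mp hr' with ⟨heps, rfl⟩ | ⟨t, -, rfl⟩ |
          ⟨r, hrg, hro, hmem⟩
      · right
        refine ⟨heps, ?_⟩
        have h0 : List.map Symbol.terminal w = List.map Symbol.terminal ([] : List T) :=
          derives_of_all_terminal (g := pairGrammar g eps) (w := []) hz
        simpa using map_terminal_inj h0
      · left
        rw [mem_language_iff]
        have hgood : Good g [Symbol.nonterminal (some (g.initial, t)), Symbol.terminal t]
            [Symbol.nonterminal g.initial] := Good.pair g.initial t Good.nil
        exact pair_derives_sound g hgood hz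
      · exfalso
        cases hx : r.output.getLast hro with
        | terminal u =>
          rw [hx] at hmem
          simp only [pairRules, List.mem_map] at hmem
          obtain ⟨γ, -, heq⟩ := hmem
          have hi := congrArg ContextFreeRule.input heq
          rw [hnone] at hi
          simp at hi
        | nonterminal C =>
          rw [hx] at hmem
          simp only [pairRules, List.mem_flatMap, List.mem_map] at hmem
          obtain ⟨u, -, γ, -, heq⟩ := hmem
          have hi := congrArg ContextFreeRule.input heq
          rw [hnone] at hi
          simp at hi
  · rintro (hw | ⟨heps, rfl⟩)
    · rw [mem_language_iff] at hw
      have hwne : w ≠ [] := by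
        intro h
        subst h
        have := derives_length_le hne hw
        simp at this
      obtain ⟨w', t, rfl⟩ : ∃ w' t, w = w' ++ [t] :=
        ⟨w.dropLast, w.getLast hwne, (List.dropLast_append_getLast hwne).symm⟩
      have htTf : t ∈ Tf g := by
        rcases derives_terminal_mem hw (a := t) (by simp) with hb | ⟨r₀, hr₀, hb⟩
        · simp at hb
        · exact (mem_Tf g).mpr ⟨r₀, hr₀, hb⟩
      obtain ⟨n, hn⟩ := derives_iff_derivesIn.mp hw
      have hmain := pair_complete g (eps := eps) hne n g.initial w' t hn
      have hrule : ({ input := none, output := [.nonterminal (some (g.initial, t)), .terminal t] } : ContextFreeRule T (Option (g.NT × T))) ∈ (pairGrammar g eps).rules :=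
        (mem_pairGrammar_rules g).mpr (.inr (.inl ⟨t, htTf, rfl⟩))
      rw [mem_language_iff]
      refine (Produces.single ⟨_, hrule, ContextFreeRule.Rewrites.input_output⟩).trans ?_
      have := derives_append_append hmain
        (Derives.refl (g := pairGrammar g eps) [Symbol.terminal t])
      rw [List.map_append]; exact this
    · have hrule : ({ input := none, output := [] } :
          ContextFreeRule T (Option (g.NT × T))) ∈ (pairGrammar g eps).rules :=
        (mem_pairGrammar_rules g).mpr (.inl ⟨heps, rfl⟩)
      rw [mem_language_iff]
      exact Produces.single ⟨_, hrule, ContextFreeRule.Rewrites.input_output⟩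

/-- The operator property. -/
def OpP {N : Type} : Symbol T N → Symbol T N → Prop :=
  fun s t => ∀ A B : N, ¬(s = Symbol.nonterminal A ∧ t = Symbol.nonterminal B)

lemma opP_term_left {N : Type} (a : T) (y : Symbol T N) : OpP (Symbol.terminal a) y := by
  rintro A B ⟨h, -⟩; cases h

lemma opP_term_right {N : Type} (a : T) (y : Symbol T N) : OpP y (Symbol.terminal a) := by
  rintro A B ⟨-, h⟩; cases h

lemma tau_chain {β γ} (h : γ ∈ tauList g β) :
    List.Chain' OpP γ ∧ ∀ x ∈ γ.getLast?, ∃ a, x = Symbol.terminal a := by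
  induction β generalizing γ with
  | nil =>
    simp [tauList] at h
    subst h
    exact ⟨List.isChain_nil, by simp⟩
  | cons x β ih =>
    cases x with
    | terminal a =>
      simp only [tauList, List.mem_map] at h
      obtain ⟨γ', hγ', rfl⟩ := h
      obtain ⟨hc, hl⟩ := ih hγ'
      constructor
      · exact List.isChain_cons.mpr ⟨fun y _ => opP_term_left a y, hc⟩
      · intro x hx
        rcases γ' with _ | ⟨z, γ'⟩
        · simp at hx
          exact ⟨a, hx.symm⟩
        · rw [List.getLast?_cons_cons] at hx
          exact hl x hx
    | nonterminal B =>
      simp only [tauList, List.mem_flatMap, List.mem_map] at h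
      obtain ⟨b, -, γ', hγ', rfl⟩ := h
      obtain ⟨hc, hl⟩ := ih hγ'
      constructor
      · refine List.isChain_cons_cons.mpr ⟨opP_term_right b _, ?_⟩
        exact List.isChain_cons.mpr ⟨fun y _ => opP_term_left b y, hc⟩
      · intro x hx
        rw [List.getLast?_cons_cons] at hx
        rcases γ' with _ | ⟨z, γ'⟩
        · simp at hx
          exact ⟨b, hx.symm⟩
        · rw [List.getLast?_cons_cons] at hx
          exact hl x hx

lemma pairGrammar_operator {eps : Bool} {r' : ContextFreeRule T (Option (g.NT × T))}
    (h : r' ∈ (pairGrammar g eps).rules) : List.Chain' OpP r'.output := by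
  rcases (mem_pairGrammar_rules g).mp h with ⟨-, rfl⟩ | ⟨t, -, rfl⟩ | ⟨r, hrg, hro, hmem⟩
  · exact List.isChain_nil
  · simp only
    exact List.isChain_pair.mpr (opP_term_right t _)
  · cases hx : r.output.getLast hro with
    | terminal u =>
      rw [hx] at hmem
      simp only [pairRules, List.mem_map] at hmem
      obtain ⟨γ, hγ, rfl⟩ := hmem
      exact (tau_chain g hγ).1
    | nonterminal C =>
      rw [hx] at hmem
      simp only [pairRules, List.mem_flatMap, List.mem_map] at hmem
      obtain ⟨u, -, γ, hγ, rfl⟩ := hmem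
      obtain ⟨hc, hl⟩ := tau_chain g hγ
      refine List.isChain_append.mpr ⟨hc, List.isChain_singleton _, ?_⟩
      intro x hx' y hy
      obtain ⟨a, rfl⟩ := hl x hx'
      exact opP_term_left a y

end Pair

end OpNF

/-- **Operator normal form.**
Every context-free grammar can be transformed into an equivalent operator grammar:
for every context-free grammar `G` there is a context-free grammar `G'` with
`L(G') = L(G)` in which no production's right-hand side contains two adjacent
nonterminal symbols. -/
theorem operator_normal_form {T : Type} (G : ContextFreeGrammar.{0} T) :
    ∃ G' : ContextFreeGrammar.{0} T,
      (∀ r ∈ G'.rules,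
        List.Chain'
          (fun s t => ∀ A B : G'.NT,
            ¬ (s = Symbol.nonterminal A ∧ t = Symbol.nonterminal B))
          r.output) ∧
      G'.language = G.language := by
  classical
  have hne : ∀ r ∈ (OpNF.epsElim G).rules, r.output ≠ [] := OpNF.epsElim_output_nonempty G
  set eps : Bool := if [] ∈ G.language then true else false with heps
  refine ⟨OpNF.pairGrammar (OpNF.epsElim G) eps, ?_, ?_⟩
  · intro r hr
    exact OpNF.pairGrammar_operator (OpNF.epsElim G) hr
  · ext w
    rw [OpNF.pairGrammar_language (OpNF.epsElim G) hne w, OpNF.mem_epsElim_language_iff G]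
    by_cases h : [] ∈ G.language
    · have he : eps = true := by simp [heps, h]
      rw [he]
      constructor
      · rintro (⟨hw, -⟩ | ⟨-, rfl⟩)
        · exact hw
        · exact h
      · intro hw
        by_cases hwe : w = []
        · exact .inr ⟨rfl, hwe⟩
        · exact .inl ⟨hw, hwe⟩
    · have he : eps = false := by simp [heps, h]
      rw [he]
      constructor
      · rintro (⟨hw, -⟩ | ⟨hf, -⟩)
        · exact hw
        · simp at hf
      · intro hw
        refine .inl ⟨hw, ?_⟩
        intro hwe
        subst hwe
        exact h hw
end
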